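/- arXiv:1106.3774 — 3 statements merged into one kernel-verified Lean document; each statement's English description precedes it below -/
import Mathlib

section
/- For every integer n ≥ 1, the number of regions of the type A_{n-1} Shi arrangement S^A_n equals the number of parking functions of length n. -/
/-- The complement of the type `A_{n-1}` Shi arrangement in `ℝ^n`. -/
def shiComplementA (n : ℕ) : Set (Fin n → ℝ) :=
  {x | ∀ i j : Fin n, i < j → x i - x j ≠ 0 ∧ x i - x j ≠ 1}

/-- `a : Fin n → ℕ` is a parking function of length `n`: its entries lie in `{1,…,n}`
and its increasing rearrangement `b₁ ≤ ⋯ ≤ bₙ` satisfies `bᵢ ≤ i`. -/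
def IsParkingFunction (n : ℕ) (a : Fin n → ℕ) : Prop :=
  (∀ i, a i ∈ Finset.Icc 1 n) ∧
    ∃ g : Equiv.Perm (Fin n), Monotone (fun i => a (g i)) ∧ ∀ i : Fin n, a (g i) ≤ (i : ℕ) + 1

open Finset

namespace ShiPF

variable {n : ℕ}

/-- admissible threshold functions -/
def Adm (t : Fin n → Fin n) : Prop := Monotone t ∧ ∀ p, p ≤ t p

def IsArc (t : Fin n → Fin n) (p : Fin n) : Prop := p < t p ∧ ∀ p', p' < p → t p' < t p

def IsTarget (t : Fin n → Fin n) (q : Fin n) : Prop := ∃ p, IsArc t p ∧ t p = q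

theorem arc_align {t : Fin n → Fin n} {p p' : Fin n} (h : IsArc t p) (h' : IsArc t p')
    (hlt : p < p') : t p < t p' := h'.2 p hlt

theorem arc_src_unique {t : Fin n → Fin n} {p p' : Fin n} (h : IsArc t p) (h' : IsArc t p')
    (he : t p = t p') : p = p' := by
  rcases lt_trichotomy p p' with hc | hc | hc
  · exact absurd (arc_align h h' hc) (by simp [he])
  · exact hc
  · exact absurd (arc_align h' h hc) (by simp [he])

noncomputable def src (t : Fin n → Fin n) (q : Fin n) : Fin n := by
  classical exact if h : IsTarget t q then h.choose else q

theorem src_spec {t : Fin n → Fin n} {q : Fin n} (h : IsTarget t q) :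
    IsArc t (src t q) ∧ t (src t q) = q := by
  rw [src, dif_pos h]; exact h.choose_spec

theorem src_lt {t : Fin n → Fin n} {q : Fin n} (h : IsTarget t q) : src t q < q := by
  have h1 := (src_spec h).1.1
  rwa [(src_spec h).2] at h1

theorem src_eq_of_arc {t : Fin n → Fin n} {p : Fin n} (h : IsArc t p) : src t (t p) = p := by
  have ht : IsTarget t (t p) := ⟨p, h, rfl⟩
  exact arc_src_unique (src_spec ht).1 h (src_spec ht).2

noncomputable def step (t : Fin n → Fin n) (q : Fin n) : Fin n := by
  classical exact if IsTarget t q then src t q else q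

noncomputable def headP (t : Fin n → Fin n) (q : Fin n) : Fin n := (step t)^[n] q

theorem step_le (t : Fin n → Fin n) (q : Fin n) : step t q ≤ q := by
  classical
  rw [step]
  split
  · exact le_of_lt (src_lt (by assumption))
  · exact le_rfl

theorem step_fix_or_lt (t : Fin n → Fin n) (q : Fin n) : step t q = q ∨ step t q < q := by
  rcases eq_or_lt_of_le (step_le t q) with h | h
  · exact Or.inl h
  · exact Or.inr h

theorem step_headP (t : Fin n → Fin n) (q : Fin n) : step t (headP t q) = headP t q := by
  classical
  -- after n iterations we are at a fixed point
  by_contra hne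
  -- if never fixed, value decreases each step
  have key : ∀ k : ℕ, (∀ j < k, step t ((step t)^[j] q) ≠ (step t)^[j] q) →
      ((step t)^[k] q : ℕ) + k ≤ q := by
    intro k
    induction k with
    | zero => simp
    | succ m ih =>
      intro h
      have hm : ((step t)^[m] q : ℕ) + m ≤ q := ih (fun j hj => h j (Nat.lt_succ_of_lt hj))
      have hs : step t ((step t)^[m] q) < (step t)^[m] q := by
        rcases step_fix_or_lt t ((step t)^[m] q) with hfix | hlt
        · exact absurd hfix (h m (Nat.lt_succ_self m))
        · exact hlt
      rw [Function.iterate_succ_apply']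
      have : (step t ((step t)^[m] q) : ℕ) < ((step t)^[m] q : ℕ) := hs
      omega
  -- all iterates below n are non-fixed
  have hall : ∀ j < n, step t ((step t)^[j] q) ≠ (step t)^[j] q := by
    intro j hj hfix
    apply hne
    have : ∀ m, (step t)^[j + m] q = (step t)^[j] q := by
      intro m
      induction m with
      | zero => rfl
      | succ k ihk => rw [← Nat.add_assoc, Function.iterate_succ_apply', ihk, hfix]
    have hjn : j + (n - j) = n := by omega
    have h1 := this (n - j)
    rw [hjn] at h1
    rw [headP, h1, hfix]
  have := key n hall
  have hq : (q : ℕ) < n := q.isLt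
  have hhn : (0:ℕ) ≤ ((step t)^[n] q : ℕ) := Nat.zero_le _
  omega

theorem headP_le (t : Fin n → Fin n) (q : Fin n) : headP t q ≤ q := by
  rw [headP]
  induction n with
  | zero => exact q.elim0
  | succ m _ =>
    clear * -
    have : ∀ k, ((step t)^[k] q) ≤ q := by
      intro k
      induction k with
      | zero => exact le_rfl
      | succ j ih => rw [Function.iterate_succ_apply']; exact le_trans (step_le _ _) ih
    exact this _

theorem headP_step (t : Fin n → Fin n) (q : Fin n) : headP t (step t q) = headP t q := by
  have h1 : headP t (step t q) = step t ((step t)^[n] q) := by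
    rw [headP, ← Function.iterate_succ_apply, Function.iterate_succ_apply']
  rw [h1]
  exact step_headP t q

theorem headP_not_target {t : Fin n → Fin n} (q : Fin n) : ¬ IsTarget t (headP t q) := by
  classical
  intro h
  have := step_headP t q
  rw [step, if_pos h] at this
  exact absurd this (ne_of_lt (src_lt h))

theorem headP_eq_self_of_not_target {t : Fin n → Fin n} {q : Fin n} (h : ¬ IsTarget t q) :
    headP t q = q := by
  classical
  have hfix : step t q = q := by rw [step, if_neg h]
  rw [headP, Function.iterate_fixed hfix n]

theorem headP_src {t : Fin n → Fin n} {q : Fin n} (h : IsTarget t q) :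
    headP t q = headP t (src t q) := by
  classical
  rw [← headP_step t q, step, if_pos h]

theorem headP_idem (t : Fin n → Fin n) (q : Fin n) : headP t (headP t q) = headP t q :=
  headP_eq_self_of_not_target (headP_not_target q)

theorem headP_eq_self_iff {t : Fin n → Fin n} {q : Fin n} :
    headP t q = q ↔ ¬ IsTarget t q := by
  constructor
  · intro h ht
    have h1 := headP_src ht
    rw [h] at h1
    have h3 := lt_of_le_of_lt (headP_le t (src t q)) (src_lt ht)
    rw [← h1] at h3
    exact lt_irrefl _ h3
  · exact headP_eq_self_of_not_target


theorem srcQ_max {t : Fin n → Fin n} :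
    ∀ q : Fin n, IsTarget t q → ∀ x : Fin n, headP t x = headP t q → x < q → x ≤ src t q := by
  have H : ∀ m : ℕ, ∀ q : Fin n, (q : ℕ) < m → IsTarget t q →
      ∀ x : Fin n, headP t x = headP t q → x < q → x ≤ src t q := by
    intro m
    induction m with
    | zero => intro q hq; exact absurd hq (Nat.not_lt_zero _)
    | succ k ih =>
      intro q hqk hq x hx hlt
      by_contra hgt
      push_neg at hgt
      -- hgt : src t q < x
      set u := src t q with hu
      have harcu : IsArc t u := (src_spec hq).1
      have htu : t u = q := (src_spec hq).2
      have h0u : headP t q = headP t u := headP_src hq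
      have hh0 : headP t u ≤ u := headP_le t u
      -- x is a target
      have hxne : headP t x ≠ x := by
        intro hcontr
        have : x ≤ u := by
          calc x = headP t x := hcontr.symm
          _ = headP t q := hx
          _ = headP t u := h0u
          _ ≤ u := hh0
        exact absurd this (not_le.mpr hgt)
      have hxt : IsTarget t x := by
        by_contra hnt
        exact hxne (headP_eq_self_of_not_target hnt)
      set u' := src t x with hu'
      have harcu' : IsArc t u' := (src_spec hxt).1
      have htu' : t u' = x := (src_spec hxt).2
      -- u' < u
      have huu' : u' < u := by
        rcases lt_trichotomy u' u with hc | hc | hc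
        · exact hc
        · exfalso; rw [hc] at htu'; rw [htu'] at htu; exact absurd htu (ne_of_lt hlt)
        · exfalso
          have := arc_align harcu harcu' hc
          rw [htu, htu'] at this
          exact absurd this (not_lt.mpr (le_of_lt hlt))
      -- apply ih at x
      have hxk : (x : ℕ) < k := by
        have h1 : (x : ℕ) < (q : ℕ) := hlt
        have h2 : (q : ℕ) < k + 1 := hqk
        omega
      have hheads : headP t u = headP t x := (hx.trans h0u).symm
      have := ih x hxk hxt u hheads hgt
      rw [← hu'] at this
      exact absurd huu' (not_lt.mpr this)
  exact fun q hq x => H n q q.isLt hq x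

noncomputable def mult (t : Fin n → Fin n) (z : Fin n) : ℕ :=
  #(univ.filter fun q => headP t q = z)

theorem mult_pos_iff {t : Fin n → Fin n} {z : Fin n} : 0 < mult t z ↔ headP t z = z := by
  constructor
  · intro h
    rw [mult, Finset.card_pos] at h
    obtain ⟨q, hq⟩ := h
    rw [Finset.mem_filter] at hq
    rw [← hq.2, headP_idem]
  · intro h
    rw [mult, Finset.card_pos]
    exact ⟨z, Finset.mem_filter.mpr ⟨Finset.mem_univ _, h⟩⟩

theorem target_iff_mult {t : Fin n → Fin n} {q : Fin n} : IsTarget t q ↔ mult t q = 0 := by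
  constructor
  · intro h
    by_contra h2
    have h3 := mult_pos_iff.mp (Nat.pos_of_ne_zero h2)
    rw [headP_eq_self_iff] at h3
    exact h3 h
  · intro h
    by_contra h2
    have h3 := mult_pos_iff.mpr (headP_eq_self_of_not_target h2)
    omega

theorem exists_arc_le {t : Fin n → Fin n} (ht : Adm t) {p : Fin n} (hp : p < t p) :
    ∃ p'', p'' ≤ p ∧ IsArc t p'' ∧ t p'' = t p := by
  classical
  set S := univ.filter (fun r => t r = t p) with hS
  have hpS : p ∈ S := Finset.mem_filter.mpr ⟨Finset.mem_univ _, rfl⟩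
  set p'' := S.min' ⟨p, hpS⟩ with hp''
  have hmem : p'' ∈ S := S.min'_mem _
  have htp'' : t p'' = t p := (Finset.mem_filter.mp hmem).2
  have hle : p'' ≤ p := Finset.min'_le _ _ hpS
  refine ⟨p'', hle, ⟨?_, ?_⟩, htp''⟩
  · rw [htp'']; exact lt_of_le_of_lt hle hp
  · intro r hr
    have h1 : t r ≤ t p'' := by rw [htp'']; exact ht.1 (le_of_lt (lt_of_lt_of_le hr hle))
    rcases eq_or_lt_of_le h1 with he | hl
    · exfalso
      have : r ∈ S := Finset.mem_filter.mpr ⟨Finset.mem_univ _, by rw [← htp'', he]⟩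
      exact absurd (S.min'_le _ this) (not_le.mpr hr)
    · exact hl

/-- The core asymmetric step of the injectivity argument. -/
theorem A1core {t t' : Fin n → Fin n} (ht : Adm t) (ht' : Adm t')
    (hm : ∀ z, mult t z = mult t' z)
    (htar : ∀ q, IsTarget t q ↔ IsTarget t' q)
    {qs : Fin n} (hqs : IsTarget t qs)
    (hmin : ∀ q, IsTarget t q → q < qs → src t q = src t' q)
    (hdiff : src t qs < src t' qs) : False := by
  classical
  set p := src t qs with hp
  set p' := src t' qs with hp'
  have harcp : IsArc t p := (src_spec hqs).1
  have htp : t p = qs := (src_spec hqs).2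
  have hqs' : IsTarget t' qs := (htar qs).mp hqs
  have harcp' : IsArc t' p' := (src_spec hqs').1
  have htp' : t' p' = qs := (src_spec hqs').2
  have hpqs : p < qs := src_lt hqs
  -- histories agree below qs
  have hhist : ∀ x : Fin n, x < qs → headP t x = headP t' x := by
    have H : ∀ m : ℕ, ∀ x : Fin n, (x : ℕ) < m → x < qs → headP t x = headP t' x := by
      intro m
      induction m with
      | zero => intro x hx; exact absurd hx (Nat.not_lt_zero _)
      | succ k ih =>
        intro x hxk hxqs
        by_cases hxt : IsTarget t x
        · have hxt' : IsTarget t' x := (htar x).mp hxt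
          have hsx : src t x = src t' x := hmin x hxt hxqs
          have h1 : headP t x = headP t (src t x) := headP_src hxt
          have h2 : headP t' x = headP t' (src t' x) := headP_src hxt'
          have h3 : (src t x : ℕ) < k := by
            have := src_lt hxt
            have h4 : (src t x : ℕ) < (x : ℕ) := this
            omega
          rw [h1, h2, ← hsx]
          exact ih (src t x) h3 (lt_trans (src_lt hxt) hxqs)
        · rw [headP_eq_self_of_not_target hxt,
            headP_eq_self_of_not_target (fun h => hxt ((htar x).mpr h))]
    exact fun x => H n x x.isLt
  -- p is not an arc of t'
  have hnarc' : ¬ IsArc t' p := by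
    intro harc2
    set q2 := t' p with hq2
    have hq2t' : IsTarget t' q2 := ⟨p, harc2, rfl⟩
    have hq2t : IsTarget t q2 := (htar q2).mpr hq2t'
    rcases lt_trichotomy q2 qs with hc | hc | hc
    · have hs2 : src t q2 = src t' q2 := hmin q2 hq2t hc
      have h5 : src t' q2 = p := by rw [hq2]; exact src_eq_of_arc harc2
      have h6 : t (src t q2) = q2 := (src_spec hq2t).2
      rw [hs2, h5] at h6
      rw [htp] at h6
      exact absurd h6.symm (ne_of_lt hc)
    · rw [hc] at hq2
      have : src t' qs = p := by rw [hq2]; exact src_eq_of_arc harc2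
      rw [← hp'] at this
      exact absurd this.symm (ne_of_lt hdiff)
    · have := arc_align harc2 harcp' hdiff
      rw [htp', ← hq2] at this
      exact absurd hc (not_lt.mpr (le_of_lt this))
  -- the common head
  set h0 := headP t p with hh0
  have hp0' : headP t' p = h0 := (hhist p hpqs).symm
  have hqsfib : headP t qs = h0 := by
    rw [headP_src hqs, ← hp]
  have hh0p : h0 ≤ p := headP_le t p
  -- maximality of p in the fiber below qs
  have hmaxW : ∀ x : Fin n, headP t x = h0 → x < qs → x ≤ p := by
    intro x hx hxqs
    exact srcQ_max qs hqs x (by rw [hx, hqsfib]) hxqs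
  set W := univ.filter (fun x => headP t x = h0 ∧ x < qs) with hW
  -- the t-fiber of h0 contains W and qs
  have hWsub : insert qs W ⊆ univ.filter (fun q => headP t q = h0) := by
    intro x hx
    rcases Finset.mem_insert.mp hx with h | h
    · subst h; exact Finset.mem_filter.mpr ⟨Finset.mem_univ _, hqsfib⟩
    · exact Finset.mem_filter.mpr ⟨Finset.mem_univ _, (Finset.mem_filter.mp h).2.1⟩
  have hqsW : qs ∉ W := by
    intro h
    exact absurd (Finset.mem_filter.mp h).2.2 (lt_irrefl qs)
  have hcard1 : #W + 1 ≤ mult t h0 := by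
    rw [mult]
    calc #W + 1 = #(insert qs W) := (Finset.card_insert_of_notMem hqsW).symm
    _ ≤ _ := Finset.card_le_card hWsub
  -- every member of the t'-fiber of h0 is < qs
  have hfib' : ∀ x : Fin n, headP t' x = h0 → x < qs := by
    by_contra hcon
    push_neg at hcon
    obtain ⟨x0, hx0, hx0ge⟩ := hcon
    set Z := univ.filter (fun x => headP t' x = h0 ∧ qs ≤ x) with hZ
    have hx0Z : x0 ∈ Z := Finset.mem_filter.mpr ⟨Finset.mem_univ _, hx0, hx0ge⟩
    set z := Z.min' ⟨x0, hx0Z⟩ with hz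
    have hzZ : z ∈ Z := Z.min'_mem _
    have hzfib : headP t' z = h0 := (Finset.mem_filter.mp hzZ).2.1
    have hzge : qs ≤ z := (Finset.mem_filter.mp hzZ).2.2
    have hzne : headP t' z ≠ z := by
      rw [hzfib]
      exact ne_of_lt (lt_of_le_of_lt hh0p (lt_of_lt_of_le hpqs hzge))
    have hzt' : IsTarget t' z := by
      by_contra hnt
      exact hzne (headP_eq_self_of_not_target hnt)
    set y := src t' z with hy
    have hyz : y < z := src_lt hzt'
    have hyfib : headP t' y = h0 := by rw [← hzfib]; exact (headP_src hzt').symm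
    have hyqs : y < qs := by
      by_contra hge
      have : y ∈ Z := Finset.mem_filter.mpr ⟨Finset.mem_univ _, hyfib, not_lt.mp hge⟩
      exact absurd (Z.min'_le _ this) (not_le.mpr hyz)
    have hpz : p < z := lt_of_lt_of_le hpqs hzge
    have hple : p ≤ y := by
      rw [hy]
      exact srcQ_max z hzt' p (by rw [hp0', hzfib]) hpz
    rcases eq_or_lt_of_le hple with he | hlt2
    · exact hnarc' (he ▸ (src_spec hzt').1)
    · have : headP t y = h0 := by rw [hhist y hyqs]; exact hyfib
      exact absurd (hmaxW y this hyqs) (not_le.mpr hlt2)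
  have hsub' : univ.filter (fun q => headP t' q = h0) ⊆ W := by
    intro x hx
    have h1 : headP t' x = h0 := (Finset.mem_filter.mp hx).2
    have h2 : x < qs := hfib' x h1
    exact Finset.mem_filter.mpr ⟨Finset.mem_univ _, by rw [hhist x h2]; exact h1, h2⟩
  have hcard2 : mult t' h0 ≤ #W := Finset.card_le_card hsub'
  have := hm h0
  omega

theorem A1 {t t' : Fin n → Fin n} (ht : Adm t) (ht' : Adm t')
    (hm : ∀ z, mult t z = mult t' z) : t = t' := by
  classical
  have htar : ∀ q, IsTarget t q ↔ IsTarget t' q := by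
    intro q
    rw [target_iff_mult, target_iff_mult, hm q]
  have hsrc : ∀ q, IsTarget t q → src t q = src t' q := by
    by_contra hcon
    push_neg at hcon
    obtain ⟨q0, hq0, hne0⟩ := hcon
    set D := univ.filter (fun q => IsTarget t q ∧ src t q ≠ src t' q) with hD
    have hq0D : q0 ∈ D := Finset.mem_filter.mpr ⟨Finset.mem_univ _, hq0, hne0⟩
    set qs := D.min' ⟨q0, hq0D⟩ with hqs
    have hqsD : qs ∈ D := D.min'_mem _
    have hqst : IsTarget t qs := (Finset.mem_filter.mp hqsD).2.1
    have hqsne : src t qs ≠ src t' qs := (Finset.mem_filter.mp hqsD).2.2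
    have hmin : ∀ q, IsTarget t q → q < qs → src t q = src t' q := by
      intro q hq hlt
      by_contra hne
      have : q ∈ D := Finset.mem_filter.mpr ⟨Finset.mem_univ _, hq, hne⟩
      exact absurd (D.min'_le _ this) (not_le.mpr hlt)
    rcases lt_or_gt_of_ne hqsne with hlt | hgt
    · exact A1core ht ht' hm htar hqst hmin hlt
    · refine A1core ht' ht (fun z => (hm z).symm) (fun q => (htar q).symm)
        ((htar qs).mp hqst) ?_ hgt
      intro q hq hlt
      exact (hmin q ((htar q).mpr hq) hlt).symm
  -- now conclude t = t'
  have key : ∀ (a b : Fin n → Fin n), Adm a → Adm b →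
      (∀ q, IsTarget a q ↔ IsTarget b q) →
      (∀ q, IsTarget a q → src a q = src b q) → ∀ p, a p ≤ b p := by
    intro a b ha hb htarab hsrcab p
    rcases eq_or_lt_of_le (ha.2 p) with he | hlt
    · rw [← he]; exact hb.2 p
    · obtain ⟨p'', hle, harc, htp''⟩ := exists_arc_le ha hlt
      have htgt : IsTarget a (a p) := ⟨p'', harc, htp''⟩
      have h1 : src a (a p) = p'' := by
        rw [← htp'']; rw [htp'']
        exact arc_src_unique (src_spec htgt).1 harc ((src_spec htgt).2.trans htp''.symm)
      have htgt' : IsTarget b (a p) := (htarab _).mp htgt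
      have h2 : b (src b (a p)) = a p := (src_spec htgt').2
      have h3 : src b (a p) = p'' := by rw [← hsrcab _ htgt, h1]
      rw [h3] at h2
      calc a p = b p'' := h2.symm
      _ ≤ b p := hb.1 hle
  funext p
  have h1 := key t t' ht ht' htar hsrc p
  have h2 := key t' t ht' ht (fun q => (htar q).symm)
    (fun q hq => (hsrc q ((htar q).mpr hq)).symm) p
  exact le_antisymm h1 h2

section Sorting

theorem card_filter_perm {α : Type*} [Fintype α] [DecidableEq α] (σ : Equiv.Perm α)
    (P : α → Prop) [DecidablePred P] :
    #(univ.filter fun i => P (σ i)) = #(univ.filter P) := by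
  apply Finset.card_bij (fun i _ => σ i)
  · intro a ha
    exact Finset.mem_filter.mpr ⟨Finset.mem_univ _, (Finset.mem_filter.mp ha).2⟩
  · intro a _ b _ h
    exact σ.injective h
  · intro b hb
    exact ⟨σ.symm b, Finset.mem_filter.mpr ⟨Finset.mem_univ _, by
      simpa using (Finset.mem_filter.mp hb).2⟩, by simp⟩

theorem mono_le_iff {α : Type*} [LinearOrder α] {s : Fin n → α} (hs : Monotone s)
    {i : Fin n} {z : α} :
    s i ≤ z ↔ (i : ℕ) < #(univ.filter fun j => s j ≤ z) := by
  constructor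
  · intro h
    have hsub : Finset.Iic i ⊆ univ.filter fun j => s j ≤ z := by
      intro j hj
      exact Finset.mem_filter.mpr ⟨Finset.mem_univ _, le_trans (hs (Finset.mem_Iic.mp hj)) h⟩
    have := Finset.card_le_card hsub
    rw [Fin.card_Iic] at this
    omega
  · intro h
    by_contra hc
    push_neg at hc
    have hsub : (univ.filter fun j => s j ≤ z) ⊆ Finset.Iio i := by
      intro j hj
      rw [Finset.mem_Iio]
      by_contra hji
      push_neg at hji
      exact absurd (le_trans (hs hji) (Finset.mem_filter.mp hj).2) (not_le.mpr hc)
    have := Finset.card_le_card hsub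
    rw [Fin.card_Iio] at this
    omega

theorem mono_eq_of_counts {α : Type*} [LinearOrder α] {s s' : Fin n → α}
    (hs : Monotone s) (hs' : Monotone s')
    (h : ∀ z, #(univ.filter fun j => s j ≤ z) = #(univ.filter fun j => s' j ≤ z)) :
    s = s' := by
  funext i
  have h1 : s i ≤ s' i := by
    rw [mono_le_iff hs, h]
    exact (mono_le_iff hs').mp le_rfl
  have h2 : s' i ≤ s i := by
    rw [mono_le_iff hs', ← h]
    exact (mono_le_iff hs).mp le_rfl
  exact le_antisymm h1 h2

/-- two permutations making a tuple monotone, when the tuple is injective, agree -/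
theorem sort_unique {α : Type*} [LinearOrder α] {F : Fin n → α} (hF : Function.Injective F)
    {τ τ' : Equiv.Perm (Fin n)} (h : Monotone (F ∘ τ)) (h' : Monotone (F ∘ τ')) :
    τ = τ' := by
  have hc : ∀ z, #(univ.filter fun j => (F ∘ τ) j ≤ z) = #(univ.filter fun j => (F ∘ τ') j ≤ z) := by
    intro z
    simp only [Function.comp_apply]
    rw [card_filter_perm τ (fun i => F i ≤ z), card_filter_perm τ' (fun i => F i ≤ z)]
  have := mono_eq_of_counts h h' hc
  ext i
  exact congrArg Fin.val (hF (congrFun this i))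

end Sorting

section TheBijectionA

def AdmT (n : ℕ) : Type := {t : Fin n → Fin n // Adm t}

def LowT (n : ℕ) : Type := {b : Fin n → Fin n // Monotone b ∧ ∀ i, b i ≤ i}

instance : Finite (AdmT n) := Subtype.finite
instance : Finite (LowT n) := Subtype.finite

def revEquiv : AdmT n ≃ LowT n where
  toFun t := ⟨fun q => (t.1 q.rev).rev, by
    constructor
    · intro a b hab
      exact Fin.rev_le_rev.mpr (t.2.1 (Fin.rev_le_rev.mpr hab))
    · intro i
      have := t.2.2 i.rev
      calc (t.1 i.rev).rev ≤ i.rev.rev := Fin.rev_le_rev.mpr this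
      _ = i := Fin.rev_rev i⟩
  invFun b := ⟨fun q => (b.1 q.rev).rev, by
    constructor
    · intro a b' hab
      exact Fin.rev_le_rev.mpr (b.2.1 (Fin.rev_le_rev.mpr hab))
    · intro p
      have := b.2.2 p.rev
      calc p = p.rev.rev := (Fin.rev_rev p).symm
      _ ≤ (b.1 p.rev).rev := Fin.rev_le_rev.mpr this⟩
  left_inv t := by
    apply Subtype.ext
    funext q
    simp [Fin.rev_rev]
  right_inv b := by
    apply Subtype.ext
    funext q
    simp [Fin.rev_rev]

noncomputable def mapJ (t : AdmT n) : LowT n :=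
  ⟨(headP t.1) ∘ (Tuple.sort (headP t.1)), Tuple.monotone_sort _, by
    intro i
    rw [show ((headP t.1 ∘ Tuple.sort (headP t.1)) i) ≤ i ↔ _ from
      mono_le_iff (Tuple.monotone_sort _)]
    simp only [Function.comp_apply]
    rw [card_filter_perm (Tuple.sort (headP t.1)) (fun q => headP t.1 q ≤ i)]
    have hsub : Finset.Iic i ⊆ univ.filter fun q => headP t.1 q ≤ i := by
      intro j hj
      exact Finset.mem_filter.mpr ⟨Finset.mem_univ _,
        le_trans (headP_le t.1 j) (Finset.mem_Iic.mp hj)⟩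
    have := Finset.card_le_card hsub
    rw [Fin.card_Iic] at this
    omega⟩

theorem mapJ_counts (t : AdmT n) (z : Fin n) :
    #(univ.filter fun j => (mapJ t).1 j = z) = mult t.1 z := by
  rw [mult, mapJ]
  simp only [Function.comp_apply]
  exact card_filter_perm (Tuple.sort (headP t.1)) (fun q => headP t.1 q = z)

theorem mapJ_injective : Function.Injective (mapJ (n := n)) := by
  intro t t' h
  apply Subtype.ext
  apply A1 t.2 t'.2
  intro z
  rw [← mapJ_counts t z, ← mapJ_counts t' z, h]

theorem mapJ_bijective : Function.Bijective (mapJ (n := n)) := by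
  rw [Nat.bijective_iff_injective_and_card]
  exact ⟨mapJ_injective, Nat.card_congr revEquiv⟩

end TheBijectionA

section CnPF

def Compat (v : Equiv.Perm (Fin n)) (t : Fin n → Fin n) : Prop :=
  ∀ p, IsArc t p → v (t p) < v p

def CnT (n : ℕ) : Type := {c : Equiv.Perm (Fin n) × (Fin n → Fin n) // Adm c.2 ∧ Compat c.1 c.2}

/-- within a fiber of `headP`, a compatible `v` is strictly decreasing -/
theorem fiber_dec {v : Equiv.Perm (Fin n)} {t : Fin n → Fin n} (hadm : Adm t)
    (hc : Compat v t) :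
    ∀ q q' : Fin n, headP t q = headP t q' → q < q' → v q' < v q := by
  have H : ∀ m : ℕ, ∀ q' : Fin n, (q' : ℕ) < m → ∀ q, headP t q = headP t q' → q < q' →
      v q' < v q := by
    intro m
    induction m with
    | zero => intro q' hq'; exact absurd hq' (Nat.not_lt_zero _)
    | succ k ih =>
      intro q' hq'k q hfib hlt
      have hne : headP t q' ≠ q' := by
        have h1 : headP t q' ≤ q := by rw [← hfib]; exact headP_le t q
        exact ne_of_lt (lt_of_le_of_lt h1 hlt)
      have htgt : IsTarget t q' := by
        by_contra hnt
        exact hne (headP_eq_self_of_not_target hnt)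
      set u := src t q' with hu
      have harc : IsArc t u := (src_spec htgt).1
      have htu : t u = q' := (src_spec htgt).2
      have hvq' : v q' < v u := by
        have := hc u harc
        rwa [htu] at this
      have hufib : headP t u = headP t q' := (headP_src htgt).symm
      have hqu : q ≤ u := srcQ_max q' htgt q hfib hlt
      rcases eq_or_lt_of_le hqu with he | hlt2
      · rw [he]; exact hvq'
      · have huk : (u : ℕ) < k := by
          have h1 : (u : ℕ) < (q' : ℕ) := src_lt htgt
          omega
        exact lt_trans hvq' (ih u huk q (hfib.trans hufib.symm) hlt2)
  exact fun q q' h1 h2 => H n q' q'.isLt q h1 h2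

noncomputable def keyP (t : Fin n → Fin n) (q : Fin n) : Fin n ×ₗ Fin n :=
  toLex (headP t q, q)

def keyI (f : Fin n → Fin n) (i : Fin n) : Fin n ×ₗ Fin n :=
  toLex (f i, i.rev)

theorem keyP_inj (t : Fin n → Fin n) : Function.Injective (keyP t) := by
  intro a b h
  have := congrArg (fun x => (ofLex x).2) h
  exact this

theorem keyI_inj (f : Fin n → Fin n) : Function.Injective (keyI f) := by
  intro a b h
  have := congrArg (fun x => (ofLex x).2) h
  simpa using Fin.rev_injective this

theorem keyP_fst_mono {t : Fin n → Fin n} {q q' : Fin n} (h : keyP t q ≤ keyP t q') :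
    headP t q ≤ headP t q' := by
  rw [keyP, keyP] at h
  rcases Prod.Lex.toLex_le_toLex.mp h with h1 | h1
  · exact le_of_lt h1
  · exact le_of_eq h1.1

theorem keyP_snd {t : Fin n → Fin n} {q q' : Fin n} (h : keyP t q ≤ keyP t q')
    (he : headP t q = headP t q') : q ≤ q' := by
  rw [keyP, keyP] at h
  rcases Prod.Lex.toLex_le_toLex.mp h with h1 | h1
  · exact absurd h1 (by rw [he]; exact lt_irrefl _)
  · exact h1.2

/-- the key monotonicity: sorting positions by (head, position) matches
sorting indices by (value, reverse index) -/
theorem key_mono {v : Equiv.Perm (Fin n)} {t : Fin n → Fin n} (hadm : Adm t)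
    (hc : Compat v t) (f : Fin n → Fin n) (hf : ∀ q, f (v q) = headP t q) :
    Monotone (keyI f ∘ v ∘ (Tuple.sort (keyP t))) := by
  intro k k' hk
  simp only [Function.comp_apply]
  set q := Tuple.sort (keyP t) k with hq
  set q' := Tuple.sort (keyP t) k' with hq'
  have hkey : keyP t q ≤ keyP t q' := Tuple.monotone_sort (keyP t) hk
  have hfst : headP t q ≤ headP t q' := keyP_fst_mono hkey
  rcases eq_or_lt_of_le hfst with he | hlt
  · have hqq' : q ≤ q' := keyP_snd hkey he
    rcases eq_or_lt_of_le hqq' with he2 | hlt2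
    · rw [he2]
    · have hv : v q' < v q := fiber_dec hadm hc q q' he hlt2
      apply le_of_lt
      rw [keyI, keyI]
      apply Prod.Lex.toLex_lt_toLex.mpr
      right
      constructor
      · simp only [hf]; exact he
      · exact Fin.rev_lt_rev.mpr hv
  · apply le_of_lt
    rw [keyI, keyI]
    apply Prod.Lex.toLex_lt_toLex.mpr
    left
    simp only [hf]
    exact hlt

end CnPF

section Phi

theorem lex_fst_mono {x y : Fin n ×ₗ Fin n} (h : x ≤ y) : (ofLex x).1 ≤ (ofLex y).1 := by
  have h2 : toLex (ofLex x) ≤ toLex (ofLex y) := h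
  rcases Prod.Lex.toLex_le_toLex.mp h2 with h1 | h1
  · exact le_of_lt h1
  · exact le_of_eq h1.1

theorem lex_snd_of_fst_eq {x y : Fin n ×ₗ Fin n} (h : x < y)
    (he : (ofLex x).1 = (ofLex y).1) : (ofLex x).2 < (ofLex y).2 := by
  have h2 : toLex (ofLex x) < toLex (ofLex y) := h
  rcases Prod.Lex.toLex_lt_toLex.mp h2 with h1 | h1
  · exact absurd h1 (by rw [he]; exact lt_irrefl _)
  · exact h1.2

noncomputable def phiF (c : CnT n) : Fin n → Fin n := fun i => headP c.1.2 (c.1.1.symm i)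

noncomputable def phi (c : CnT n) : Fin n → ℕ := fun i => (phiF c i : ℕ) + 1

theorem phiF_comp (c : CnT n) (q : Fin n) : phiF c (c.1.1 q) = headP c.1.2 q := by
  rw [phiF, Equiv.symm_apply_apply]

theorem phiF_counts_eq (c : CnT n) (z : Fin n) :
    #(univ.filter fun i => phiF c i = z) = mult c.1.2 z := by
  rw [mult]
  exact card_filter_perm c.1.1.symm (fun q => headP c.1.2 q = z)

theorem phiF_counts_le (c : CnT n) (z : Fin n) :
    #(univ.filter fun i => phiF c i ≤ z) = #(univ.filter fun q => headP c.1.2 q ≤ z) :=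
  card_filter_perm c.1.1.symm (fun q => headP c.1.2 q ≤ z)

theorem headP_counts_le_lb (t : Fin n → Fin n) (z : Fin n) :
    (z : ℕ) < #(univ.filter fun q => headP t q ≤ z) := by
  have hsub : Finset.Iic z ⊆ univ.filter fun q => headP t q ≤ z := by
    intro j hj
    exact Finset.mem_filter.mpr ⟨Finset.mem_univ _,
      le_trans (headP_le t j) (Finset.mem_Iic.mp hj)⟩
  have := Finset.card_le_card hsub
  rw [Fin.card_Iic] at this
  omega

theorem phi_isPF (c : CnT n) : IsParkingFunction n (phi c) := by
  constructor
  · intro i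
    rw [Finset.mem_Icc, phi]
    have := (phiF c i).isLt
    omega
  · refine ⟨Tuple.sort (phiF c), ?_, ?_⟩
    · intro i j hij
      have := Tuple.monotone_sort (phiF c) hij
      simp only [Function.comp_apply] at this
      simp only [phi]
      have h2 : ((phiF c (Tuple.sort (phiF c) i)) : ℕ) ≤ (phiF c (Tuple.sort (phiF c) j) : ℕ) := this
      omega
    · intro i
      simp only [phi]
      have h1 : (phiF c ∘ Tuple.sort (phiF c)) i ≤ i := by
        rw [mono_le_iff (Tuple.monotone_sort _)]
        simp only [Function.comp_apply]
        rw [card_filter_perm (Tuple.sort (phiF c)) (fun j => phiF c j ≤ i), phiF_counts_le]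
        exact headP_counts_le_lb c.1.2 i
      simp only [Function.comp_apply] at h1
      have h2 : ((phiF c (Tuple.sort (phiF c) i)) : ℕ) ≤ (i : ℕ) := h1
      omega

theorem phi_injective : Function.Injective (phi (n := n)) := by
  intro c c' h
  have hF : phiF c = phiF c' := by
    funext i
    have h1 : (phiF c i : ℕ) + 1 = (phiF c' i : ℕ) + 1 := congrFun h i
    exact Fin.ext (by omega)
  have ht : c.1.2 = c'.1.2 := by
    apply A1 c.2.1 c'.2.1
    intro z
    rw [← phiF_counts_eq c z, ← phiF_counts_eq c' z, hF]
  -- now the permutations agree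
  set t := c.1.2 with htdef
  set σP := Tuple.sort (keyP t) with hσP
  have hm1 : Monotone (keyI (phiF c) ∘ (σP.trans c.1.1)) := by
    have := key_mono c.2.1 c.2.2 (phiF c) (fun q => phiF_comp c q)
    rw [hσP]
    intro a b hab
    exact this hab
  have hm2 : Monotone (keyI (phiF c) ∘ (σP.trans c'.1.1)) := by
    have h0 := key_mono c'.2.1 c'.2.2 (phiF c') (fun q => phiF_comp c' q)
    rw [← hF, ← ht] at h0
    intro a b hab
    exact h0 hab
  have hττ : σP.trans c.1.1 = σP.trans c'.1.1 := sort_unique (keyI_inj (phiF c)) hm1 hm2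
  have hv : c.1.1 = c'.1.1 := by
    ext x
    have := congrArg (fun (e : Equiv.Perm (Fin n)) => e (σP.symm x)) hττ
    simp only [Equiv.trans_apply, Equiv.apply_symm_apply] at this
    exact congrArg Fin.val this
  apply Subtype.ext
  exact Prod.ext hv ht


theorem phi_surjective (a : Fin n → ℕ) (ha : IsParkingFunction n a) :
    ∃ c : CnT n, phi c = a := by
  obtain ⟨hbd, g, hg_mono, hg_le⟩ := ha
  have hf_lt : ∀ i, a i - 1 < n := fun i => by
    have := Finset.mem_Icc.mp (hbd i); omega
  set f : Fin n → Fin n := fun i => ⟨a i - 1, hf_lt i⟩ with hfdef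
  have hcnt : ∀ z : Fin n, (z : ℕ) < #(univ.filter fun j => f j ≤ z) := by
    intro z
    rw [← card_filter_perm g (fun j => f j ≤ z)]
    have hsub : Finset.Iic z ⊆ univ.filter fun i => f (g i) ≤ z := by
      intro i hi
      rw [Finset.mem_Iic] at hi
      refine Finset.mem_filter.mpr ⟨Finset.mem_univ _, ?_⟩
      have h1 := hg_le i
      have h2 : (i : ℕ) ≤ (z : ℕ) := hi
      rw [Fin.le_def]
      show a (g i) - 1 ≤ (z : ℕ)
      omega
    have := Finset.card_le_card hsub
    rw [Fin.card_Iic] at this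
    omega
  have hbmono : Monotone (f ∘ Tuple.sort f) := Tuple.monotone_sort f
  have hble : ∀ i, (f ∘ Tuple.sort f) i ≤ i := by
    intro i
    rw [mono_le_iff hbmono]
    simp only [Function.comp_apply]
    rw [card_filter_perm (Tuple.sort f) (fun j => f j ≤ i)]
    exact hcnt i
  obtain ⟨t, htb⟩ := mapJ_bijective.surjective ⟨f ∘ Tuple.sort f, hbmono, hble⟩
  have hval : (mapJ t).1 = f ∘ Tuple.sort f := congrArg Subtype.val htb
  have hcle : ∀ z : Fin n,
      #(univ.filter fun q => headP t.1 q ≤ z) = #(univ.filter fun j => f j ≤ z) := by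
    intro z
    have h1 : #(univ.filter fun k => (mapJ t).1 k ≤ z)
        = #(univ.filter fun q => headP t.1 q ≤ z) := by
      rw [mapJ]
      simp only [Function.comp_apply]
      exact card_filter_perm (Tuple.sort (headP t.1)) (fun q => headP t.1 q ≤ z)
    have h2 : #(univ.filter fun k => (f ∘ Tuple.sort f) k ≤ z)
        = #(univ.filter fun j => f j ≤ z) := by
      simp only [Function.comp_apply]
      exact card_filter_perm (Tuple.sort f) (fun j => f j ≤ z)
    rw [← h1, hval]
    exact h2
  set σP := Tuple.sort (keyP t.1) with hσP
  set σI := Tuple.sort (keyI f) with hσI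
  set v : Equiv.Perm (Fin n) := σP.symm.trans σI with hv
  have hg1 : Monotone (fun k => f (σI k)) := by
    intro x y hxy
    exact lex_fst_mono (Tuple.monotone_sort (keyI f) hxy)
  have hg2 : Monotone (fun k => headP t.1 (σP k)) := by
    intro x y hxy
    exact keyP_fst_mono (Tuple.monotone_sort (keyP t.1) hxy)
  have hfg : (fun k => f (σI k)) = (fun k => headP t.1 (σP k)) := by
    apply mono_eq_of_counts hg1 hg2
    intro z
    rw [card_filter_perm σI (fun j => f j ≤ z), card_filter_perm σP (fun q => headP t.1 q ≤ z),
      hcle]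
  have hfv : ∀ q, f (v q) = headP t.1 q := by
    intro q
    have h1 : f (σI (σP.symm q)) = headP t.1 (σP (σP.symm q)) := congrFun hfg (σP.symm q)
    rw [Equiv.apply_symm_apply] at h1
    exact h1
  have hdec : ∀ q q' : Fin n, headP t.1 q = headP t.1 q' → q < q' → v q' < v q := by
    intro q q' hfib hlt
    have hkq : keyP t.1 q < keyP t.1 q' := by
      rw [keyP, keyP]
      apply Prod.Lex.toLex_lt_toLex.mpr
      right
      exact ⟨hfib, hlt⟩
    have hkk : σP.symm q < σP.symm q' := by
      rcases lt_trichotomy (σP.symm q) (σP.symm q') with hc | hc | hc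
      · exact hc
      · exfalso
        have : q = q' := by
          have := congrArg σP hc
          rwa [Equiv.apply_symm_apply, Equiv.apply_symm_apply] at this
        rw [this] at hkq
        exact lt_irrefl _ hkq
      · exfalso
        have h2 := Tuple.monotone_sort (keyP t.1) (le_of_lt hc)
        simp only [Function.comp_apply, ← hσP, Equiv.apply_symm_apply] at h2
        exact absurd hkq (not_lt.mpr h2)
    have hkeyI : keyI f (v q) < keyI f (v q') := by
      have hmle := Tuple.monotone_sort (keyI f) (le_of_lt hkk)
      simp only [Function.comp_apply] at hmle
      rcases eq_or_lt_of_le hmle with he | hlt2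
      · exfalso
        have := keyI_inj f he
        have h3 := σI.injective this
        exact absurd h3 (ne_of_lt hkk)
      · exact hlt2
    have hfsteq : f (v q) = f (v q') := by rw [hfv, hfv, hfib]
    have hsnd := lex_snd_of_fst_eq hkeyI hfsteq
    have hsnd2 : (v q).rev < (v q').rev := hsnd
    exact Fin.rev_lt_rev.mp hsnd2
  have hcompat : Compat v t.1 := by
    intro p harc
    have htgt : IsTarget t.1 (t.1 p) := ⟨p, harc, rfl⟩
    have hfib : headP t.1 p = headP t.1 (t.1 p) := by
      rw [headP_src htgt, src_eq_of_arc harc]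
    exact hdec p (t.1 p) hfib harc.1
  refine ⟨⟨(v, t.1), t.2, hcompat⟩, ?_⟩
  funext i
  simp only [phi, phiF]
  have h1 : headP t.1 (v.symm i) = f i := by
    rw [← hfv (v.symm i), Equiv.apply_symm_apply]
  have h2 : (headP t.1 (v.symm i) : ℕ) = a i - 1 := by rw [h1]
  have h3 := Finset.mem_Icc.mp (hbd i)
  omega

end Phi

section Realization

variable (T : ℕ → ℕ)

noncomputable def newv (p : ℕ) (L : List ℝ) : ℝ :=
  let R := (Finset.range p).filter (fun r => T r < p)
  let S := (Finset.range p).filter (fun r => p ≤ T r)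
  let lower : ℝ := if hR : R.Nonempty then
      max (L.getD (p - 1) 0) (L.getD ((R.max' hR) : ℕ) 0 + 1) else L.getD (p - 1) 0
  let upper : ℝ := if hS : S.Nonempty then L.getD ((S.min' hS) : ℕ) 0 + 1 else lower + 2
  if p = 0 then 0 else (lower + upper) / 2

noncomputable def RY : ℕ → List ℝ
  | 0 => []
  | p + 1 => RY p ++ [newv T p (RY p)]

theorem RY_length : ∀ p, (RY T p).length = p := by
  intro p
  induction p with
  | zero => rfl
  | succ q ih => rw [RY, List.length_append, ih]; rfl

theorem RY_getD_stable {p r : ℕ} (hr : r < p) :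
    (RY T (p + 1)).getD r 0 = (RY T p).getD r 0 := by
  rw [RY]
  exact List.getD_append _ _ _ _ (by rw [RY_length]; exact hr)

theorem RY_getD_last (p : ℕ) :
    (RY T (p + 1)).getD p 0 = newv T p (RY T p) := by
  rw [RY]
  rw [List.getD_append_right _ _ _ _ (by rw [RY_length])]
  rw [RY_length]
  simp

theorem RY_getD_mono {p r q : ℕ} (hq : q ≤ p) (hr : r < q) :
    (RY T p).getD r 0 = (RY T q).getD r 0 := by
  induction p with
  | zero => omega
  | succ m ih =>
    rcases Nat.lt_or_ge q (m + 1) with h | h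
    · have h2 : q ≤ m := by omega
      rw [RY_getD_stable T (by omega : r < m), ih h2]
    · have : q = m + 1 := by omega
      rw [this]

/-- the central invariant of the greedy construction -/
theorem RY_spec {n : ℕ} (hTmono : ∀ r r', r ≤ r' → r' < n → T r ≤ T r')
    (hTge : ∀ r, r < n → r ≤ T r) :
    ∀ p, p ≤ n →
      (∀ r r', r < r' → r' < p → (RY T p).getD r 0 < (RY T p).getD r' 0) ∧
      (∀ r r', r ≤ r' → r' < p →
        ((r' ≤ T r → (RY T p).getD r' 0 - (RY T p).getD r 0 < 1) ∧
         (T r < r' → 1 < (RY T p).getD r' 0 - (RY T p).getD r 0))) := by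
  intro p
  induction p with
  | zero => exact fun _ => ⟨fun r r' _ h => absurd h (Nat.not_lt_zero _),
      fun r r' _ h => absurd h (Nat.not_lt_zero _)⟩
  | succ p ih =>
    intro hpn
    obtain ⟨ihmono, ihdist⟩ := ih (by omega)
    -- abbreviations
    set L := RY T p with hL
    set R := (Finset.range p).filter (fun r => T r < p) with hR
    set S := (Finset.range p).filter (fun r => p ≤ T r) with hS
    set lower : ℝ := if hR : R.Nonempty then
        max (L.getD (p - 1) 0) (L.getD ((R.max' hR) : ℕ) 0 + 1) else L.getD (p - 1) 0 with hlow
    set upper : ℝ := if hS : S.Nonempty then L.getD ((S.min' hS) : ℕ) 0 + 1 else lower + 2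
      with hupp
    have hw : (RY T (p+1)).getD p 0 = if p = 0 then 0 else (lower + upper)/2 := by
      rw [RY_getD_last, newv]
    by_cases hp0 : p = 0
    · subst hp0
      refine ⟨?_, ?_⟩
      · intro r r' h1 h2
        omega
      · intro r r' h1 h2
        have hr0 : r = 0 ∧ r' = 0 := by omega
        obtain ⟨e1, e2⟩ := hr0
        subst e1; subst e2
        constructor
        · intro _
          simp
        · intro hc
          exact absurd hc (by have := hTge 0 (by omega); omega)
    -- p > 0
    have hppos : 0 < p := Nat.pos_of_ne_zero hp0
    -- lower bound facts
    have hlow_ge : L.getD (p-1) 0 ≤ lower := by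
      rw [hlow]
      split
      · exact le_max_left _ _
      · exact le_rfl
    have hmonoL : ∀ r r', r < r' → r' < p → L.getD r 0 < L.getD r' 0 := by
      intro r r' h1 h2
      have := ihmono r r' h1 h2
      rwa [hL]
    have hmonoL' : ∀ r r', r ≤ r' → r' < p → L.getD r 0 ≤ L.getD r' 0 := by
      intro r r' h1 h2
      rcases eq_or_lt_of_le h1 with he | hlt
      · rw [he]
      · exact le_of_lt (hmonoL r r' hlt h2)
    -- lower < upper
    have hlu : lower < upper := by
      rw [hupp]
      split
      case isTrue hSne =>
        set s := S.min' hSne with hs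
        have hsmem : s ∈ S := S.min'_mem hSne
        have hsp : (s:ℕ) < p := by
          have := (Finset.mem_filter.mp hsmem).1
          exact Finset.mem_range.mp this
        have hsT : p ≤ T s := (Finset.mem_filter.mp hsmem).2
        have h1 : L.getD (p-1) 0 < L.getD s 0 + 1 := by
          rcases Nat.lt_or_ge s (p-1) with hc | hc
          · have := (ihdist s (p-1) (by omega) (by omega)).1 (by omega)
            linarith
          · have : (s:ℕ) = p - 1 := by omega
            rw [this]
            linarith [le_refl (L.getD (p-1) 0)]
        rw [hlow]
        split
        case isTrue hRne =>
          set rm := R.max' hRne with hrm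
          have hrmem : rm ∈ R := R.max'_mem hRne
          have hrmp : (rm:ℕ) < p := Finset.mem_range.mp (Finset.mem_filter.mp hrmem).1
          have hrmT : T rm < p := (Finset.mem_filter.mp hrmem).2
          have hrms : (rm:ℕ) < s := by
            by_contra hc
            push_neg at hc
            have := hTmono s rm hc (by omega)
            omega
          have h2 : L.getD rm 0 < L.getD s 0 := hmonoL rm s hrms hsp
          rw [max_lt_iff]
          exact ⟨h1, by linarith⟩
        case isFalse => exact h1
      case isFalse => linarith
    have hwval : (RY T (p+1)).getD p 0 = (lower + upper)/2 := by rw [hw, if_neg hp0]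
    have hwlow : lower < (RY T (p+1)).getD p 0 := by rw [hwval]; linarith
    have hwupp : (RY T (p+1)).getD p 0 < upper := by rw [hwval]; linarith
    -- new value facts vs older ones
    have hstab : ∀ r, r < p → (RY T (p+1)).getD r 0 = L.getD r 0 := by
      intro r hr
      rw [RY_getD_stable T hr, hL]
    refine ⟨?_, ?_⟩
    · -- strict monotonicity
      intro rr rr' h1 h2
      rcases Nat.lt_or_ge rr' p with hc | hc
      · rw [hstab rr (by omega), hstab rr' hc]
        exact hmonoL rr rr' h1 hc
      · have hr'p : rr' = p := by omega
        rw [hr'p] at h1 ⊢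
        rw [hstab rr h1]
        have h3 : L.getD rr 0 ≤ L.getD (p-1) 0 := hmonoL' rr (p-1) (by omega) (by omega)
        linarith [hlow_ge, hwlow]
    · -- distance conditions
      intro rr rr' h1 h2
      rcases Nat.lt_or_ge rr' p with hc | hc
      · rw [hstab rr (by omega), hstab rr' hc]
        exact ihdist rr rr' h1 hc
      · have hr'p : rr' = p := by omega
        rw [hr'p] at h1 ⊢
        rcases Nat.lt_or_ge rr p with hrp | hrp
        · rw [hstab rr hrp]
          constructor
          · -- p ≤ T rr: close
            intro hTr
            have hrS : rr ∈ S := Finset.mem_filter.mpr ⟨Finset.mem_range.mpr hrp, hTr⟩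
            have hSne : S.Nonempty := ⟨rr, hrS⟩
            have hup2 : upper = L.getD ((S.min' hSne) : ℕ) 0 + 1 := by
              rw [hupp, dif_pos hSne]
            have hminle : (S.min' hSne : ℕ) ≤ rr := S.min'_le _ hrS
            have h3 : L.getD (S.min' hSne) 0 ≤ L.getD rr 0 := hmonoL' _ rr hminle hrp
            have := hwupp
            rw [hup2] at this
            linarith
          · -- T rr < p: far
            intro hTr
            have hrR : rr ∈ R := Finset.mem_filter.mpr ⟨Finset.mem_range.mpr hrp, hTr⟩
            have hRne : R.Nonempty := ⟨rr, hrR⟩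
            have hlow2 : L.getD ((R.max' hRne) : ℕ) 0 + 1 ≤ lower := by
              rw [hlow, dif_pos hRne]
              exact le_max_right _ _
            have hrle : rr ≤ (R.max' hRne : ℕ) := Finset.le_max' _ _ hrR
            have hmaxlt : (R.max' hRne : ℕ) < p :=
              Finset.mem_range.mp (Finset.mem_filter.mp (R.max'_mem hRne)).1
            have h3 : L.getD rr 0 ≤ L.getD (R.max' hRne) 0 := hmonoL' rr _ hrle hmaxlt
            linarith [hwlow]
        · -- rr = p
          have hrp2 : rr = p := by omega
          rw [hrp2]
          constructor
          · intro _
            simp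
          · intro hcc
            exact absurd hcc (not_lt.mpr (hTge p (by omega)))

end Realization

section C2X

def Tnat (t : Fin n → Fin n) : ℕ → ℕ := fun p => if h : p < n then (t ⟨p, h⟩ : ℕ) else p

theorem Tnat_mono {t : Fin n → Fin n} (ht : Adm t) :
    ∀ r r', r ≤ r' → r' < n → Tnat t r ≤ Tnat t r' := by
  intro r r' h1 h2
  rw [Tnat, Tnat, dif_pos (by omega : r < n), dif_pos h2]
  exact ht.1 (by exact h1)

theorem Tnat_ge {t : Fin n → Fin n} (ht : Adm t) : ∀ r, r < n → r ≤ Tnat t r := by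
  intro r h
  rw [Tnat, dif_pos h]
  exact ht.2 ⟨r, h⟩

noncomputable def yr (t : Fin n → Fin n) : Fin n → ℝ := fun q => (RY (Tnat t) n).getD q 0

theorem yr_strict {t : Fin n → Fin n} (ht : Adm t) : StrictMono (yr t) := by
  intro p q hpq
  exact ((RY_spec (Tnat t) (Tnat_mono ht) (Tnat_ge ht) n le_rfl).1) p q hpq q.isLt

theorem yr_close {t : Fin n → Fin n} (ht : Adm t) {p q : Fin n} (hpq : p ≤ q) (h : q ≤ t p) :
    yr t q - yr t p < 1 := by
  refine ((RY_spec (Tnat t) (Tnat_mono ht) (Tnat_ge ht) n le_rfl).2 p q hpq q.isLt).1 ?_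
  rw [Tnat, dif_pos p.isLt]
  simpa using h

theorem yr_far {t : Fin n → Fin n} (ht : Adm t) {p q : Fin n} (hpq : p ≤ q) (h : t p < q) :
    1 < yr t q - yr t p := by
  refine ((RY_spec (Tnat t) (Tnat_mono ht) (Tnat_ge ht) n le_rfl).2 p q hpq q.isLt).2 ?_
  rw [Tnat, dif_pos p.isLt]
  simpa using h

noncomputable def c2x (c : CnT n) : Fin n → ℝ := fun i => yr c.1.2 (c.1.1.symm i)

theorem c2x_mem (c : CnT n) : c2x c ∈ shiComplementA n := by
  intro i j hij
  set q := c.1.1.symm i with hq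
  set q' := c.1.1.symm j with hq'
  have hne : q ≠ q' := fun h => (ne_of_lt hij) (by
    have := congrArg c.1.1 h
    rwa [Equiv.apply_symm_apply, Equiv.apply_symm_apply] at this)
  have hx : c2x c i = yr c.1.2 q := rfl
  have hx' : c2x c j = yr c.1.2 q' := rfl
  rcases lt_or_gt_of_ne hne with hc | hc
  · have := yr_strict c.2.1 hc
    rw [hx, hx']
    constructor <;> intro h <;> linarith
  · have h0 := yr_strict c.2.1 hc
    rw [hx, hx']
    constructor
    · intro h; linarith
    · rcases le_or_gt q (c.1.2 q') with hle | hlt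
      · have := yr_close c.2.1 (le_of_lt hc) hle
        intro h; linarith
      · have := yr_far c.2.1 (le_of_lt hc) hlt
        intro h; linarith

end C2X

section DataX

variable {x : Fin n → ℝ}

theorem x_inj (hx : x ∈ shiComplementA n) : Function.Injective x := by
  intro i j h
  by_contra hne
  rcases lt_or_gt_of_ne (fun hc : i = j => hne hc) with hc | hc
  · exact (hx i j hc).1 (by rw [h]; ring)
  · exact (hx j i hc).1 (by rw [h]; ring)

noncomputable def vfun (x : Fin n → ℝ) : Equiv.Perm (Fin n) := Tuple.sort x

theorem vfun_strict (hx : x ∈ shiComplementA n) : StrictMono (x ∘ vfun x) :=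
  (Tuple.monotone_sort x).strictMono_of_injective ((x_inj hx).comp (vfun x).injective)

theorem vfun_unique (hx : x ∈ shiComplementA n) {v' : Equiv.Perm (Fin n)}
    (h : Monotone (x ∘ v')) : v' = vfun x :=
  sort_unique (x_inj hx) h (Tuple.monotone_sort x)

noncomputable def txfun (x : Fin n → ℝ) : Fin n → Fin n := fun p =>
  (univ.filter (fun q => x (vfun x q) - x (vfun x p) < 1)).max'
    ⟨p, Finset.mem_filter.mpr ⟨Finset.mem_univ _, by simp⟩⟩

theorem tx_ge (x : Fin n → ℝ) (p : Fin n) : p ≤ txfun x p :=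
  Finset.le_max' _ _ (Finset.mem_filter.mpr ⟨Finset.mem_univ _, by simp⟩)

theorem tx_close (hx : x ∈ shiComplementA n) {p q : Fin n} (h : q ≤ txfun x p) :
    x (vfun x q) - x (vfun x p) < 1 := by
  have hM := (univ.filter (fun q => x (vfun x q) - x (vfun x p) < 1)).max'_mem
    ⟨p, Finset.mem_filter.mpr ⟨Finset.mem_univ _, by simp⟩⟩
  have h1 : x (vfun x (txfun x p)) - x (vfun x p) < 1 := (Finset.mem_filter.mp hM).2
  have h2 : x (vfun x q) ≤ x (vfun x (txfun x p)) := by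
    rcases eq_or_lt_of_le h with he | hlt
    · rw [he]
    · exact le_of_lt (vfun_strict hx hlt)
  linarith

theorem tx_mem {p q : Fin n} (h : x (vfun x q) - x (vfun x p) < 1) : q ≤ txfun x p :=
  Finset.le_max' (univ.filter (fun q' => x (vfun x q') - x (vfun x p) < 1)) q
    (Finset.mem_filter.mpr ⟨Finset.mem_univ _, h⟩)

theorem tx_adm (hx : x ∈ shiComplementA n) : Adm (txfun x) := by
  constructor
  · intro p p' hpp'
    apply tx_mem
    have h1 : x (vfun x p) ≤ x (vfun x p') := (vfun_strict hx).monotone hpp'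
    have h2 := tx_close hx (le_refl (txfun x p))
    linarith
  · exact tx_ge x

noncomputable def mfun (v : Equiv.Perm (Fin n)) (t : Fin n → Fin n) (p : Fin n) : Fin n :=
  (insert p (univ.filter (fun q => p < q ∧ v q < v p ∧ q ≤ t p))).max' ⟨p, Finset.mem_insert_self _ _⟩

noncomputable def canonF (v : Equiv.Perm (Fin n)) (t : Fin n → Fin n) (p : Fin n) : Fin n :=
  ((Finset.Iic p).image (mfun v t)).max'
    ⟨mfun v t p, Finset.mem_image.mpr ⟨p, Finset.mem_Iic.mpr le_rfl, rfl⟩⟩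

theorem mfun_ge (v : Equiv.Perm (Fin n)) (t : Fin n → Fin n) (p : Fin n) : p ≤ mfun v t p :=
  Finset.le_max' _ _ (Finset.mem_insert_self _ _)

theorem mfun_le {v : Equiv.Perm (Fin n)} {t : Fin n → Fin n} (ht : Adm t) (p : Fin n) :
    mfun v t p ≤ t p := by
  apply Finset.max'_le
  intro y hy
  rcases Finset.mem_insert.mp hy with h | h
  · rw [h]; exact ht.2 p
  · exact (Finset.mem_filter.mp h).2.2.2

theorem mfun_cases (v : Equiv.Perm (Fin n)) (t : Fin n → Fin n) (p : Fin n) :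
    mfun v t p = p ∨ (p < mfun v t p ∧ v (mfun v t p) < v p ∧ mfun v t p ≤ t p) := by
  have := (insert p (univ.filter (fun q => p < q ∧ v q < v p ∧ q ≤ t p))).max'_mem
    ⟨p, Finset.mem_insert_self _ _⟩
  rcases Finset.mem_insert.mp this with h | h
  · exact Or.inl h
  · exact Or.inr (Finset.mem_filter.mp h).2

theorem mfun_reach {v : Equiv.Perm (Fin n)} {t : Fin n → Fin n} {p q : Fin n}
    (h1 : p < q) (h2 : v q < v p) (h3 : q ≤ t p) : q ≤ mfun v t p :=
  Finset.le_max' _ _ (Finset.mem_insert_of_mem (Finset.mem_filter.mpr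
    ⟨Finset.mem_univ _, h1, h2, h3⟩))

theorem canonF_ge_mfun (v : Equiv.Perm (Fin n)) (t : Fin n → Fin n) {p' p : Fin n}
    (h : p' ≤ p) : mfun v t p' ≤ canonF v t p :=
  Finset.le_max' _ _ (Finset.mem_image.mpr ⟨p', Finset.mem_Iic.mpr h, rfl⟩)

theorem canonF_ge (v : Equiv.Perm (Fin n)) (t : Fin n → Fin n) (p : Fin n) :
    p ≤ canonF v t p :=
  le_trans (mfun_ge v t p) (canonF_ge_mfun v t le_rfl)

theorem canonF_le {v : Equiv.Perm (Fin n)} {t : Fin n → Fin n} (ht : Adm t) (p : Fin n) :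
    canonF v t p ≤ t p := by
  apply Finset.max'_le
  intro y hy
  obtain ⟨p', hp', hy2⟩ := Finset.mem_image.mp hy
  rw [← hy2]
  exact le_trans (mfun_le ht p') (ht.1 (Finset.mem_Iic.mp hp'))

theorem canonF_mono (v : Equiv.Perm (Fin n)) (t : Fin n → Fin n) :
    Monotone (canonF v t) := by
  intro p p' h
  apply Finset.max'_le
  intro y hy
  obtain ⟨p'', hp'', hy2⟩ := Finset.mem_image.mp hy
  rw [← hy2]
  exact canonF_ge_mfun v t (le_trans (Finset.mem_Iic.mp hp'') h)

theorem canonF_adm {v : Equiv.Perm (Fin n)} {t : Fin n → Fin n} (ht : Adm t) :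
    Adm (canonF v t) := ⟨canonF_mono v t, canonF_ge v t⟩

theorem inv_reach {v : Equiv.Perm (Fin n)} {t : Fin n → Fin n} (ht : Adm t) {p q : Fin n}
    (h1 : p < q) (h2 : v q < v p) : (q ≤ t p ↔ q ≤ canonF v t p) := by
  constructor
  · intro h
    exact le_trans (mfun_reach h1 h2 h) (canonF_ge_mfun v t le_rfl)
  · intro h
    exact le_trans h (canonF_le ht p)

theorem canonF_compat {v : Equiv.Perm (Fin n)} {t : Fin n → Fin n} :
    Compat v (canonF v t) := by
  intro p harc
  have hmem := ((Finset.Iic p).image (mfun v t)).max'_mem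
    ⟨mfun v t p, Finset.mem_image.mpr ⟨p, Finset.mem_Iic.mpr le_rfl, rfl⟩⟩
  obtain ⟨p', hp', heq⟩ := Finset.mem_image.mp hmem
  have hp'le : p' ≤ p := Finset.mem_Iic.mp hp'
  have heq2 : canonF v t p = mfun v t p' := heq.symm
  rcases eq_or_lt_of_le hp'le with he | hlt
  · rw [he] at heq2
    rcases mfun_cases v t p with h | h
    · exfalso
      have h1 := harc.1
      rw [heq2, h] at h1
      exact lt_irrefl _ h1
    · rw [heq2]
      exact h.2.1
  · exfalso
    have h1 : canonF v t p ≤ canonF v t p' := by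
      rw [heq2]
      exact canonF_ge_mfun v t le_rfl
    exact absurd h1 (not_le.mpr (harc.2 p' hlt))

theorem canon_fix {v : Equiv.Perm (Fin n)} {t : Fin n → Fin n} (ht : Adm t)
    (hc : Compat v t) : canonF v t = t := by
  funext p
  refine le_antisymm (canonF_le ht p) ?_
  -- strong induction
  have H : ∀ m : ℕ, ∀ p : Fin n, (p : ℕ) < m → t p ≤ canonF v t p := by
    intro m
    induction m with
    | zero => intro p hp; exact absurd hp (Nat.not_lt_zero _)
    | succ k ih =>
      intro p hpk
      rcases eq_or_lt_of_le (ht.2 p) with he | hlt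
      · rw [← he]; exact canonF_ge v t p
      by_cases hex : ∃ p', p' < p ∧ t p' = t p
      · obtain ⟨p', hp'lt, hp'eq⟩ := hex
        have h1 : t p' ≤ canonF v t p' := ih p' (by
          have : (p' : ℕ) < (p : ℕ) := hp'lt
          omega)
        calc t p = t p' := hp'eq.symm
        _ ≤ canonF v t p' := h1
        _ ≤ canonF v t p := canonF_mono v t (le_of_lt hp'lt)
      · push_neg at hex
        have harc : IsArc t p := by
          refine ⟨hlt, fun p' hp' => ?_⟩
          rcases eq_or_lt_of_le (ht.1 (le_of_lt hp')) with he2 | hlt2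
          · exact absurd he2 (hex p' hp')
          · exact hlt2
        have hcv := hc p harc
        exact le_trans (mfun_reach hlt hcv le_rfl) (canonF_ge_mfun v t le_rfl)
  exact H n p p.isLt


theorem max'_congr {α : Type*} [LinearOrder α] {s s' : Finset α} (hs : s.Nonempty)
    (hs' : s'.Nonempty) (h : s = s') : s.max' hs = s'.max' hs' := by
  subst h; rfl

noncomputable def dataC (x : Fin n → ℝ) (hx : x ∈ shiComplementA n) : CnT n :=
  ⟨(vfun x, canonF (vfun x) (txfun x)), canonF_adm (tx_adm hx), canonF_compat⟩

theorem c2x_apply (c : CnT n) (q : Fin n) : c2x c (c.1.1 q) = yr c.1.2 q := by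
  rw [c2x, Equiv.symm_apply_apply]

theorem vfun_c2x (c : CnT n) : vfun (c2x c) = c.1.1 := by
  have hmono : Monotone (c2x c ∘ c.1.1) := by
    have he : c2x c ∘ c.1.1 = yr c.1.2 := funext fun q => c2x_apply c q
    rw [he]
    exact (yr_strict c.2.1).monotone
  exact (vfun_unique (c2x_mem c) hmono).symm

theorem tx_c2x (c : CnT n) : txfun (c2x c) = c.1.2 := by
  funext p
  have hv := vfun_c2x c
  have hx := c2x_mem c
  apply le_antisymm
  · by_contra hc
    push_neg at hc
    have h1 := tx_close hx (le_refl (txfun (c2x c) p))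
    rw [hv, c2x_apply, c2x_apply] at h1
    have hM : p ≤ txfun (c2x c) p := tx_ge _ p
    have h2 := yr_far c.2.1 hM hc
    linarith
  · apply tx_mem
    rw [hv, c2x_apply, c2x_apply]
    exact yr_close c.2.1 (c.2.1.2 p) le_rfl

theorem dataC_c2x (c : CnT n) : dataC (c2x c) (c2x_mem c) = c := by
  apply Subtype.ext
  apply Prod.ext
  · exact vfun_c2x c
  · show canonF (vfun (c2x c)) (txfun (c2x c)) = c.1.2
    rw [vfun_c2x, tx_c2x]
    exact canon_fix c.2.1 c.2.2

def SameData (x y : Fin n → ℝ) : Prop :=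
  ∀ i j : Fin n, i < j → ((x i < x j ↔ y i < y j) ∧ (x i - x j < 1 ↔ y i - y j < 1))

theorem sameData_dataC {x : Fin n → ℝ} (hx : x ∈ shiComplementA n) :
    SameData x (c2x (dataC x hx)) := by
  set c := dataC x hx with hcdef
  set v := vfun x with hvdef
  have hc1 : c.1.1 = v := rfl
  have hc2 : c.1.2 = canonF v (txfun x) := rfl
  have hadm : Adm c.1.2 := c.2.1
  intro i j hij
  set q := v.symm i with hq
  set q' := v.symm j with hq'
  have hvq : v q = i := Equiv.apply_symm_apply v i
  have hvq' : v q' = j := Equiv.apply_symm_apply v j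
  have hne : q ≠ q' := fun h => (ne_of_lt hij) (by rw [← hvq, ← hvq', h])
  have hxi : c2x c i = yr c.1.2 q := rfl
  have hxj : c2x c j = yr c.1.2 q' := rfl
  have hxvi : x i = x (v q) := by rw [hvq]
  have hxvj : x j = x (v q') := by rw [hvq']
  rcases lt_or_gt_of_ne hne with hlt | hgt
  · have h1 : x i < x j := by rw [hxvi, hxvj]; exact vfun_strict hx hlt
    have h2 : c2x c i < c2x c j := by rw [hxi, hxj]; exact yr_strict hadm hlt
    constructor
    · exact iff_of_true h1 h2
    · constructor <;> intro <;> linarith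
  · have h1 : x j < x i := by rw [hxvi, hxvj]; exact vfun_strict hx hgt
    have h2 : c2x c j < c2x c i := by rw [hxi, hxj]; exact yr_strict hadm hgt
    constructor
    · exact iff_of_false (by linarith) (by linarith)
    · have hvv : v q < v q' := by rw [hvq, hvq']; exact hij
      have hA : x i - x j < 1 ↔ q ≤ txfun x q' := by
        constructor
        · intro h
          apply tx_mem
          rw [← hvdef, ← hxvi, ← hxvj]
          exact h
        · intro h
          have := tx_close hx h
          rw [← hvdef, ← hxvi, ← hxvj] at this
          exact this
      have hB : c2x c i - c2x c j < 1 ↔ q ≤ c.1.2 q' := by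
        constructor
        · intro h
          by_contra hcc
          push_neg at hcc
          have := yr_far hadm (le_of_lt hgt) hcc
          rw [hxi, hxj] at h
          linarith
        · intro h
          rw [hxi, hxj]
          exact yr_close hadm (le_of_lt hgt) h
      rw [hA, hB, hc2]
      exact inv_reach (tx_adm hx) hgt hvv

theorem dataC_sameData {x y : Fin n → ℝ} (hx : x ∈ shiComplementA n)
    (hy : y ∈ shiComplementA n) (h : SameData x y) : dataC x hx = dataC y hy := by
  have ord_iff : ∀ a b : Fin n, (x a < x b ↔ y a < y b) := by
    intro a b
    rcases lt_trichotomy a b with hab | hab | hab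
    · exact (h a b hab).1
    · rw [hab]; simp
    · have h2 := (h b a hab).1
      have hxne : x a ≠ x b := fun he => (ne_of_gt hab) (x_inj hx he)
      have hyne : y a ≠ y b := fun he => (ne_of_gt hab) (x_inj hy he)
      constructor
      · intro hlt
        rcases lt_or_gt_of_ne hyne with hc | hc
        · exact hc
        · exfalso; exact absurd (h2.mpr hc) (by linarith)
      · intro hlt
        rcases lt_or_gt_of_ne hxne with hc | hc
        · exact hc
        · exfalso; exact absurd (h2.mp hc) (by linarith)
  have hv : vfun y = vfun x := by
    apply vfun_unique hx
    intro k k' hkk'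
    rcases eq_or_lt_of_le hkk' with he | hlt
    · rw [he]
    · have := vfun_strict hy hlt
      exact le_of_lt ((ord_iff _ _).mpr this)
  apply Subtype.ext
  apply Prod.ext
  · exact hv.symm
  · show canonF (vfun x) (txfun x) = canonF (vfun y) (txfun y)
    rw [hv]
    have hsets : ∀ p, (univ.filter (fun q => p < q ∧ vfun x q < vfun x p ∧ q ≤ txfun x p))
        = (univ.filter (fun q => p < q ∧ vfun x q < vfun x p ∧ q ≤ txfun y p)) := by
      intro p
      apply Finset.filter_congr
      intro q _
      constructor
      · rintro ⟨h1, h2, h3⟩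
        refine ⟨h1, h2, ?_⟩
        have hc := tx_close hx h3
        apply tx_mem
        rw [hv]
        have hij : vfun x q < vfun x p := h2
        have := (h _ _ hij).2
        rw [← this]
        exact hc
      · rintro ⟨h1, h2, h3⟩
        refine ⟨h1, h2, ?_⟩
        have hc := tx_close hy h3
        rw [hv] at hc
        apply tx_mem
        have hij : vfun x q < vfun x p := h2
        have := (h _ _ hij).2
        rw [this]
        exact hc
    have hmf : mfun (vfun x) (txfun x) = mfun (vfun x) (txfun y) := by
      funext p
      exact max'_congr _ _ (by rw [hsets p])
    funext p
    exact max'_congr _ _ (by rw [hmf])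

end DataX

section Topology

def cat0 (i j : Fin n) : Set (Fin n → ℝ) := {z | z i - z j < 0}
def cat1 (i j : Fin n) : Set (Fin n → ℝ) := {z | 0 < z i - z j ∧ z i - z j < 1}
def cat2 (i j : Fin n) : Set (Fin n → ℝ) := {z | 1 < z i - z j}

theorem cont_sub (i j : Fin n) : Continuous (fun z : Fin n → ℝ => z i - z j) :=
  (continuous_apply i).sub (continuous_apply j)

theorem lin_sub (i j : Fin n) : IsLinearMap ℝ (fun z : Fin n → ℝ => z i - z j) := by
  constructor
  · intro a b; simp [Pi.add_apply]; ring
  · intro c a; simp [Pi.smul_apply, smul_eq_mul]; ring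

theorem isOpen_cat0 (i j : Fin n) : IsOpen (cat0 i j) :=
  isOpen_lt (cont_sub i j) continuous_const

theorem isOpen_cat1 (i j : Fin n) : IsOpen (cat1 i j) :=
  IsOpen.inter (isOpen_lt continuous_const (cont_sub i j))
    (isOpen_lt (cont_sub i j) continuous_const)

theorem isOpen_cat2 (i j : Fin n) : IsOpen (cat2 i j) :=
  isOpen_lt continuous_const (cont_sub i j)

theorem convex_cat0 (i j : Fin n) : Convex ℝ (cat0 i j) :=
  convex_halfSpace_lt (lin_sub i j) 0

theorem convex_cat1 (i j : Fin n) : Convex ℝ (cat1 i j) :=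
  Convex.inter (convex_halfSpace_gt (lin_sub i j) 0) (convex_halfSpace_lt (lin_sub i j) 1)

theorem convex_cat2 (i j : Fin n) : Convex ℝ (cat2 i j) :=
  convex_halfSpace_gt (lin_sub i j) 1

noncomputable def catOf (x : Fin n → ℝ) (i j : Fin n) : Set (Fin n → ℝ) :=
  if x i - x j < 0 then cat0 i j else if x i - x j < 1 then cat1 i j else cat2 i j

theorem isOpen_catOf (x : Fin n → ℝ) (i j : Fin n) : IsOpen (catOf x i j) := by
  rw [catOf]
  split
  · exact isOpen_cat0 i j
  split
  · exact isOpen_cat1 i j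
  · exact isOpen_cat2 i j

theorem convex_catOf (x : Fin n → ℝ) (i j : Fin n) : Convex ℝ (catOf x i j) := by
  rw [catOf]
  split
  · exact convex_cat0 i j
  split
  · exact convex_cat1 i j
  · exact convex_cat2 i j

theorem mem_catOf_self {x : Fin n → ℝ} (hx : x ∈ shiComplementA n) {i j : Fin n}
    (hij : i < j) : x ∈ catOf x i j := by
  rw [catOf]
  split
  case isTrue h => exact h
  case isFalse h0 =>
    split
    case isTrue h1 =>
      refine ⟨?_, h1⟩
      have := (hx i j hij).1
      push_neg at h0
      rcases eq_or_lt_of_le h0 with he | hl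
      · exact absurd he.symm this
      · exact hl
    case isFalse h1 =>
      push_neg at h1
      have := (hx i j hij).2
      rcases eq_or_lt_of_le h1 with he | hl
      · exact absurd he.symm this
      · exact hl

theorem catOf_sub {x z : Fin n → ℝ} {i j : Fin n} (hz : z ∈ catOf x i j) :
    z i - z j ≠ 0 ∧ z i - z j ≠ 1 := by
  rw [catOf] at hz
  split at hz
  · have hz' : z i - z j < 0 := hz
    constructor <;> intro h <;> rw [h] at hz' <;> linarith
  split at hz
  · have hz1 : 0 < z i - z j := hz.1
    have hz2 : z i - z j < 1 := hz.2
    constructor <;> intro h <;> rw [h] at hz1 hz2 <;> linarith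
  · have hz' : 1 < z i - z j := hz
    constructor <;> intro h <;> rw [h] at hz' <;> linarith

theorem pair_sameData {x z : Fin n → ℝ} (hx : x ∈ shiComplementA n) {i j : Fin n}
    (hij : i < j) (hz : z ∈ catOf x i j) :
    ((z i < z j ↔ x i < x j) ∧ (z i - z j < 1 ↔ x i - x j < 1)) := by
  rw [catOf] at hz
  split at hz
  case isTrue h0 =>
    rw [cat0] at hz
    have hz' : z i - z j < 0 := hz
    constructor
    · exact iff_of_true (by linarith) (by linarith)
    · exact iff_of_true (by linarith) (by linarith)
  case isFalse h0 =>
    push_neg at h0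
    have hne := (hx i j hij).1
    have hx0 : 0 < x i - x j := by
      rcases eq_or_lt_of_le h0 with he | hl
      · exact absurd he.symm hne
      · exact hl
    split at hz
    case isTrue h1 =>
      rw [cat1] at hz
      have hz1 : 0 < z i - z j := hz.1
      have hz2 : z i - z j < 1 := hz.2
      constructor
      · exact iff_of_false (by linarith) (by linarith)
      · exact iff_of_true (by linarith) (by linarith)
    case isFalse h1 =>
      push_neg at h1
      rw [cat2] at hz
      have hz' : 1 < z i - z j := hz
      have hx1 : 1 < x i - x j := by
        rcases eq_or_lt_of_le h1 with he | hl
        · exact absurd he.symm (hx i j hij).2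
        · exact hl
      constructor
      · exact iff_of_false (by linarith) (by linarith)
      · exact iff_of_false (by linarith) (by linarith)

noncomputable def Wx (x : Fin n → ℝ) : Set (Fin n → ℝ) :=
  ⋂ (i : Fin n), ⋂ (j : Fin n), (if i < j then catOf x i j else Set.univ)

theorem mem_Wx_iff {x z : Fin n → ℝ} :
    z ∈ Wx x ↔ ∀ i j : Fin n, i < j → z ∈ catOf x i j := by
  rw [Wx]
  constructor
  · intro h i j hij
    have h2 := Set.mem_iInter.mp (Set.mem_iInter.mp h i) j
    rwa [if_pos hij] at h2
  · intro h
    apply Set.mem_iInter.mpr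
    intro i
    apply Set.mem_iInter.mpr
    intro j
    by_cases hij : i < j
    · rw [if_pos hij]; exact h i j hij
    · rw [if_neg hij]; exact Set.mem_univ _

theorem isOpen_Wx (x : Fin n → ℝ) : IsOpen (Wx x) := by
  apply isOpen_iInter_of_finite
  intro i
  apply isOpen_iInter_of_finite
  intro j
  split
  · exact isOpen_catOf x i j
  · exact isOpen_univ

theorem convex_Wx (x : Fin n → ℝ) : Convex ℝ (Wx x) := by
  apply convex_iInter
  intro i
  apply convex_iInter
  intro j
  split
  · exact convex_catOf x i j
  · exact convex_univ

theorem mem_Wx_self {x : Fin n → ℝ} (hx : x ∈ shiComplementA n) : x ∈ Wx x :=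
  mem_Wx_iff.mpr (fun _ _ hij => mem_catOf_self hx hij)

theorem Wx_sub (x : Fin n → ℝ) : Wx x ⊆ shiComplementA n := by
  intro z hz i j hij
  exact catOf_sub (mem_Wx_iff.mp hz i j hij)

theorem sameData_of_mem_Wx {x z : Fin n → ℝ} (hx : x ∈ shiComplementA n)
    (hz : z ∈ Wx x) : SameData z x :=
  fun i j hij => pair_sameData hx hij (mem_Wx_iff.mp hz i j hij)

theorem mem_Wx_of_sameData {x z : Fin n → ℝ} (hx : x ∈ shiComplementA n)
    (hzS : z ∈ shiComplementA n) (h : SameData z x) : z ∈ Wx x := by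
  apply mem_Wx_iff.mpr
  intro i j hij
  obtain ⟨h1, h2⟩ := h i j hij
  have hne := (hx i j hij).1
  have hzne := (hzS i j hij).1
  rw [catOf]
  split
  case isTrue h0 =>
    rw [cat0]
    have : x i < x j := by linarith
    have := h1.mpr this
    show z i - z j < 0
    linarith
  case isFalse h0 =>
    push_neg at h0
    have hx0 : 0 < x i - x j := by
      rcases eq_or_lt_of_le h0 with he | hl
      · exact absurd he.symm hne
      · exact hl
    split
    case isTrue hlt1 =>
      rw [cat1]
      constructor
      · have hnxy : ¬ (x i < x j) := by linarith
        have := fun hc => hnxy (h1.mp hc)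
        have hzge : z j ≤ z i := by
          by_contra hcc
          push_neg at hcc
          exact this hcc
        rcases eq_or_lt_of_le hzge with he | hl
        · exact absurd (by linarith : z i - z j = 0) hzne
        · linarith
      · exact h2.mpr hlt1
    case isFalse hlt1 =>
      push_neg at hlt1
      rw [cat2]
      have hx1 : 1 < x i - x j := by
        rcases eq_or_lt_of_le hlt1 with he | hl
        · exact absurd he.symm (hx i j hij).2
        · exact hl
      have hz1 : ¬ (z i - z j < 1) := fun hc => absurd (h2.mp hc) (by linarith)
      push_neg at hz1
      rcases eq_or_lt_of_le hz1 with he | hl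
      · exact absurd he.symm (hzS i j hij).2
      · exact hl

end Topology

section Components

theorem sameData_symm {x y : Fin n → ℝ} (h : SameData x y) : SameData y x :=
  fun i j hij => ⟨(h i j hij).1.symm, (h i j hij).2.symm⟩

theorem comp_eq_of_mem_Wx (z x : ↥(shiComplementA n))
    (hz : (z : Fin n → ℝ) ∈ Wx (x : Fin n → ℝ)) :
    (ConnectedComponents.mk z) = ConnectedComponents.mk x := by
  set A : Set ↥(shiComplementA n) := Subtype.val ⁻¹' (Wx (x : Fin n → ℝ)) with hA
  have him : Subtype.val '' A = Wx (x : Fin n → ℝ) := by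
    rw [hA, Set.image_preimage_eq_inter_range, Subtype.range_coe]
    exact Set.inter_eq_self_of_subset_left (Wx_sub _)
  have hpre : IsPreconnected A := by
    apply (Topology.IsInducing.subtypeVal.isPreconnected_image).mp
    rw [him]
    exact (convex_Wx _).isPreconnected
  have hxA : x ∈ A := mem_Wx_self x.2
  have hzA : z ∈ A := hz
  have hsub : A ⊆ connectedComponent x := hpre.subset_connectedComponent hxA
  exact ConnectedComponents.coe_eq_coe'.mpr (hsub hzA)

noncomputable def badSet (x : Fin n → ℝ) (i j : Fin n) : Set (Fin n → ℝ) :=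
  if x i - x j < 0 then cat1 i j ∪ cat2 i j
  else if x i - x j < 1 then cat0 i j ∪ cat2 i j
  else cat0 i j ∪ cat1 i j

theorem isOpen_badSet (x : Fin n → ℝ) (i j : Fin n) : IsOpen (badSet x i j) := by
  rw [badSet]
  split
  · exact (isOpen_cat1 i j).union (isOpen_cat2 i j)
  split
  · exact (isOpen_cat0 i j).union (isOpen_cat2 i j)
  · exact (isOpen_cat0 i j).union (isOpen_cat1 i j)

theorem not_catOf_iff_badSet {x w : Fin n → ℝ} (hw : w ∈ shiComplementA n) {i j : Fin n}
    (hij : i < j) : w ∉ catOf x i j ↔ w ∈ badSet x i j := by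
  have hne0 := (hw i j hij).1
  have hne1 := (hw i j hij).2
  have htri : (w i - w j < 0) ∨ (0 < w i - w j ∧ w i - w j < 1) ∨ (1 < w i - w j) := by
    rcases lt_trichotomy (w i - w j) 0 with h | h | h
    · exact Or.inl h
    · exact absurd h hne0
    · rcases lt_trichotomy (w i - w j) 1 with h2 | h2 | h2
      · exact Or.inr (Or.inl ⟨h, h2⟩)
      · exact absurd h2 hne1
      · exact Or.inr (Or.inr h2)
  rw [catOf, badSet]
  split
  · -- catOf = cat0
    constructor
    · intro hno
      rcases htri with h | h | h
      · exact absurd h hno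
      · exact Or.inl h
      · exact Or.inr h
    · intro hbad hc
      have hc' : w i - w j < 0 := hc
      rcases hbad with h | h
      · have := h.1; have : (0:ℝ) < w i - w j := this; linarith
      · have : (1:ℝ) < w i - w j := h; linarith
  split
  · -- catOf = cat1
    constructor
    · intro hno
      rcases htri with h | h | h
      · exact Or.inl h
      · exact absurd h hno
      · exact Or.inr h
    · intro hbad hc
      have h1 : 0 < w i - w j := hc.1
      have h2 : w i - w j < 1 := hc.2
      rcases hbad with h | h
      · have : w i - w j < 0 := h; linarith
      · have : (1:ℝ) < w i - w j := h; linarith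
  · -- catOf = cat2
    constructor
    · intro hno
      rcases htri with h | h | h
      · exact Or.inl h
      · exact Or.inr h
      · exact absurd h hno
    · intro hbad hc
      have hc' : (1:ℝ) < w i - w j := hc
      rcases hbad with h | h
      · have : w i - w j < 0 := h; linarith
      · have := h.2; have : w i - w j < 1 := this; linarith

theorem mem_Wx_of_comp_eq (z x : ↥(shiComplementA n))
    (h : (ConnectedComponents.mk z) = ConnectedComponents.mk x) :
    (z : Fin n → ℝ) ∈ Wx (x : Fin n → ℝ) := by
  set A : Set ↥(shiComplementA n) := Subtype.val ⁻¹' (Wx (x : Fin n → ℝ)) with hA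
  have hopen : IsOpen A := (isOpen_Wx _).preimage continuous_subtype_val
  have hcompl : Aᶜ = Subtype.val ⁻¹'
      (⋃ (i : Fin n), ⋃ (j : Fin n), (if i < j then badSet (x : Fin n → ℝ) i j else ∅)) := by
    ext w
    simp only [Set.mem_compl_iff, hA, Set.mem_preimage, Set.mem_iUnion]
    constructor
    · intro hw
      rw [mem_Wx_iff] at hw
      push_neg at hw
      obtain ⟨i, j, hij, hno⟩ := hw
      refine ⟨i, j, ?_⟩
      rw [if_pos hij]
      exact (not_catOf_iff_badSet w.2 hij).mp hno
    · rintro ⟨i, j, hw⟩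
      by_cases hij : i < j
      · rw [if_pos hij] at hw
        intro hWx
        exact ((not_catOf_iff_badSet w.2 hij).mpr hw) (mem_Wx_iff.mp hWx i j hij)
      · rw [if_neg hij] at hw
        exact absurd hw (Set.notMem_empty _)
  have hclosed : IsClosed A := by
    rw [← compl_compl A]
    apply IsOpen.isClosed_compl
    rw [hcompl]
    apply IsOpen.preimage continuous_subtype_val
    apply isOpen_iUnion
    intro i
    apply isOpen_iUnion
    intro j
    split
    · exact isOpen_badSet _ i j
    · exact isOpen_empty
  have hclopen : IsClopen A := ⟨hclosed, hopen⟩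
  have hxA : x ∈ A := mem_Wx_self x.2
  have hsub := hclopen.connectedComponent_subset hxA
  have hz : z ∈ connectedComponent x := ConnectedComponents.coe_eq_coe'.mp h
  exact hsub hz

end Components

section Final

noncomputable def toComp (c : CnT n) : ConnectedComponents ↥(shiComplementA n) :=
  ConnectedComponents.mk ⟨c2x c, c2x_mem c⟩

theorem toComp_bijective : Function.Bijective (toComp (n := n)) := by
  constructor
  · intro c c' h
    rw [toComp, toComp] at h
    have hW := mem_Wx_of_comp_eq _ _ h
    have hsd : SameData (c2x c) (c2x c') := sameData_of_mem_Wx (c2x_mem c') hW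
    have h2 := dataC_sameData (c2x_mem c) (c2x_mem c') hsd
    rw [dataC_c2x, dataC_c2x] at h2
    exact h2
  · intro comp
    obtain ⟨z, hz⟩ := ConnectedComponents.surjective_coe comp
    refine ⟨dataC z.1 z.2, ?_⟩
    rw [toComp, ← hz]
    apply comp_eq_of_mem_Wx
    exact mem_Wx_of_sameData z.2 (c2x_mem _) (sameData_symm (sameData_dataC z.2))

end Final
end ShiPF

/-- The number of regions of the type `A_{n-1}` Shi arrangement equals the number of
parking functions of length `n`. -/
theorem card_regions_shiA_eq_card_parkingFunctions (n : ℕ) (hn : 1 ≤ n) :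
    Nat.card (ConnectedComponents ↥(shiComplementA n)) =
      Nat.card {a : Fin n → ℕ // IsParkingFunction n a} := by
  have e1 : ShiPF.CnT n ≃ ConnectedComponents ↥(shiComplementA n) :=
    Equiv.ofBijective _ ShiPF.toComp_bijective
  have e2 : ShiPF.CnT n ≃ {a : Fin n → ℕ // IsParkingFunction n a} :=
    Equiv.ofBijective (fun c => ⟨ShiPF.phi c, ShiPF.phi_isPF c⟩) (by
      constructor
      · intro c c' h
        exact ShiPF.phi_injective (congrArg Subtype.val h)
      · rintro ⟨a, ha⟩
        obtain ⟨c, hc⟩ := ShiPF.phi_surjective a ha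
        exact ⟨c, Subtype.ext hc⟩)
  exact (Nat.card_congr e1.symm).trans (Nat.card_congr e2)
end

section
/- For every integer n ≥ 1 and every integer k, (n+1) times the number of parking functions a of length n with d(a) = k equals the number of sequences a ∈ A(n) with d(a) = k. -/
/-- `d(a)`: the number of distinct values among the entries of the sequence `a`. -/
def numDistinct (n : ℕ) (a : Fin n → ℕ) : ℕ :=
  (Finset.image a Finset.univ).card

namespace PFaux

/-- count of entries `≤ j` -/
def pcnt (n : ℕ) (a : Fin n → ℕ) (j : ℕ) : ℕ :=
  (Finset.univ.filter fun i => a i ≤ j).card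

/-- 0-indexed parking condition -/
def park0 (n : ℕ) (b : Fin n → ℕ) : Prop := ∀ j < n, j + 1 ≤ pcnt n b j

/-- counting walk -/
def NN (n : ℕ) (b : Fin n → ℕ) (x : ℕ) : ℕ :=
  ∑ i, ((if b i < x then 1 else 0) + (if b i + (n+1) < x then 1 else 0))

def sdown (n s : ℕ) (b : Fin n → ℕ) : Fin n → ℕ := fun i => (b i + (n+1) - s) % (n+1)

lemma card_lt_filter (n j : ℕ) (hj : j ≤ n) :
    (Finset.univ.filter fun i : Fin n => (i : ℕ) < j).card = j := by
  have : (Finset.univ.filter fun i : Fin n => (i : ℕ) < j)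
      = (Finset.univ : Finset (Fin j)).map (Fin.castLEEmb hj) := by
    ext i
    simp only [Finset.mem_filter, Finset.mem_univ, true_and, Finset.mem_map]
    constructor
    · intro h; exact ⟨⟨i, h⟩, rfl⟩
    · rintro ⟨k, rfl⟩; exact k.isLt
  rw [this, Finset.card_map, Finset.card_univ, Fintype.card_fin]


lemma mod_formula (n s x : ℕ) (hs : s ≤ n) (hx : x ≤ n) :
    (x + (n+1) - s) % (n+1) = if s ≤ x then x - s else x + (n+1) - s := by
  split_ifs with h
  · have : x + (n+1) - s = (x - s) + (n+1) := by omega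
    rw [this, Nat.add_mod_right, Nat.mod_eq_of_lt (by omega)]
  · exact Nat.mod_eq_of_lt (by omega)

lemma count_formula (n s j : ℕ) (b : Fin n → ℕ) (hb : ∀ i, b i ≤ n)
    (hs : s ≤ n) (hj : j ≤ n) :
    pcnt n (sdown n s b) j + NN n b s = NN n b (s + j + 1) := by
  unfold pcnt NN sdown
  rw [Finset.card_filter, ← Finset.sum_add_distrib]
  refine Finset.sum_congr rfl fun i _ => ?_
  rw [mod_formula n s (b i) hs (hb i)]
  split_ifs <;> omega

lemma NN_period (n x : ℕ) (b : Fin n → ℕ) (hb : ∀ i, b i ≤ n) (hx : x ≤ n + 1) :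
    NN n b (x + (n+1)) = NN n b x + n := by
  unfold NN
  have : ∀ i : Fin n, ((if b i < x + (n+1) then 1 else 0) + (if b i + (n+1) < x + (n+1) then 1 else 0))
      = ((if b i < x then 1 else 0) + (if b i + (n+1) < x then 1 else 0)) + 1 := by
    intro i; have := hb i; split_ifs <;> omega
  rw [Finset.sum_congr rfl fun i _ => this i, Finset.sum_add_distrib]
  simp [Finset.card_univ, mul_comm]

/-- integer walk -/
def W (n : ℕ) (b : Fin n → ℕ) (x : ℕ) : ℤ := (NN n b x : ℤ) - x

lemma W_period (n x : ℕ) (b : Fin n → ℕ) (hb : ∀ i, b i ≤ n) (hx : x ≤ n + 1) :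
    W n b (x + (n+1)) = W n b x - 1 := by
  unfold W; rw [NN_period n x b hb hx]; push_cast; ring

lemma park0_iff_W (n s : ℕ) (b : Fin n → ℕ) (hb : ∀ i, b i ≤ n) (hs : s ≤ n) :
    park0 n (sdown n s b) ↔ ∀ j < n, W n b s ≤ W n b (s + j + 1) := by
  unfold park0 W
  refine forall_congr' fun j => imp_congr_right fun hj => ?_
  have h := count_formula n s j b hb hs (le_of_lt hj)
  omega

lemma exists_park_shift (n : ℕ) (b : Fin n → ℕ) (hb : ∀ i, b i ≤ n) :
    ∃ s ≤ n, park0 n (sdown n s b) := by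
  -- minimizer of W on [0, n]
  have hne : (Finset.range (n+1)).Nonempty := ⟨0, by simp⟩
  obtain ⟨x0, hx0mem, hx0⟩ := Finset.exists_min_image (Finset.range (n+1)) (W n b) hne
  have hx0n : x0 ≤ n := by simpa using Nat.lt_succ_iff.mp (Finset.mem_range.mp hx0mem)
  have hP : ∃ s, s ≤ n ∧ ∀ y ≤ n, W n b s ≤ W n b y := by
    exact ⟨x0, hx0n, fun y hy => hx0 y (Finset.mem_range.mpr (by omega))⟩
  classical
  set s := Nat.find hP with hsdef
  obtain ⟨hsn, hsmin⟩ := Nat.find_spec hP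
  have hlt : ∀ y < s, W n b s < W n b y := by
    intro y hy
    have hns := Nat.find_min hP hy
    have h1 : W n b s ≤ W n b y := hsmin y (by omega)
    rcases lt_or_eq_of_le h1 with h | h
    · exact h
    · exfalso; exact hns ⟨by omega, fun z hz => h ▸ hsmin z hz⟩
  refine ⟨s, hsn, (park0_iff_W n s b hb hsn).mpr ?_⟩
  intro j hj
  by_cases hc : s + j + 1 ≤ n
  · exact hsmin _ hc
  · have hy : s + j + 1 = (s + j - n) + (n + 1) := by omega
    have hyn : s + j - n ≤ n + 1 := by omega
    have hys : s + j - n < s := by omega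
    rw [hy, W_period n _ b hb hyn]
    have := hlt _ hys
    omega

lemma unique_park_shift (n : ℕ) (b : Fin n → ℕ) (hb : ∀ i, b i ≤ n) (hn : 1 ≤ n)
    {s s' : ℕ} (hs : s ≤ n) (hs' : s' ≤ n)
    (h : park0 n (sdown n s b)) (h' : park0 n (sdown n s' b)) : s = s' := by
  rw [park0_iff_W n s b hb hs] at h
  rw [park0_iff_W n s' b hb hs'] at h'
  by_contra hne
  -- wlog s < s'
  wlog hlt : s < s' generalizing s s'
  · exact this hs' hs h' h (Ne.symm hne) (by omega)
  have h1 : W n b s ≤ W n b s' := by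
    have := h (s' - s - 1) (by omega)
    have he : s + (s' - s - 1) + 1 = s' := by omega
    rwa [he] at this
  have h2 : W n b s' ≤ W n b (s + n + 1) := by
    have := h' (s + n - s') (by omega)
    have he : s' + (s + n - s') + 1 = s + n + 1 := by omega
    rwa [he] at this
  have h3 : W n b (s + n + 1) = W n b s - 1 := by
    have he : s + n + 1 = s + (n + 1) := by omega
    rw [he, W_period n s b hb (by omega)]
  omega


lemma pcnt_perm (n : ℕ) (a : Fin n → ℕ) (g : Equiv.Perm (Fin n)) (j : ℕ) :
    pcnt n (fun i => a (g i)) j = pcnt n a j := by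
  unfold pcnt
  apply Finset.card_nbij' (fun i => g i) (fun i => g.symm i)
  · intro i hi; simpa using (Finset.mem_filter.mp hi).2
  · intro i hi; simpa using (Finset.mem_filter.mp hi).2
  · intro i _; simp
  · intro i _; simp

lemma park_iff_count (n : ℕ) (hn : 1 ≤ n) (a : Fin n → ℕ) :
    IsParkingFunction n a ↔ (∀ i, 1 ≤ a i) ∧ ∀ j ≤ n, j ≤ pcnt n a j := by
  constructor
  · rintro ⟨hmem, g, hmono, hle⟩
    refine ⟨fun i => (Finset.mem_Icc.mp (hmem i)).1, fun j hj => ?_⟩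
    rw [← pcnt_perm n a g j]
    calc j = (Finset.univ.filter fun i : Fin n => (i : ℕ) < j).card :=
          (card_lt_filter n j hj).symm
      _ ≤ pcnt n (fun i => a (g i)) j := by
          apply Finset.card_le_card
          intro i hi
          have hi' : (i : ℕ) < j := (Finset.mem_filter.mp hi).2
          exact Finset.mem_filter.mpr ⟨Finset.mem_univ _, le_trans (hle i) (by omega)⟩
  · rintro ⟨h1, h2⟩
    have hub : ∀ i, a i ≤ n := by
      intro i
      have hcard : n ≤ pcnt n a n := h2 n le_rfl
      have : (Finset.univ.filter fun i : Fin n => a i ≤ n) = Finset.univ := by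
        apply Finset.eq_univ_of_card
        have hle' : pcnt n a n ≤ n := by
          simpa [pcnt, Finset.card_univ] using Finset.card_filter_le Finset.univ (fun i : Fin n => a i ≤ n)
        have : pcnt n a n = n := le_antisymm hle' hcard
        simpa [pcnt, Finset.card_univ] using this
      have := Finset.mem_filter.mp (this ▸ Finset.mem_univ i)
      exact this.2
    refine ⟨fun i => Finset.mem_Icc.mpr ⟨h1 i, hub i⟩, Tuple.sort a, Tuple.monotone_sort a, ?_⟩
    intro i
    by_contra hcon
    push_neg at hcon
    -- b := a ∘ sort a is monotone and b i ≥ i + 2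
    set b : Fin n → ℕ := a ∘ Tuple.sort a with hbdef
    have hmono : Monotone b := Tuple.monotone_sort a
    have hbi : (i : ℕ) + 2 ≤ b i := by
      have : (i:ℕ) + 1 < a (Tuple.sort a i) := hcon
      show (i:ℕ) + 2 ≤ a (Tuple.sort a i); omega
    have hsub : (Finset.univ.filter fun i' : Fin n => b i' ≤ (i:ℕ)+1)
        ⊆ Finset.univ.filter fun i' : Fin n => (i' : ℕ) < (i:ℕ) := by
      intro i' hi'
      have h' : b i' ≤ (i:ℕ)+1 := (Finset.mem_filter.mp hi').2
      refine Finset.mem_filter.mpr ⟨Finset.mem_univ _, ?_⟩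
      by_contra hge
      push_neg at hge
      have : b i ≤ b i' := hmono (by exact Fin.le_def.mpr hge)
      omega
    have hcard := Finset.card_le_card hsub
    rw [card_lt_filter n i (le_of_lt i.isLt)] at hcard
    have hpc : pcnt n b ((i:ℕ)+1) ≤ (i:ℕ) := hcard
    have : pcnt n b ((i:ℕ)+1) = pcnt n a ((i:ℕ)+1) := pcnt_perm n a (Tuple.sort a) _
    have := h2 ((i:ℕ)+1) (by omega)
    omega


lemma pcnt_sub_one (n j : ℕ) (a : Fin n → ℕ) (h1 : ∀ i, 1 ≤ a i) :
    pcnt n (fun i => a i - 1) j = pcnt n a (j + 1) := by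
  unfold pcnt
  congr 1
  apply Finset.filter_congr
  intro i _
  have := h1 i
  show a i - 1 ≤ j ↔ a i ≤ j + 1
  omega

lemma park_iff_park0 (n : ℕ) (hn : 1 ≤ n) (a : Fin n → ℕ) :
    IsParkingFunction n a ↔ (∀ i, 1 ≤ a i) ∧ park0 n (fun i => a i - 1) := by
  rw [park_iff_count n hn a]
  refine and_congr_right fun h1 => ?_
  unfold park0
  constructor
  · intro h j hj
    rw [pcnt_sub_one n j a h1]
    exact h (j+1) (by omega)
  · intro h j hj
    rcases Nat.eq_zero_or_pos j with rfl | hj0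
    · exact Nat.zero_le _
    · have := h (j-1) (by omega)
      rw [pcnt_sub_one n (j-1) a h1] at this
      have he : j - 1 + 1 = j := by omega
      rw [he] at this
      omega

lemma shift_inj (n t u v : ℕ) (hu : u ≤ n) (hv : v ≤ n)
    (h : (u + t) % (n+1) = (v + t) % (n+1)) : u = v := by
  have h1 : u % (n+1) = v % (n+1) := by
    have := (Nat.ModEq.add_right_cancel' t h : u ≡ v [MOD n+1])
    exact this
  rwa [Nat.mod_eq_of_lt (by omega), Nat.mod_eq_of_lt (by omega)] at h1

lemma down_up (n t u : ℕ) (hu : u ≤ n) (ht : t ≤ n) :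
    ((u + t) % (n+1) + (n+1) - t) % (n+1) = u := by
  have he : (u + t) % (n+1) + (n+1) - t = (u + t) % (n+1) + ((n+1) - t) := by omega
  rw [he, Nat.mod_add_mod]
  have he2 : u + t + ((n+1) - t) = u + (n+1) := by omega
  rw [he2, Nat.add_mod_right, Nat.mod_eq_of_lt (by omega)]

lemma up_down (n s u : ℕ) (hu : u ≤ n) (hs : s ≤ n) :
    ((u + (n+1) - s) % (n+1) + s) % (n+1) = u := by
  have he : u + (n+1) - s = u + ((n+1) - s) := by omega
  rw [he, Nat.mod_add_mod]
  have he2 : u + ((n+1) - s) + s = u + (n+1) := by omega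
  rw [he2, Nat.add_mod_right, Nat.mod_eq_of_lt (by omega)]

lemma numDistinct_comp (n : ℕ) (a : Fin n → ℕ) (φ : ℕ → ℕ) (S : Set ℕ)
    (hS : ∀ i, a i ∈ S) (hinj : Set.InjOn φ S) :
    numDistinct n (fun i => φ (a i)) = numDistinct n a := by
  unfold numDistinct
  have him : Finset.image (fun i => φ (a i)) Finset.univ
      = Finset.image φ (Finset.image a Finset.univ) := by
    rw [Finset.image_image]; rfl
  rw [him]
  apply Finset.card_image_of_injOn
  intro x hx y hy hxy
  simp only [Finset.coe_image, Finset.mem_image] at hx hy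
  obtain ⟨i, _, rfl⟩ := hx
  obtain ⟨i', _, rfl⟩ := hy
  exact hinj (hS i) (hS i') hxy

end PFaux

open PFaux

/-- For every integer `k`, `(n+1)` times the number of parking functions of length `n`
with exactly `k` distinct entries equals the number of sequences in
`A(n) = {(a₁,…,aₙ) : aᵢ ∈ {1,…,n+1}}` with exactly `k` distinct entries. -/
theorem parkingFunctions_distinct_mul (n : ℕ) (hn : 1 ≤ n) (k : ℤ) :
    (n + 1) * Nat.card {a : Fin n → ℕ //
        IsParkingFunction n a ∧ (numDistinct n a : ℤ) = k} =
      Nat.card {a : Fin n → ℕ //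
        (∀ i, a i ∈ Finset.Icc 1 (n + 1)) ∧ (numDistinct n a : ℤ) = k} := by
  classical
  set P := {a : Fin n → ℕ // IsParkingFunction n a ∧ (numDistinct n a : ℤ) = k} with hP
  set Q := {a : Fin n → ℕ // (∀ i, a i ∈ Finset.Icc 1 (n + 1)) ∧ (numDistinct n a : ℤ) = k}
    with hQ
  have hnpos : 0 < n + 1 := by omega
  -- the shift map
  let f : P × Fin (n+1) → Q := fun x =>
    ⟨fun i => ((x.1.1 i - 1 + (x.2 : ℕ)) % (n+1)) + 1, by
      intro i
      show ((x.1.1 i - 1 + (x.2 : ℕ)) % (n+1)) + 1 ∈ Finset.Icc 1 (n+1)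
      refine Finset.mem_Icc.mpr ⟨by omega, ?_⟩
      have := Nat.mod_lt (x.1.1 i - 1 + (x.2 : ℕ)) hnpos
      omega, by
      rcases x with ⟨⟨a, hpa, hda⟩, t⟩
      have hbd : ∀ i, 1 ≤ a i ∧ a i ≤ n := fun i => Finset.mem_Icc.mp (hpa.1 i)
      have hd : numDistinct n (fun i => ((a i - 1 + (t : ℕ)) % (n+1)) + 1)
          = numDistinct n a := by
        apply numDistinct_comp n a (fun x => ((x - 1 + (t : ℕ)) % (n+1)) + 1)
          {x | 1 ≤ x ∧ x ≤ n + 1}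
        · intro i; exact ⟨(hbd i).1, by have := (hbd i).2; omega⟩
        · intro x hx y hy hxy
          simp only [Set.mem_setOf_eq] at hx hy
          simp only [] at hxy
          have h' : (x - 1 + (t : ℕ)) % (n+1) = (y - 1 + (t : ℕ)) % (n+1) := by omega
          have := shift_inj n (t : ℕ) (x-1) (y-1) (by omega) (by omega) h'
          omega
      simpa [hd] using hda⟩
  have hinj : Function.Injective f := by
    rintro ⟨⟨a, hpa, hda⟩, t⟩ ⟨⟨a', hpa', hda'⟩, t'⟩ heq
    have hbd : ∀ i, 1 ≤ a i ∧ a i ≤ n := fun i => Finset.mem_Icc.mp (hpa.1 i)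
    have hbd' : ∀ i, 1 ≤ a' i ∧ a' i ≤ n := fun i => Finset.mem_Icc.mp (hpa'.1 i)
    have heq' : ∀ i, ((a i - 1 + (t : ℕ)) % (n+1)) + 1
        = ((a' i - 1 + (t' : ℕ)) % (n+1)) + 1 := by
      intro i
      exact congrFun (congrArg Subtype.val heq) i
    have hb : ∀ i, (fun i => (a i - 1 + (t : ℕ)) % (n+1)) i ≤ n := by
      intro i; have := Nat.mod_lt (a i - 1 + (t : ℕ)) hnpos
      show (a i - 1 + (t : ℕ)) % (n+1) ≤ n
      omega
    have ht : (t : ℕ) ≤ n := by omega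
    have ht' : (t' : ℕ) ≤ n := by omega
    have hsd : sdown n (t : ℕ) (fun i => (a i - 1 + (t : ℕ)) % (n+1)) = fun i => a i - 1 := by
      funext i
      exact down_up n (t : ℕ) (a i - 1) (by have := (hbd i).2; omega) ht
    have hsd' : sdown n (t' : ℕ) (fun i => (a i - 1 + (t : ℕ)) % (n+1)) = fun i => a' i - 1 := by
      funext i
      show ((a i - 1 + (t : ℕ)) % (n+1) + (n+1) - (t' : ℕ)) % (n+1) = a' i - 1
      rw [show (a i - 1 + (t : ℕ)) % (n+1) = (a' i - 1 + (t' : ℕ)) % (n+1) by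
        have := heq' i; omega]
      exact down_up n (t' : ℕ) (a' i - 1) (by have := (hbd' i).2; omega) ht'
    have hpk : park0 n (sdown n (t : ℕ) (fun i => (a i - 1 + (t : ℕ)) % (n+1))) := by
      rw [hsd]; exact ((park_iff_park0 n hn a).mp hpa).2
    have hpk' : park0 n (sdown n (t' : ℕ) (fun i => (a i - 1 + (t : ℕ)) % (n+1))) := by
      rw [hsd']; exact ((park_iff_park0 n hn a').mp hpa').2
    have htt : (t : ℕ) = (t' : ℕ) :=
      unique_park_shift n (fun i => (a i - 1 + (t : ℕ)) % (n+1)) hb hn ht ht' hpk hpk'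
    have haa : a = a' := by
      funext i
      have h1 : ((a i - 1 + (t : ℕ)) % (n+1) + (n+1) - (t : ℕ)) % (n+1) = a i - 1 :=
        congrFun hsd i
      have h2 : ((a i - 1 + (t : ℕ)) % (n+1) + (n+1) - (t' : ℕ)) % (n+1) = a' i - 1 :=
        congrFun hsd' i
      rw [← htt] at h2
      have := (hbd i).1; have := (hbd' i).1
      omega
    subst haa
    obtain rfl : t = t' := Fin.ext htt
    rfl
  have hsurj : Function.Surjective f := by
    rintro ⟨a, hmem, hd⟩
    have hbd : ∀ i, 1 ≤ a i ∧ a i ≤ n + 1 := fun i => Finset.mem_Icc.mp (hmem i)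
    set b : Fin n → ℕ := fun i => a i - 1 with hbdef
    have hb : ∀ i, b i ≤ n := fun i => by have := (hbd i).2; simp [hbdef]; omega
    obtain ⟨s, hs, hpark⟩ := exists_park_shift n b hb
    set p : Fin n → ℕ := fun i => sdown n s b i + 1 with hpdef
    have hp1 : ∀ i, 1 ≤ p i := fun i => by simp [hpdef]
    have hpsub : (fun i => p i - 1) = sdown n s b := by funext i; simp [hpdef]
    have hppark : IsParkingFunction n p :=
      (park_iff_park0 n hn p).mpr ⟨hp1, by rw [hpsub]; exact hpark⟩
    have hpd : numDistinct n p = numDistinct n a := by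
      have hform : p = fun i => ((a i - 1 + ((n+1) - s)) % (n+1)) + 1 := by
        funext i
        simp only [hpdef, sdown, hbdef]
        congr 2
        omega
      rw [hform]
      apply numDistinct_comp n a (fun x => ((x - 1 + ((n+1) - s)) % (n+1)) + 1)
        {x | 1 ≤ x ∧ x ≤ n + 1}
      · intro i; exact ⟨(hbd i).1, (hbd i).2⟩
      · intro x hx y hy hxy
        simp only [Set.mem_setOf_eq] at hx hy
        simp only [] at hxy
        have h' : (x - 1 + ((n+1) - s)) % (n+1) = (y - 1 + ((n+1) - s)) % (n+1) := by omega
        have := shift_inj n ((n+1) - s) (x-1) (y-1) (by omega) (by omega) h'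
        omega
    refine ⟨⟨⟨p, hppark, by rw [hpd]; exact hd⟩, ⟨s, by omega⟩⟩, ?_⟩
    apply Subtype.ext
    funext i
    show ((p i - 1 + s) % (n+1)) + 1 = a i
    have h1 : p i - 1 = (b i + (n+1) - s) % (n+1) := by simp [hpdef, sdown]
    rw [h1, up_down n s (b i) (hb i) hs]
    have := (hbd i).1
    simp [hbdef]
    omega
  have hcard := Nat.card_eq_of_bijective f ⟨hinj, hsurj⟩
  have hfin : Nat.card (Fin (n+1)) = n + 1 := by simp
  rw [Nat.card_prod, hfin] at hcard
  rw [← hcard, mul_comm]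
end

section
/- For every integer n ≥ 1 and every integer m ≥ 0, the number of regions of the type A_{n-1} Shi arrangement S^A_n with exactly m ceilings equals the number of regions of S^A_n with exactly m floors. -/
/-- The regions of the type `A_{n-1}` Shi arrangement. -/
def regionsA (n : ℕ) : Set (Set (Fin n → ℝ)) :=
  {R | ∃ x ∈ shiComplementA n, R = connectedComponentIn (shiComplementA n) x}

/-- `H` is a wall of the region `R`. -/
def IsWall {n : ℕ} (H R : Set (Fin n → ℝ)) : Prop :=
  ∃ p ∈ H, ∃ U ∈ nhds p, H ∩ U ⊆ closure R

/-- The hyperplane `{x | f x = 1}` is a ceiling of `R`: a wall of `R` with `R` on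
the same side as the origin. -/
def IsCeilingH {n : ℕ} (f : (Fin n → ℝ) → ℝ) (R : Set (Fin n → ℝ)) : Prop :=
  IsWall {x | f x = 1} R ∧ ∀ x ∈ R, f x < 1

/-- The hyperplane `{x | f x = 1}` is a floor of `R`: a wall of `R` with `R` on
the opposite side from the origin. -/
def IsFloorH {n : ℕ} (f : (Fin n → ℝ) → ℝ) (R : Set (Fin n → ℝ)) : Prop :=
  IsWall {x | f x = 1} R ∧ ∀ x ∈ R, 1 < f x

/-- `c(R)`: the number of ceilings of a region of the type `A_{n-1}` Shi arrangement. -/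
noncomputable def numCeilingsA (n : ℕ) (R : Set (Fin n → ℝ)) : ℕ :=
  Nat.card {p : Fin n × Fin n // p.1 < p.2 ∧ IsCeilingH (fun x => x p.1 - x p.2) R}

/-- `f(R)`: the number of floors of a region of the type `A_{n-1}` Shi arrangement. -/
noncomputable def numFloorsA (n : ℕ) (R : Set (Fin n → ℝ)) : ℕ :=
  Nat.card {p : Fin n × Fin n // p.1 < p.2 ∧ IsFloorH (fun x => x p.1 - x p.2) R}


open Finset

noncomputable section
namespace ShiProof

def SameSide (a b : ℝ) : Prop :=
  (a < 0 ∧ b < 0) ∨ (0 < a ∧ a < 1 ∧ 0 < b ∧ b < 1) ∨ (1 < a ∧ 1 < b)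

lemma SameSide.symm {a b : ℝ} (h : SameSide a b) : SameSide b a := by
  rcases h with h | h | h
  · exact Or.inl ⟨h.2, h.1⟩
  · exact Or.inr (Or.inl ⟨h.2.2.1, h.2.2.2, h.1, h.2.1⟩)
  · exact Or.inr (Or.inr ⟨h.2, h.1⟩)

lemma SameSide.trans {a b c : ℝ} (h : SameSide a b) (h' : SameSide b c) : SameSide a c := by
  rcases h with ⟨h1,h2⟩ | ⟨h1,h2,h3,h4⟩ | ⟨h1,h2⟩ <;>
    rcases h' with ⟨g1,g2⟩ | ⟨g1,g2,g3,g4⟩ | ⟨g1,g2⟩ <;>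
    [ exact Or.inl ⟨h1, g2⟩; exact absurd g1 (by linarith); exact absurd g1 (by linarith);
      exact absurd g1 (by linarith); exact Or.inr (Or.inl ⟨h1,h2,g3,g4⟩);
      exact absurd g1 (by linarith);
      exact absurd g1 (by linarith); exact absurd g2 (by linarith);
      exact Or.inr (Or.inr ⟨h1, g2⟩)]

lemma sameSide_refl {a : ℝ} (h0 : a ≠ 0) (h1 : a ≠ 1) : SameSide a a := by
  rcases lt_trichotomy a 0 with h | h | h
  · exact Or.inl ⟨h, h⟩
  · exact absurd h h0
  · rcases lt_trichotomy a 1 with h' | h' | h'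
    · exact Or.inr (Or.inl ⟨h, h', h, h'⟩)
    · exact absurd h' h1
    · exact Or.inr (Or.inr ⟨h', h'⟩)

lemma SameSide.ne_zero {a b : ℝ} (h : SameSide a b) : b ≠ 0 := by
  rcases h with h | h | h <;> intro e <;>
    first | linarith [h.2] | linarith [h.2.2.1]

lemma SameSide.ne_one {a b : ℝ} (h : SameSide a b) : b ≠ 1 := by
  rcases h with h | h | h
  · intro e; linarith [h.2]
  · intro e; linarith [h.2.2.2]
  · intro e; linarith [h.2]

variable {n : ℕ}

def cell (x : Fin n → ℝ) : Set (Fin n → ℝ) :=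
  {y | ∀ i j : Fin n, i < j → SameSide (x i - x j) (y i - y j)}

lemma mem_cell_self {x : Fin n → ℝ} (hx : x ∈ shiComplementA n) : x ∈ cell x := by
  intro i j hij
  exact sameSide_refl ((hx i j hij).1) ((hx i j hij).2)

lemma cell_subset_comp {x : Fin n → ℝ} : cell x ⊆ shiComplementA n := by
  intro y hy i j hij
  exact ⟨(hy i j hij).ne_zero, (hy i j hij).ne_one⟩

lemma cell_eq_of_mem {x y : Fin n → ℝ} (hy : y ∈ cell x) : cell y = cell x := by
  ext z
  constructor
  · intro hz i j hij
    exact (hy i j hij).trans (hz i j hij)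
  · intro hz i j hij
    exact ((hy i j hij).symm).trans (hz i j hij)


lemma combo_lt {u v c a b : ℝ} (ha : 0 ≤ a) (hb : 0 ≤ b) (hab : a + b = 1)
    (hu : u < c) (hv : v < c) : a * u + b * v < c := by
  rcases ha.lt_or_eq with h | h
  · have h1 : a * u < a * c := by nlinarith
    have h2 : b * v ≤ b * c := by nlinarith
    have h3 : a * c + b * c = c := by rw [← add_mul, hab, one_mul]
    linarith
  · have hb1 : b = 1 := by linarith
    rw [← h, hb1]; simpa using hv

lemma combo_gt {u v c a b : ℝ} (ha : 0 ≤ a) (hb : 0 ≤ b) (hab : a + b = 1)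
    (hu : c < u) (hv : c < v) : c < a * u + b * v := by
  have := combo_lt ha hb hab (neg_lt_neg hu) (neg_lt_neg hv)
  nlinarith

lemma convex_cell (x : Fin n → ℝ) : Convex ℝ (cell x) := by
  intro y hy z hz a b ha hb hab
  intro i j hij
  have hy' := hy i j hij
  have hz' := hz i j hij
  have hval : (a • y + b • z) i - (a • y + b • z) j
      = a * (y i - y j) + b * (z i - z j) := by
    simp [Pi.add_apply, Pi.smul_apply, smul_eq_mul]; ring
  rw [hval]
  rcases hy' with ⟨h1,h2⟩ | ⟨h1,h2,h3,h4⟩ | ⟨h1,h2⟩ <;>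
    rcases hz' with ⟨g1,g2⟩ | ⟨g1,g2,g3,g4⟩ | ⟨g1,g2⟩ <;>
    [ exact Or.inl ⟨h1, combo_lt ha hb hab h2 g2⟩;
      exact absurd g1 (by linarith); exact absurd g1 (by linarith);
      exact absurd g1 (by linarith);
      exact Or.inr (Or.inl ⟨h1, h2, combo_gt ha hb hab h3 g3, combo_lt ha hb hab h4 g4⟩);
      exact absurd g1 (by linarith);
      exact absurd g1 (by linarith); exact absurd g2 (by linarith);
      exact Or.inr (Or.inr ⟨h1, combo_gt ha hb hab h2 g2⟩)]

lemma isOpen_cell (x : Fin n → ℝ) : IsOpen (cell x) := by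
  have : cell x = ⋂ (p : {q : Fin n × Fin n // q.1 < q.2}),
      {y | SameSide (x p.1.1 - x p.1.2) (y p.1.1 - y p.1.2)} := by
    ext y
    simp only [Set.mem_iInter, Set.mem_setOf_eq]
    exact ⟨fun h p => h p.1.1 p.1.2 p.2, fun h i j hij => h ⟨(i,j), hij⟩⟩
  rw [this]
  apply isOpen_iInter_of_finite
  intro p
  have hc : Continuous fun y : Fin n → ℝ => y p.1.1 - y p.1.2 :=
    (continuous_apply _).sub (continuous_apply _)
  rcases lt_trichotomy (x p.1.1 - x p.1.2) 0 with h | h | h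
  · have he : {y : Fin n → ℝ | SameSide (x p.1.1 - x p.1.2) (y p.1.1 - y p.1.2)}
        = {y | y p.1.1 - y p.1.2 < 0} := by
      ext y; constructor
      · rintro (h' | h' | h')
        · exact h'.2
        · exact absurd h'.1 (by linarith)
        · exact absurd h'.1 (by linarith)
      · intro h'; exact Or.inl ⟨h, h'⟩
    rw [he]; exact isOpen_lt hc continuous_const
  · -- x-value equals 0 : the set is empty or whatever; it's {y | SameSide 0 _} = ∅
    have he : {y : Fin n → ℝ | SameSide (x p.1.1 - x p.1.2) (y p.1.1 - y p.1.2)} = ∅ := by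
      ext y
      simp only [Set.mem_setOf_eq, Set.mem_empty_iff_false, iff_false]
      rintro (h' | h' | h') <;> first | linarith [h'.1] | linarith [h'.1, h'.2.1]
    rw [he]; exact isOpen_empty
  · rcases lt_trichotomy (x p.1.1 - x p.1.2) 1 with h1 | h1 | h1
    · have he : {y : Fin n → ℝ | SameSide (x p.1.1 - x p.1.2) (y p.1.1 - y p.1.2)}
          = {y | 0 < y p.1.1 - y p.1.2} ∩ {y | y p.1.1 - y p.1.2 < 1} := by
        ext y; constructor
        · rintro (h' | h' | h')
          · exact absurd h'.1 (by linarith)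
          · exact ⟨h'.2.2.1, h'.2.2.2⟩
          · exact absurd h'.1 (by linarith)
        · rintro ⟨hy1, hy2⟩; exact Or.inr (Or.inl ⟨h, h1, hy1, hy2⟩)
      rw [he]
      exact (isOpen_lt continuous_const hc).inter (isOpen_lt hc continuous_const)
    · have he : {y : Fin n → ℝ | SameSide (x p.1.1 - x p.1.2) (y p.1.1 - y p.1.2)} = ∅ := by
        ext y
        simp only [Set.mem_setOf_eq, Set.mem_empty_iff_false, iff_false]
        rintro (h' | h' | h') <;> first | linarith [h'.1] | linarith [h'.2.1] | linarith [h'.1]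
      rw [he]; exact isOpen_empty
    · have he : {y : Fin n → ℝ | SameSide (x p.1.1 - x p.1.2) (y p.1.1 - y p.1.2)}
          = {y | 1 < y p.1.1 - y p.1.2} := by
        ext y; constructor
        · rintro (h' | h' | h')
          · exact absurd h'.1 (by linarith)
          · exact absurd h'.2.1 (by linarith)
          · exact h'.2
        · intro h'; exact Or.inr (Or.inr ⟨h1, h'⟩)
      rw [he]; exact isOpen_lt continuous_const hc

/-- The main region lemma: the connected component of `x` in the complement is the cell of `x`. -/
lemma component_eq_cell {x : Fin n → ℝ} (hx : x ∈ shiComplementA n) :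
    connectedComponentIn (shiComplementA n) x = cell x := by
  apply Set.Subset.antisymm
  · -- component ⊆ cell
    intro y hy i j hij
    set C := connectedComponentIn (shiComplementA n) x with hC
    have hpre : IsPreconnected C := isPreconnected_connectedComponentIn
    have hsub : C ⊆ shiComplementA n := connectedComponentIn_subset _ _
    have hxC : x ∈ C := mem_connectedComponentIn hx
    have hcont : Continuous fun z : Fin n → ℝ => z i - z j :=
      (continuous_apply _).sub (continuous_apply _)
    have himg : IsPreconnected ((fun z : Fin n → ℝ => z i - z j) '' C) :=
      hpre.image _ hcont.continuousOn
    have hoc : Set.OrdConnected ((fun z : Fin n → ℝ => z i - z j) '' C) :=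
      himg.ordConnected
    have hximg : x i - x j ∈ (fun z : Fin n → ℝ => z i - z j) '' C := ⟨x, hxC, rfl⟩
    have hyimg : y i - y j ∈ (fun z : Fin n → ℝ => z i - z j) '' C := ⟨y, hy, rfl⟩
    have hnozero : (0:ℝ) ∉ (fun z : Fin n → ℝ => z i - z j) '' C := by
      rintro ⟨z, hz, hz0⟩
      exact (hsub hz i j hij).1 hz0
    have hnoone : (1:ℝ) ∉ (fun z : Fin n → ℝ => z i - z j) '' C := by
      rintro ⟨z, hz, hz1⟩
      exact (hsub hz i j hij).2 hz1
    set a := x i - x j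
    set b := y i - y j
    have ha0 : a ≠ 0 := (hx i j hij).1
    have ha1 : a ≠ 1 := (hx i j hij).2
    -- establish SameSide a b via ordConnected
    rcases lt_trichotomy a 0 with h | h | h
    · left
      refine ⟨h, ?_⟩
      by_contra hb
      push_neg at hb
      have : (0:ℝ) ∈ Set.Icc a b := ⟨le_of_lt h, hb⟩
      exact hnozero (hoc.out hximg hyimg this)
    · exact absurd h ha0
    · rcases lt_trichotomy a 1 with h1 | h1 | h1
      · right; left
        refine ⟨h, h1, ?_, ?_⟩
        · by_contra hb
          push_neg at hb
          have : (0:ℝ) ∈ Set.Icc b a := ⟨hb, le_of_lt h⟩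
          exact hnozero (hoc.out hyimg hximg this)
        · by_contra hb
          push_neg at hb
          have : (1:ℝ) ∈ Set.Icc a b := ⟨le_of_lt h1, hb⟩
          exact hnoone (hoc.out hximg hyimg this)
      · exact absurd h1 ha1
      · right; right
        refine ⟨h1, ?_⟩
        by_contra hb
        push_neg at hb
        have : (1:ℝ) ∈ Set.Icc b a := ⟨hb, le_of_lt h1⟩
        exact hnoone (hoc.out hyimg hximg this)
  · exact (convex_cell x).isPreconnected.subset_connectedComponentIn (mem_cell_self hx)
      cell_subset_comp



attribute [local instance] Classical.propDecidable

/-! ### The stair recursion -/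

def stair (K : ℕ → ℕ) (t : ℕ → Bool) : ℕ → ℝ
  | 0 => 0
  | (b+1) =>
    if t (b+1) then stair K t (min (K (b+1) - 1) b) + 1
    else if K (b+1) = b + 1 then stair K t b + 2
    else (max (stair K t b)
          (if K (b+1) = 0 then stair K t b else stair K t (min (K (b+1) - 1) b) + 1)
          + (stair K t (min (K (b+1)) b) + 1)) / 2
  decreasing_by all_goals omega

structure StairHyp (K : ℕ → ℕ) (t : ℕ → Bool) : Prop where
  mono : Monotone K
  le : ∀ b, K b ≤ b
  tight : ∀ b, t b = true → 1 ≤ K b ∧ K (b-1) < K b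
  t0 : t 0 = false

theorem stair_master {K : ℕ → ℕ} {t : ℕ → Bool} (H : StairHyp K t) : ∀ b : ℕ,
    (∀ a, a < b → stair K t a < stair K t b) ∧
    (∀ a, a + (if t b then 1 else 0) < K b → 1 < stair K t b - stair K t a) ∧
    (t b = true → stair K t b - stair K t (K b - 1) = 1) ∧
    (∀ a, K b ≤ a → a < b → stair K t b - stair K t a < 1) := by
  intro b
  induction b using Nat.strong_induction_on with
  | _ b IH =>
    match b with
    | 0 =>
      refine ⟨?_, ?_, ?_, ?_⟩
      · intro a ha; omega
      · intro a ha; have := H.le 0; omega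
      · intro h; rw [H.t0] at h; cases h
      · intro a h1 h2; omega
    | (c+1) =>
      -- abbreviations
      set s := stair K t with hs
      have hsle : ∀ a c', a ≤ c' → c' ≤ c → s a ≤ s c' := by
        intro a c' hac hcc
        rcases eq_or_lt_of_le hac with h | h
        · exact le_of_eq (by rw [h])
        · exact le_of_lt ((IH c' (by omega)).1 a h)
      have hKc1 := H.le (c+1)
      by_cases htc : t (c+1) = true
      · -- tight branch
        obtain ⟨hK1, hKlt⟩ := H.tight (c+1) htc
        simp only [Nat.add_sub_cancel] at hKlt
        have ha0 : K (c+1) - 1 ≤ c := by omega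
        have hmin : min (K (c+1) - 1) c = K (c+1) - 1 := by omega
        have hval : s (c+1) = s (K (c+1) - 1) + 1 := by
          rw [hs]; rw [stair]; rw [htc]; simp only [if_true, hmin]
        have hKca : K c ≤ K (c+1) - 1 := by omega
        have hsc : s c < s (K (c+1) - 1) + 1 := by
          rcases eq_or_lt_of_le ha0 with h | h
          · rw [h]; linarith
          · have := (IH c (by omega)).2.2.2 (K (c+1) - 1) hKca h
            linarith
        refine ⟨?_, ?_, ?_, ?_⟩
        · intro a ha
          have : s a ≤ s c := hsle a c (by omega) le_rfl
          rw [hval]; linarith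
        · intro a ha
          rw [htc] at ha
          have ha' : a + 1 < K (c+1) := by simpa using ha
          have haa : a < K (c+1) - 1 := by omega
          have : s a < s (K (c+1) - 1) := (IH (K (c+1) - 1) (by omega)).1 a haa
          rw [hval]; linarith
        · intro _
          rw [hval]; ring
        · intro a h1 h2
          have : s (K (c+1) - 1) < s a := (IH a (by omega)).1 (K (c+1) - 1) (by omega)
          rw [hval]; linarith
      · -- strict branches
        have htc' : t (c+1) = false := by
          cases h : t (c+1); rfl; exact absurd h htc
        by_cases hKfull : K (c+1) = c + 1
        · have hval : s (c+1) = s c + 2 := by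
            rw [hs]; rw [stair]; rw [htc']; simp only [Bool.false_eq_true, if_false, hKfull,
              if_true]
          refine ⟨?_, ?_, ?_, ?_⟩
          · intro a ha
            have : s a ≤ s c := hsle a c (by omega) le_rfl
            rw [hval]; linarith
          · intro a ha
            have : s a ≤ s c := hsle a c (by omega) le_rfl
            rw [hval]; linarith
          · intro h; rw [htc'] at h; cases h
          · intro a h1 h2; omega
        · -- middle branch, K(c+1) ≤ c
          have hKc : K (c+1) ≤ c := by omega
          have hmin1 : min (K (c+1)) c = K (c+1) := by omega
          have hmin2 : min (K (c+1) - 1) c = K (c+1) - 1 := by omega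
          set L := if K (c+1) = 0 then s c else s (K (c+1) - 1) + 1 with hL
          have hval : s (c+1) = (max (s c) L + (s (K (c+1)) + 1)) / 2 := by
            rw [hs]; rw [stair]; rw [htc']
            simp only [Bool.false_eq_true, if_false, hKfull, hmin1, hmin2, hL]
            rfl
          -- upper bound facts
          have hupper1 : s c < s (K (c+1)) + 1 := by
            rcases eq_or_lt_of_le hKc with h | h
            · rw [h]; linarith
            · have hKcc : K c ≤ K (c+1) := H.mono (by omega)
              have := (IH c (by omega)).2.2.2 (K (c+1)) hKcc h
              linarith
          have hupper2 : L < s (K (c+1)) + 1 := by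
            rw [hL]
            by_cases h0 : K (c+1) = 0
            · rw [if_pos h0]; exact hupper1
            · simp only [h0, if_false]
              have : s (K (c+1) - 1) < s (K (c+1)) :=
                (IH (K (c+1)) (by omega)).1 (K (c+1) - 1) (by omega)
              linarith
          have hlow : max (s c) L < s (K (c+1)) + 1 := max_lt hupper1 hupper2
          have hgt : max (s c) L < s (c+1) := by rw [hval]; linarith [le_max_left (s c) L]
          have hlt : s (c+1) < s (K (c+1)) + 1 := by rw [hval]; linarith [le_max_right (s c) L]
          refine ⟨?_, ?_, ?_, ?_⟩
          · intro a ha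
            have h1 : s a ≤ s c := hsle a c (by omega) le_rfl
            have h2 := le_max_left (s c) L
            linarith
          · intro a ha
            rw [htc'] at ha; simp only [Bool.false_eq_true, if_false] at ha
            have hK0 : K (c+1) ≠ 0 := by omega
            have hLval : L = s (K (c+1) - 1) + 1 := by rw [hL]; simp [hK0]
            have h1 : s a ≤ s (K (c+1) - 1) := hsle a (K (c+1) - 1) (by omega) (by omega)
            have h2 := le_max_right (s c) L
            linarith [hLval]
          · intro h; rw [htc'] at h; cases h
          · intro a h1 h2
            have : s (K (c+1)) ≤ s a := hsle (K (c+1)) a h1 (by omega)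
            linarith


/-! ### Ranks -/

variable {n : ℕ}

def rk (x : Fin n → ℝ) (i : Fin n) : ℕ := (univ.filter (fun l => x i < x l)).card

lemma rk_lt_rk {x : Fin n → ℝ} {i j : Fin n} (h : x j < x i) : rk x i < rk x j := by
  apply card_lt_card
  constructor
  · intro l hl
    simp only [mem_filter, mem_univ, true_and] at hl ⊢
    linarith
  · intro hsub
    have : i ∈ univ.filter (fun l => x j < x l) := by
      simp only [mem_filter, mem_univ, true_and]; exact h
    have := hsub this
    simp only [mem_filter, mem_univ, true_and] at this
    exact lt_irrefl _ this

lemma rk_lt_n {x : Fin n → ℝ} (i : Fin n) : rk x i < n := by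
  have h1 : univ.filter (fun l => x i < x l) ⊆ univ.erase i := by
    intro l hl
    simp only [mem_filter, mem_univ, true_and] at hl
    simp only [mem_erase, mem_univ, and_true]
    intro he; rw [he] at hl; exact lt_irrefl _ hl
  calc rk x i ≤ (univ.erase i).card := card_le_card h1
    _ < univ.card := card_erase_lt_of_mem (mem_univ i)
    _ = n := card_univ.trans (Fintype.card_fin n)

/-- distinct coordinates -/
def Dis (x : Fin n → ℝ) : Prop := ∀ i j : Fin n, i ≠ j → x i ≠ x j

lemma comp_dis {x : Fin n → ℝ} (hx : x ∈ shiComplementA n) : Dis x := by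
  intro i j hij
  rcases lt_or_gt_of_ne hij with h | h
  · exact fun he => (hx i j h).1 (by rw [he]; ring)
  · intro he
    exact (hx j i h).1 (by rw [he]; ring)

lemma rk_lt_iff {x : Fin n → ℝ} (hd : Dis x) {i j : Fin n} :
    rk x i < rk x j ↔ x j < x i := by
  constructor
  · intro h
    rcases lt_trichotomy (x j) (x i) with h' | h' | h'
    · exact h'
    · exfalso
      have : i = j := by
        by_contra hne
        exact hd j i (fun e => hne e.symm) h'
      rw [this] at h; exact lt_irrefl _ h
    · exact absurd (rk_lt_rk h') (by omega)
  · exact rk_lt_rk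

lemma rk_le_iff {x : Fin n → ℝ} (hd : Dis x) {i j : Fin n} :
    rk x i ≤ rk x j ↔ x j ≤ x i := by
  constructor
  · intro h
    by_contra hc
    push_neg at hc
    exact absurd (rk_lt_rk hc) (by omega)
  · intro h
    rcases eq_or_lt_of_le h with h' | h'
    · have : j = i := by
        by_contra hne
        exact hd j i hne h'
      rw [this]
    · exact le_of_lt (rk_lt_rk h')

lemma rk_inj {x : Fin n → ℝ} (hd : Dis x) {i j : Fin n} (h : rk x i = rk x j) : i = j := by
  by_contra hne
  rcases lt_or_gt_of_ne (hd i j hne) with h' | h'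
  · exact absurd (rk_lt_rk h') (by omega)
  · exact absurd (rk_lt_rk h') (by omega)

lemma rk_surj {x : Fin n → ℝ} (hd : Dis x) : ∀ b : ℕ, b < n → ∃ i, rk x i = b := by
  have hinj : Function.Injective (fun i => (⟨rk x i, rk_lt_n i⟩ : Fin n)) := by
    intro i j h
    simp only [Fin.mk.injEq] at h
    exact rk_inj hd h
  have hsurj := Finite.surjective_of_injective hinj
  intro b hb
  obtain ⟨i, hi⟩ := hsurj ⟨b, hb⟩
  exact ⟨i, by simpa [Fin.ext_iff] using hi⟩

/-! ### The staircase count -/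

/-- `p` is narrower than or equal to `q` (w.r.t. the values of `x`) -/
def narrEq (x : Fin n → ℝ) (p q : Fin n × Fin n) : Prop :=
  x p.1 ≤ x q.1 ∧ x q.2 ≤ x p.2

def Kf (x : Fin n → ℝ) (S : Fin n × Fin n → Prop) (b : ℕ) : ℕ :=
  ((range b).filter (fun a => ∃ p, S p ∧ a ≤ rk x p.1 ∧ rk x p.2 ≤ b)).card

lemma Kf_mono (x : Fin n → ℝ) (S : Fin n × Fin n → Prop) : Monotone (Kf x S) := by
  intro b b' hbb
  unfold Kf
  apply card_le_card
  intro a ha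
  simp only [mem_filter, mem_range] at ha ⊢
  obtain ⟨h1, p, h2, h3, h4⟩ := ha
  exact ⟨by omega, p, h2, h3, by omega⟩

lemma Kf_le (x : Fin n → ℝ) (S : Fin n × Fin n → Prop) (b : ℕ) : Kf x S b ≤ b := by
  unfold Kf
  calc ((range b).filter (fun a => ∃ p, S p ∧ a ≤ rk x p.1 ∧ rk x p.2 ≤ b)).card ≤ (range b).card := card_le_card (filter_subset _ _)
    _ = b := card_range b

lemma prefix_eq_range {b : ℕ} {M : Finset ℕ} (hsub : M ⊆ range b)
    (hdc : ∀ a ∈ M, ∀ a', a' ≤ a → a' ∈ M) : M = range M.card := by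
  have h1 : ∀ a ∈ M, a < M.card := by
    intro a ha
    have : range (a+1) ⊆ M := by
      intro a' ha'
      simp only [mem_range] at ha'
      exact hdc a ha a' (by omega)
    calc a < a + 1 := by omega
      _ = (range (a+1)).card := (card_range _).symm
      _ ≤ M.card := card_le_card this
  have h2 : M ⊆ range M.card := by
    intro a ha; simp only [mem_range]; exact h1 a ha
  exact eq_of_subset_of_card_le h2 (le_of_eq (card_range _))

lemma Kf_lt_iff {x : Fin n → ℝ} {S : Fin n × Fin n → Prop} {a b : ℕ} (hab : a < b) :
    a < Kf x S b ↔ ∃ p, S p ∧ a ≤ rk x p.1 ∧ rk x p.2 ≤ b := by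
  unfold Kf
  set M := (range b).filter (fun a => ∃ p, S p ∧ a ≤ rk x p.1 ∧ rk x p.2 ≤ b) with hM
  have hsub : M ⊆ range b := filter_subset _ _
  have hdc : ∀ c ∈ M, ∀ c', c' ≤ c → c' ∈ M := by
    intro c hc c' hcc
    simp only [hM, mem_filter, mem_range] at hc ⊢
    obtain ⟨h1, p, h2, h3, h4⟩ := hc
    exact ⟨by omega, p, h2, by omega, h4⟩
  have heq : M = range M.card := prefix_eq_range hsub hdc
  constructor
  · intro h
    have : a ∈ M := by rw [heq]; simp only [mem_range]; exact h
    simp only [hM, mem_filter] at this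
    exact this.2
  · intro h
    have : a ∈ M := by simp only [hM, mem_filter, mem_range]; exact ⟨hab, h⟩
    rw [heq] at this
    simpa using this

/-! ### Pair predicates -/

def Ppair (x : Fin n → ℝ) (p : Fin n × Fin n) : Prop := p.1 < p.2 ∧ x p.2 < x p.1

def FarP (x : Fin n → ℝ) (p : Fin n × Fin n) : Prop := Ppair x p ∧ 1 < x p.1 - x p.2

def CloseP (x : Fin n → ℝ) (p : Fin n × Fin n) : Prop := Ppair x p ∧ x p.1 - x p.2 < 1

def MinFar (x : Fin n → ℝ) (p : Fin n × Fin n) : Prop :=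
  FarP x p ∧ ∀ q, FarP x q → narrEq x q p → q = p

def MaxClose (x : Fin n → ℝ) (p : Fin n × Fin n) : Prop :=
  CloseP x p ∧ ∀ q, CloseP x q → narrEq x p q → q = p

/-! ### Realization -/

def rpt (x : Fin n → ℝ) (S : Fin n × Fin n → Prop) (t : ℕ → Bool) : Fin n → ℝ :=
  fun i => - stair (Kf x S) t (rk x i)

lemma rpt_strict {x : Fin n → ℝ} (hd : Dis x) (S : Fin n × Fin n → Prop) :
    (∀ i j, x i < x j ↔ rpt x S (fun _ => false) i < rpt x S (fun _ => false) j) ∧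
    (∀ p : Fin n × Fin n, Ppair x p →
      (1 < rpt x S (fun _ => false) p.1 - rpt x S (fun _ => false) p.2 ↔
        ∃ q, S q ∧ narrEq x q p)) ∧
    (∀ p : Fin n × Fin n, Ppair x p → ¬(∃ q, S q ∧ narrEq x q p) →
      (0 < rpt x S (fun _ => false) p.1 - rpt x S (fun _ => false) p.2 ∧
       rpt x S (fun _ => false) p.1 - rpt x S (fun _ => false) p.2 < 1)) := by
  set t : ℕ → Bool := fun _ => false with hT
  have H : StairHyp (Kf x S) t := by
    refine ⟨Kf_mono x S, Kf_le x S, ?_, rfl⟩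
    intro b hb; rw [hT] at hb; cases hb
  set s := stair (Kf x S) t with hs
  have M := stair_master H
  have hsm : StrictMono s := fun a b h => (M b).1 a h
  have horder : ∀ i j : Fin n, x i < x j ↔ rpt x S t i < rpt x S t j := by
    intro i j
    have h1 : x i < x j ↔ rk x j < rk x i := (rk_lt_iff hd).symm
    rw [h1]
    unfold rpt
    rw [← hs]
    constructor
    · intro h; have := hsm h; linarith
    · intro h
      have : s (rk x j) < s (rk x i) := by linarith
      exact hsm.lt_iff_lt.mp this
  have hgap : ∀ p : Fin n × Fin n, Ppair x p →
      rpt x S t p.1 - rpt x S t p.2 = s (rk x p.2) - s (rk x p.1) := by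
    intro p hp; unfold rpt; rw [← hs]; ring
  have hab : ∀ p : Fin n × Fin n, Ppair x p → rk x p.1 < rk x p.2 := by
    intro p hp; exact (rk_lt_iff hd).mpr hp.2
  have hiff : ∀ p : Fin n × Fin n, Ppair x p →
      (1 < rpt x S t p.1 - rpt x S t p.2 ↔ ∃ q, S q ∧ narrEq x q p) := by
    intro p hp
    rw [hgap p hp]
    set a := rk x p.1
    set b := rk x p.2
    have hab' : a < b := hab p hp
    have hKiff := Kf_lt_iff (x := x) (S := S) hab'
    have htrans : (∃ q, S q ∧ a ≤ rk x q.1 ∧ rk x q.2 ≤ b) ↔ ∃ q, S q ∧ narrEq x q p := by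
      constructor
      · rintro ⟨q, hq, h1, h2⟩
        exact ⟨q, hq, (rk_le_iff hd).mp h1, (rk_le_iff hd).mp h2⟩
      · rintro ⟨q, hq, h1, h2⟩
        exact ⟨q, hq, (rk_le_iff hd).mpr h1, (rk_le_iff hd).mpr h2⟩
    rw [← htrans, ← hKiff]
    constructor
    · intro h
      by_contra hc
      push_neg at hc
      have := (M b).2.2.2 a hc hab'
      linarith
    · intro h
      have := (M b).2.1 a (by simpa [hT] using h)
      linarith
  refine ⟨horder, hiff, ?_⟩
  intro p hp hne
  rw [hgap p hp]
  constructor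
  · have := hsm (hab p hp); linarith
  · have h1 := (hiff p hp)
    rw [hgap p hp] at h1
    by_contra hc
    push_neg at hc
    rcases eq_or_lt_of_le hc with h | h
    · -- gap = 1 impossible: either >1 or <1 by trichotomy on a < K b
      set a := rk x p.1
      set b := rk x p.2
      have hab' : a < b := hab p hp
      by_cases hk : a < Kf x S b
      · have := (M b).2.1 a (by simpa [hT] using hk); linarith
      · push_neg at hk
        have := (M b).2.2.2 a hk hab'; linarith
    · exact hne (h1.mp h)

lemma rpt_tight {x : Fin n → ℝ} (hd : Dis x) (S : Fin n × Fin n → Prop)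
    (e : Fin n × Fin n) (heP : Ppair x e)
    (hNF : ∀ p, S p ∨ p = e → narrEq x p e → p = e) :
    let S' := fun p => S p ∨ p = e
    let t : ℕ → Bool := fun b => decide (b = rk x e.2)
    (∀ i j, x i < x j ↔ rpt x S' t i < rpt x S' t j) ∧
    (rpt x S' t e.1 - rpt x S' t e.2 = 1) ∧
    (∀ p : Fin n × Fin n, Ppair x p → p ≠ e →
      (1 < rpt x S' t p.1 - rpt x S' t p.2 ↔ ∃ q, S' q ∧ narrEq x q p)) ∧
    (∀ p : Fin n × Fin n, Ppair x p → p ≠ e → ¬(∃ q, S' q ∧ narrEq x q p) →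
      (0 < rpt x S' t p.1 - rpt x S' t p.2 ∧ rpt x S' t p.1 - rpt x S' t p.2 < 1)) := by
  intro S' t
  set a0 := rk x e.1 with ha0
  set b0 := rk x e.2 with hb0
  have hab0 : a0 < b0 := (rk_lt_iff hd).mpr heP.2
  have htb : ∀ b, t b = true ↔ b = b0 := by
    intro b; simp [t, hb0]
  -- K at b0
  have hKlow : a0 < Kf x S' b0 := by
    rw [Kf_lt_iff hab0]
    exact ⟨e, Or.inr rfl, le_rfl, le_rfl⟩
  have hKhigh : Kf x S' b0 ≤ a0 + 1 := by
    by_contra hc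
    push_neg at hc
    have hb' : a0 + 1 < b0 := lt_of_lt_of_le hc (Kf_le x S' b0)
    obtain ⟨q, hq, h1, h2⟩ := (Kf_lt_iff hb').mp hc
    have hqe : q = e := by
      apply hNF q hq
      constructor
      · have : rk x e.1 ≤ rk x q.1 := by omega
        exact (rk_le_iff hd).mp this
      · exact (rk_le_iff hd).mp h2
    rw [hqe] at h1
    omega
  have hKb0 : Kf x S' b0 = a0 + 1 := by omega
  have hKprev : Kf x S' (b0 - 1) ≤ a0 := by
    by_contra hc
    push_neg at hc
    by_cases h : a0 < b0 - 1
    · obtain ⟨q, hq, h1, h2⟩ := (Kf_lt_iff h).mp hc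
      have hqe : q = e := by
        apply hNF q hq
        constructor
        · exact (rk_le_iff hd).mp h1
        · have : rk x q.2 ≤ rk x e.2 := by omega
          exact (rk_le_iff hd).mp this
      rw [hqe] at h2
      omega
    · have := Kf_le x S' (b0 - 1)
      omega
  have H : StairHyp (Kf x S') t := by
    refine ⟨Kf_mono x S', Kf_le x S', ?_, ?_⟩
    · intro b hb
      rw [htb] at hb
      rw [hb]
      omega
    · have : ¬ ((0:ℕ) = b0) := by omega
      simp [t, this]
      exact this
  set s := stair (Kf x S') t with hs
  have M := stair_master H
  have hsm : StrictMono s := fun a b h => (M b).1 a h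
  have horder : ∀ i j : Fin n, x i < x j ↔ rpt x S' t i < rpt x S' t j := by
    intro i j
    have h1 : x i < x j ↔ rk x j < rk x i := (rk_lt_iff hd).symm
    rw [h1]
    unfold rpt
    rw [← hs]
    constructor
    · intro h; have := hsm h; linarith
    · intro h
      have : s (rk x j) < s (rk x i) := by linarith
      exact hsm.lt_iff_lt.mp this
  have hgap : ∀ p : Fin n × Fin n, rpt x S' t p.1 - rpt x S' t p.2
      = s (rk x p.2) - s (rk x p.1) := by
    intro p; unfold rpt; rw [← hs]; ring
  have hab : ∀ p : Fin n × Fin n, Ppair x p → rk x p.1 < rk x p.2 := by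
    intro p hp; exact (rk_lt_iff hd).mpr hp.2
  have htb0 : t b0 = true := by rw [htb]
  refine ⟨horder, ?_, ?_, ?_⟩
  · -- tight pair has gap exactly one
    rw [hgap e]
    have := (M b0).2.2.1 htb0
    rw [hKb0] at this
    simpa using this
  · -- characterization of far pairs
    intro p hp hne
    rw [hgap p]
    set a := rk x p.1 with haa
    set b := rk x p.2 with hbb
    have hab' : a < b := hab p hp
    by_cases hbeq : b = b0
    · -- the tight row
      have hj : p.2 = e.2 := rk_inj hd (by simpa only [← hbb, ← hb0] using hbeq)
      have hia : a ≠ a0 := by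
        intro h
        exact hne (Prod.ext_iff.mpr ⟨rk_inj hd (by simpa only [← haa, ← ha0] using h), hj⟩)
      have hxj : x p.2 = x e.2 := by rw [hj]
      constructor
      · intro hgap1
        have haa0 : a < a0 := by
          by_contra hc
          push_neg at hc
          have hc' : a0 < a := by omega
          have hle : Kf x S' b0 ≤ a := by omega
          have := (M b).2.2.2 a (by rw [hbeq]; exact hle) hab'
          linarith
        refine ⟨e, Or.inr rfl, ?_, le_of_eq hxj⟩
        exact (rk_le_iff hd).mp (by omega)
      · rintro ⟨q, hq, hn1, hn2⟩
        have hq2 : rk x q.2 ≤ b0 := by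
          have : x e.2 ≤ x q.2 := le_of_eq hxj.symm |>.trans hn2
          exact (rk_le_iff hd).mpr this
        have hq1 : a ≤ rk x q.1 := (rk_le_iff hd).mpr hn1
        have hqa0 : rk x q.1 ≤ a0 := by
          by_contra hc
          push_neg at hc
          have hqe : q = e := by
            apply hNF q hq
            exact ⟨(rk_le_iff hd).mp (by omega), (rk_le_iff hd).mp hq2⟩
          rw [hqe] at hc
          omega
        have haa0 : a < a0 := by
          rcases eq_or_lt_of_le (hq1.trans hqa0) with h | h
          · exact absurd h hia
          · exact h
        have := (M b).2.1 a (by rw [hbeq, htb0, hKb0]; simp; omega)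
        linarith
    · -- other rows: t b = false
      have htbf : t b = false := by
        have : ¬ (b = b0) := hbeq
        simp [t, ← hb0, this]
      have hKiff := Kf_lt_iff (x := x) (S := S') hab'
      have htrans : (∃ q, S' q ∧ a ≤ rk x q.1 ∧ rk x q.2 ≤ b) ↔ ∃ q, S' q ∧ narrEq x q p := by
        constructor
        · rintro ⟨q, hq, h1, h2⟩
          exact ⟨q, hq, (rk_le_iff hd).mp h1, (rk_le_iff hd).mp h2⟩
        · rintro ⟨q, hq, h1, h2⟩
          exact ⟨q, hq, (rk_le_iff hd).mpr h1, (rk_le_iff hd).mpr h2⟩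
      rw [← htrans, ← hKiff]
      constructor
      · intro h
        by_contra hc
        push_neg at hc
        have := (M b).2.2.2 a hc hab'
        linarith
      · intro h
        have := (M b).2.1 a (by rw [htbf]; simpa using h)
        linarith
  · -- close pairs
    intro p hp hne hnex
    rw [hgap p]
    have hab' : rk x p.1 < rk x p.2 := hab p hp
    constructor
    · have := hsm hab'; linarith
    · set a := rk x p.1 with haa
      set b := rk x p.2 with hbb
      by_cases hbeq : b = b0
      · have hj : p.2 = e.2 := rk_inj hd (by simpa only [← hbb, ← hb0] using hbeq)
        have hia : a ≠ a0 := by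
          intro h
          exact hne (Prod.ext_iff.mpr ⟨rk_inj hd (by simpa only [← haa, ← ha0] using h), hj⟩)
        have hxj : x p.2 = x e.2 := by rw [hj]
        have haa0 : ¬ (a < a0) := by
          intro hc
          exact hnex ⟨e, Or.inr rfl, (rk_le_iff hd).mp (by omega), le_of_eq hxj⟩
        have hle : Kf x S' b0 ≤ a := by omega
        have := (M b).2.2.2 a (by rw [hbeq]; exact hle) hab'
        linarith
      · have htbf : t b = false := by
          have : ¬ (b = b0) := hbeq
          simp [t, ← hb0, this]
        by_cases hk : a < Kf x S' b
        · exfalso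
          obtain ⟨q, hq, h1, h2⟩ := (Kf_lt_iff hab').mp hk
          exact hnex ⟨q, hq, (rk_le_iff hd).mp h1, (rk_le_iff hd).mp h2⟩
        · push_neg at hk
          have := (M b).2.2.2 a hk hab'
          linarith

/-! ### Cells and sides -/

lemma cell_lt {x : Fin n → ℝ} {l m : Fin n} (h : x l < x m) :
    ∀ y ∈ cell x, y l < y m := by
  intro y hy
  rcases lt_trichotomy l m with hlm | hlm | hlm
  · have := hy l m hlm
    rcases this with h' | h' | h'
    · linarith [h'.2]
    · linarith [h'.1]
    · linarith [h'.1]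
  · rw [hlm] at h; exact absurd h (lt_irrefl _)
  · have := hy m l hlm
    rcases this with h' | h' | h'
    · linarith [h'.1]
    · linarith [h'.2.2.1]
    · linarith [h'.2]

lemma cell_le {x : Fin n → ℝ} (hd : Dis x) {l m : Fin n} (h : x l ≤ x m) :
    ∀ y ∈ cell x, y l ≤ y m := by
  intro y hy
  rcases eq_or_lt_of_le h with h' | h'
  · have : l = m := by
      by_contra hc
      exact hd l m hc h'
    rw [this]
  · exact le_of_lt (cell_lt h' y hy)

lemma cell_far {x : Fin n → ℝ} {p : Fin n × Fin n} (hf : FarP x p) :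
    ∀ y ∈ cell x, 1 < y p.1 - y p.2 := by
  intro y hy
  have := hy p.1 p.2 hf.1.1
  rcases this with h' | h' | h'
  · linarith [h'.1, hf.2]
  · linarith [h'.2.1, hf.2]
  · exact h'.2

lemma cell_closeP {x : Fin n → ℝ} {p : Fin n × Fin n} (hc : CloseP x p) :
    ∀ y ∈ cell x, 0 < y p.1 - y p.2 ∧ y p.1 - y p.2 < 1 := by
  intro y hy
  have := hy p.1 p.2 hc.1.1
  rcases this with h' | h' | h'
  · exfalso; linarith [h'.1, hc.1.2]
  · exact ⟨h'.2.2.1, h'.2.2.2⟩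
  · exfalso; linarith [h'.1, hc.2]

lemma isOpen_sameSide_fun (c : ℝ) (a b : Fin n) :
    IsOpen {w : Fin n → ℝ | SameSide c (w a - w b)} := by
  have hc : Continuous fun w : Fin n → ℝ => w a - w b :=
    (continuous_apply _).sub (continuous_apply _)
  rcases lt_trichotomy c 0 with h | h | h
  · have he : {w : Fin n → ℝ | SameSide c (w a - w b)} = {w | w a - w b < 0} := by
      ext w; constructor
      · rintro (h' | h' | h')
        · exact h'.2
        · exact absurd h'.1 (by linarith)
        · exact absurd h'.1 (by linarith)
      · intro h'; exact Or.inl ⟨h, h'⟩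
    rw [he]; exact isOpen_lt hc continuous_const
  · have he : {w : Fin n → ℝ | SameSide c (w a - w b)} = ∅ := by
      ext w
      simp only [Set.mem_setOf_eq, Set.mem_empty_iff_false, iff_false]
      rintro (h' | h' | h') <;> first | linarith [h'.1] | skip
    rw [he]; exact isOpen_empty
  · rcases lt_trichotomy c 1 with h1 | h1 | h1
    · have he : {w : Fin n → ℝ | SameSide c (w a - w b)}
          = {w | 0 < w a - w b} ∩ {w | w a - w b < 1} := by
        ext w; constructor
        · rintro (h' | h' | h')
          · exact absurd h'.1 (by linarith)
          · exact ⟨h'.2.2.1, h'.2.2.2⟩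
          · exact absurd h'.1 (by linarith)
        · rintro ⟨hr1, hr2⟩; exact Or.inr (Or.inl ⟨h, h1, hr1, hr2⟩)
      rw [he]
      exact (isOpen_lt continuous_const hc).inter (isOpen_lt hc continuous_const)
    · have he : {w : Fin n → ℝ | SameSide c (w a - w b)} = ∅ := by
        ext w
        simp only [Set.mem_setOf_eq, Set.mem_empty_iff_false, iff_false]
        rintro (h' | h' | h') <;> first | linarith [h'.1] | linarith [h'.2.1]
      rw [he]; exact isOpen_empty
    · have he : {w : Fin n → ℝ | SameSide c (w a - w b)} = {w | 1 < w a - w b} := by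
        ext w; constructor
        · rintro (h' | h' | h')
          · exact absurd h'.1 (by linarith)
          · exact absurd h'.2.1 (by linarith)
          · exact h'.2
        · intro h'; exact Or.inr (Or.inr ⟨h1, h'⟩)
      rw [he]; exact isOpen_lt continuous_const hc

lemma isOpen_sameSide_real (c : ℝ) : IsOpen {r : ℝ | SameSide c r} := by
  rcases lt_trichotomy c 0 with h | h | h
  · have he : {r : ℝ | SameSide c r} = {r | r < 0} := by
      ext r; constructor
      · rintro (h' | h' | h')
        · exact h'.2
        · exact absurd h'.1 (by linarith)
        · exact absurd h'.1 (by linarith)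
      · intro h'; exact Or.inl ⟨h, h'⟩
    rw [he]; exact isOpen_lt continuous_id continuous_const
  · have he : {r : ℝ | SameSide c r} = ∅ := by
      ext r
      simp only [Set.mem_setOf_eq, Set.mem_empty_iff_false, iff_false]
      rintro (h' | h' | h') <;> first | linarith [h'.1] | skip
    rw [he]; exact isOpen_empty
  · rcases lt_trichotomy c 1 with h1 | h1 | h1
    · have he : {r : ℝ | SameSide c r} = {r | 0 < r} ∩ {r | r < 1} := by
        ext r; constructor
        · rintro (h' | h' | h')
          · exact absurd h'.1 (by linarith)
          · exact ⟨h'.2.2.1, h'.2.2.2⟩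
          · exact absurd h'.1 (by linarith)
        · rintro ⟨hr1, hr2⟩; exact Or.inr (Or.inl ⟨h, h1, hr1, hr2⟩)
      rw [he]
      exact (isOpen_lt continuous_const continuous_id).inter
        (isOpen_lt continuous_id continuous_const)
    · have he : {r : ℝ | SameSide c r} = ∅ := by
        ext r
        simp only [Set.mem_setOf_eq, Set.mem_empty_iff_false, iff_false]
        rintro (h' | h' | h') <;> first | linarith [h'.1] | linarith [h'.2.1]
      rw [he]; exact isOpen_empty
    · have he : {r : ℝ | SameSide c r} = {r | 1 < r} := by
        ext r; constructor
        · rintro (h' | h' | h')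
          · exact absurd h'.1 (by linarith)
          · exact absurd h'.2.1 (by linarith)
          · exact h'.2
        · intro h'; exact Or.inr (Or.inr ⟨h1, h'⟩)
      rw [he]; exact isOpen_lt continuous_const continuous_id

/-- The off-`e` sign conditions form an open set. -/
lemma isOpen_offE (x : Fin n → ℝ) (e : Fin n × Fin n) :
    IsOpen {w : Fin n → ℝ | ∀ l m : Fin n, l < m → (l, m) ≠ e →
      SameSide (x l - x m) (w l - w m)} := by
  have : {w : Fin n → ℝ | ∀ l m : Fin n, l < m → (l, m) ≠ e →
      SameSide (x l - x m) (w l - w m)} =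
      ⋂ (q : {q : Fin n × Fin n // q.1 < q.2 ∧ q ≠ e}),
        {w : Fin n → ℝ | SameSide (x q.1.1 - x q.1.2) (w q.1.1 - w q.1.2)} := by
    ext w
    simp only [Set.mem_iInter, Set.mem_setOf_eq]
    constructor
    · intro h q; exact h q.1.1 q.1.2 q.2.1 q.2.2
    · intro h l m hlm hne; exact h ⟨(l, m), hlm, hne⟩
  rw [this]
  apply isOpen_iInter_of_finite
  intro q
  exact isOpen_sameSide_fun _ _ _

/-- Wall existence from a tight point. -/
lemma isWall_of_tight {x : Fin n → ℝ} {e : Fin n × Fin n} (he12 : e.1 < e.2)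
    (y : Fin n → ℝ) (hy1 : y e.1 - y e.2 = 1)
    (hy2 : ∀ l m : Fin n, l < m → (l, m) ≠ e → SameSide (x l - x m) (y l - y m))
    (hcase : (0 < x e.1 - x e.2 ∧ x e.1 - x e.2 < 1) ∨ 1 < x e.1 - x e.2) :
    IsWall {z : Fin n → ℝ | z e.1 - z e.2 = 1} (cell x) := by
  set O := {w : Fin n → ℝ | ∀ l m : Fin n, l < m → (l, m) ≠ e →
      SameSide (x l - x m) (w l - w m)} with hO
  have hOopen : IsOpen O := isOpen_offE x e
  refine ⟨y, hy1, O, hOopen.mem_nhds hy2, ?_⟩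
  rintro z ⟨hzH, hzO⟩
  -- direction of perturbation
  set c : Fin n := if 0 < x e.1 - x e.2 ∧ x e.1 - x e.2 < 1 then e.2 else e.1 with hc
  set d : Fin n → ℝ := fun l => if l = c then 1 else 0 with hd
  have hne12 : e.1 ≠ e.2 := Fin.ne_of_lt he12
  -- the line through z in direction d
  set φ : ℝ → (Fin n → ℝ) := fun t => z + t • d with hφ
  have hφcont : Continuous φ := by
    rw [hφ]; fun_prop
  have hφ0 : φ 0 = z := by simp [hφ]
  have hpre : φ ⁻¹' O ∈ nhds (0 : ℝ) := by
    apply (hOopen.preimage hφcont).mem_nhds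
    rw [Set.mem_preimage, hφ0]
    exact hzO
  obtain ⟨tb, htb, hball⟩ := Metric.mem_nhds_iff.mp hpre
  rw [Metric.mem_closure_iff]
  intro ε hε
  set tt := min (tb / 2) (min (1 / 2) (ε / 2)) with htt
  have httpos : 0 < tt := by
    apply lt_min (by linarith)
    exact lt_min (by norm_num) (by linarith)
  have htt2 : tt < tb := by
    have : tt ≤ tb / 2 := min_le_left _ _
    linarith
  have htt3 : tt ≤ 1 / 2 := le_trans (min_le_right _ _) (min_le_left _ _)
  have htt4 : tt ≤ ε / 2 := le_trans (min_le_right _ _) (min_le_right _ _)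
  refine ⟨φ tt, ?_, ?_⟩
  · -- φ tt ∈ cell x
    have hmemO : φ tt ∈ O := by
      apply hball
      rw [Metric.mem_ball, Real.dist_eq, sub_zero, abs_of_pos httpos]
      exact htt2
    intro l m hlm
    by_cases hlme : (l, m) = e
    · have hl : l = e.1 := by rw [← hlme]
      have hm : m = e.2 := by rw [← hlme]
      rw [hl, hm]
      have hzval : z e.1 - z e.2 = 1 := hzH
      have hval : φ tt e.1 - φ tt e.2 = 1 + tt * (d e.1 - d e.2) := by
        simp only [hφ, Pi.add_apply, Pi.smul_apply, smul_eq_mul]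
        linarith [hzval]
      rcases hcase with hcl | hfar
      · have hceq : c = e.2 := by rw [hc, if_pos hcl]
        have hdl : d e.1 = 0 := by rw [hd]; simp only [hceq]; rw [if_neg hne12]
        have hdm : d e.2 = 1 := by rw [hd]; simp [hceq]
        rw [hval, hdl, hdm]
        right; left
        refine ⟨hcl.1, hcl.2, by linarith, by linarith⟩
      · have hceq : c = e.1 := by
          rw [hc, if_neg]
          intro hcon
          linarith [hcon.2]
        have hdl : d e.1 = 1 := by rw [hd]; simp [hceq]
        have hdm : d e.2 = 0 := by
          rw [hd]; simp only [hceq]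
          rw [if_neg (fun h => hne12 h.symm)]
        rw [hval, hdl, hdm]
        right; right
        constructor
        · exact hfar
        · linarith
    · exact hmemO l m hlm hlme
  · -- distance
    have hdist : dist z (φ tt) ≤ tt := by
      rw [dist_comm]
      apply dist_pi_le_iff (le_of_lt httpos) |>.mpr
      intro l
      simp only [hφ, Pi.add_apply, Pi.smul_apply, smul_eq_mul, Real.dist_eq]
      have : z l + tt * d l - z l = tt * d l := by ring
      rw [this]
      rw [abs_mul, abs_of_pos httpos]
      have : |d l| ≤ 1 := by
        rw [hd]
        by_cases h : l = c <;> simp [h]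
      nlinarith
    linarith

/-! ### Perturbation helper -/

lemma perturb_eq_contra {p : Fin n → ℝ} {U : Set (Fin n → ℝ)} (hU : U ∈ nhds p)
    {i j cc r : Fin n} (hpH : p i - p j = 1) (hcci : cc ≠ i) (hccj : cc ≠ j) (hccr : cc ≠ r)
    (key : ∀ w : Fin n → ℝ, w i - w j = 1 → w ∈ U → w cc = w r) : False := by
  obtain ⟨ε, hε, hball⟩ := Metric.mem_nhds_iff.mp hU
  set w : Fin n → ℝ := fun l => if l = cc then p l + ε / 2 else p l with hw
  have hwi : w i = p i := by rw [hw]; exact if_neg (fun h => hcci h.symm)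
  have hwj : w j = p j := by rw [hw]; exact if_neg (fun h => hccj h.symm)
  have hwr : w r = p r := by rw [hw]; exact if_neg (fun h => hccr h.symm)
  have hwcc : w cc = p cc + ε / 2 := by rw [hw]; exact if_pos rfl
  have hwU : w ∈ U := by
    apply hball
    rw [Metric.mem_ball]
    have : dist w p ≤ ε / 2 := by
      apply dist_pi_le_iff (by linarith) |>.mpr
      intro l
      rw [hw, Real.dist_eq]
      simp only []
      by_cases h : l = cc
      · rw [if_pos h]
        have : p l + ε / 2 - p l = ε / 2 := by ring
        rw [this, abs_of_nonneg (by linarith)]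
      · rw [if_neg h]
        simp only [sub_self, abs_zero]
        linarith
    linarith
  have h1 : p cc = p r := key p hpH (mem_of_mem_nhds hU)
  have h2 : w cc = w r := key w (by rw [hwi, hwj]; exact hpH) hwU
  rw [hwcc, hwr] at h2
  linarith

lemma closure_cell_le {x : Fin n → ℝ} {l m : Fin n} (h : ∀ y ∈ cell x, y l ≤ y m) :
    ∀ w ∈ closure (cell x), w l ≤ w m := by
  intro w hw
  have hsub : closure (cell x) ⊆ {w : Fin n → ℝ | w l ≤ w m} :=
    closure_minimal h (isClosed_le (continuous_apply l) (continuous_apply m))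
  exact hsub hw

lemma closure_cell_gap_le {x : Fin n → ℝ} {l m : Fin n} (c : ℝ)
    (h : ∀ y ∈ cell x, y l - y m ≤ c) :
    ∀ w ∈ closure (cell x), w l - w m ≤ c := by
  intro w hw
  have hsub : closure (cell x) ⊆ {w : Fin n → ℝ | w l - w m ≤ c} :=
    closure_minimal h (isClosed_le ((continuous_apply l).sub (continuous_apply m))
      continuous_const)
  exact hsub hw

lemma closure_cell_gap_ge {x : Fin n → ℝ} {l m : Fin n} (c : ℝ)
    (h : ∀ y ∈ cell x, c ≤ y l - y m) :
    ∀ w ∈ closure (cell x), c ≤ w l - w m := by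
  intro w hw
  have hsub : closure (cell x) ⊆ {w : Fin n → ℝ | c ≤ w l - w m} :=
    closure_minimal h (isClosed_le continuous_const
      ((continuous_apply l).sub (continuous_apply m)))
  exact hsub hw

/-! ### Tight points with the right data -/

lemma tight_point_max {x : Fin n → ℝ} (hx : x ∈ shiComplementA n) {e : Fin n × Fin n}
    (hmax : MaxClose x e) :
    ∃ y : Fin n → ℝ, y e.1 - y e.2 = 1 ∧
      ∀ l m : Fin n, l < m → (l, m) ≠ e → SameSide (x l - x m) (y l - y m) := by
  have hd : Dis x := comp_dis hx
  have hNF : ∀ p, FarP x p ∨ p = e → narrEq x p e → p = e := by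
    rintro p (hp | rfl) hn
    · exfalso
      have h1 : x p.1 - x p.2 ≤ x e.1 - x e.2 := by
        have := hn.1; have := hn.2; linarith [hn.1, hn.2]
      linarith [hp.2, hmax.1.2]
    · rfl
  obtain ⟨horder, hgap1, hfariff, hclosefact⟩ := rpt_tight hd (FarP x) e hmax.1.1 hNF
  set y := rpt x (fun p => FarP x p ∨ p = e) (fun b => decide (b = rk x e.2)) with hy
  refine ⟨y, hgap1, ?_⟩
  intro l m hlm hne
  rcases lt_trichotomy (x l) (x m) with hv | hv | hv
  · left
    constructor
    · linarith
    · have := (horder l m).mp hv; linarith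
  · exact absurd hv (hd l m (Fin.ne_of_lt hlm))
  · have hP : Ppair x (l, m) := ⟨hlm, hv⟩
    by_cases hfar : 1 < x l - x m
    · right; right
      refine ⟨hfar, ?_⟩
      rw [(hfariff (l, m) hP hne)]
      exact ⟨(l, m), Or.inl ⟨hP, hfar⟩, le_refl _, le_refl _⟩
    · push_neg at hfar
      have hclose : x l - x m < 1 := by
        rcases eq_or_lt_of_le hfar with h | h
        · exfalso; exact (hx l m hlm).2 h
        · exact h
      have hnex : ¬ ∃ q, (FarP x q ∨ q = e) ∧ narrEq x q (l, m) := by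
        rintro ⟨q, hq | heq, hn⟩
        · have : x q.1 - x q.2 ≤ x l - x m := by linarith [hn.1, hn.2]
          linarith [hq.2]
        · subst heq
          exact hne (hmax.2 (l, m) ⟨hP, hclose⟩ hn)
      have := hclosefact (l, m) hP hne hnex
      right; left
      exact ⟨sub_pos.mpr hv, hclose, this.1, this.2⟩

lemma tight_point_min {x : Fin n → ℝ} (hx : x ∈ shiComplementA n) {e : Fin n × Fin n}
    (hmin : MinFar x e) :
    ∃ y : Fin n → ℝ, y e.1 - y e.2 = 1 ∧
      ∀ l m : Fin n, l < m → (l, m) ≠ e → SameSide (x l - x m) (y l - y m) := by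
  have hd : Dis x := comp_dis hx
  have hNF : ∀ p, FarP x p ∨ p = e → narrEq x p e → p = e := by
    rintro p (hp | rfl) hn
    · exact hmin.2 p hp hn
    · rfl
  obtain ⟨horder, hgap1, hfariff, hclosefact⟩ := rpt_tight hd (FarP x) e hmin.1.1 hNF
  set y := rpt x (fun p => FarP x p ∨ p = e) (fun b => decide (b = rk x e.2)) with hy
  refine ⟨y, hgap1, ?_⟩
  intro l m hlm hne
  rcases lt_trichotomy (x l) (x m) with hv | hv | hv
  · left
    constructor
    · linarith
    · have := (horder l m).mp hv; linarith
  · exact absurd hv (hd l m (Fin.ne_of_lt hlm))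
  · have hP : Ppair x (l, m) := ⟨hlm, hv⟩
    by_cases hfar : 1 < x l - x m
    · right; right
      refine ⟨hfar, ?_⟩
      rw [(hfariff (l, m) hP hne)]
      exact ⟨(l, m), Or.inl ⟨hP, hfar⟩, le_refl _, le_refl _⟩
    · push_neg at hfar
      have hclose : x l - x m < 1 := by
        rcases eq_or_lt_of_le hfar with h | h
        · exfalso; exact (hx l m hlm).2 h
        · exact h
      have hnex : ¬ ∃ q, (FarP x q ∨ q = e) ∧ narrEq x q (l, m) := by
        rintro ⟨q, hq | heq, hn⟩
        · have : x q.1 - x q.2 ≤ x l - x m := by linarith [hn.1, hn.2]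
          linarith [hq.2]
        · subst heq
          have : x q.1 - x q.2 ≤ x l - x m := by linarith [hn.1, hn.2]
          linarith [hmin.1.2]
      have := hclosefact (l, m) hP hne hnex
      right; left
      exact ⟨sub_pos.mpr hv, hclose, this.1, this.2⟩

/-! ### Characterization of ceilings and floors -/

theorem ceiling_iff {x : Fin n → ℝ} (hx : x ∈ shiComplementA n) {i j : Fin n} (hij : i < j) :
    IsCeilingH (fun z => z i - z j) (cell x) ↔ MaxClose x (i, j) := by
  have hd : Dis x := comp_dis hx
  constructor
  · rintro ⟨⟨p, hpH, U, hU, hsub⟩, hside⟩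
    have hpH' : p i - p j = 1 := hpH
    have hxmem : x ∈ cell x := mem_cell_self hx
    have hgapx : x i - x j < 1 := hside x hxmem
    have hpcl : p ∈ closure (cell x) := hsub ⟨hpH, mem_of_mem_nhds hU⟩
    rcases lt_trichotomy (x i) (x j) with hv | hv | hv
    · exfalso
      have hle : ∀ y ∈ cell x, y i ≤ y j := fun y hy => le_of_lt (cell_lt hv y hy)
      have := closure_cell_le hle p hpcl
      linarith
    · exact absurd hv (hd i j (Fin.ne_of_lt hij))
    · have hcp : CloseP x (i, j) := ⟨⟨hij, hv⟩, hgapx⟩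
      refine ⟨hcp, ?_⟩
      intro q hq hn
      by_contra hqne
      -- all points of H ∩ U are in the closure and pinched
      have key : ∀ w : Fin n → ℝ, w i - w j = 1 → w ∈ U → w q.1 = w i ∧ w q.2 = w j := by
        intro w hwH hwU
        have hwcl : w ∈ closure (cell x) := hsub ⟨hwH, hwU⟩
        have c1 : w q.1 - w q.2 ≤ 1 :=
          closure_cell_gap_le 1 (fun y hy => le_of_lt (cell_closeP hq y hy).2) w hwcl
        have c2 : w i ≤ w q.1 := closure_cell_le
          (fun y hy => cell_le hd hn.1 y hy) w hwcl
        have c3 : w q.2 ≤ w j := closure_cell_le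
          (fun y hy => cell_le hd hn.2 y hy) w hwcl
        constructor <;> linarith
      by_cases hq1 : q.1 = i
      · -- then q.2 ≠ j, perturb q.2
        have hq2 : q.2 ≠ j := by
          intro hq2
          exact hqne (Prod.ext_iff.mpr ⟨hq1, hq2⟩)
        have hq2i : q.2 ≠ i := by
          intro h
          have := hq.1.1
          rw [hq1, h] at this
          exact lt_irrefl _ this
        exact perturb_eq_contra hU hpH' hq2i hq2 (by
            intro h
            have := hq.1.1; rw [h] at this; omega)
          (fun w hw hwU => (key w hw hwU).2)
      · have hq1j : q.1 ≠ j := by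
          intro h
          have := hn.1
          rw [h] at this
          linarith
        exact perturb_eq_contra hU hpH' hq1 hq1j hq1
          (fun w hw hwU => (key w hw hwU).1)
  · intro hmax
    obtain ⟨y, hy1, hy2⟩ := tight_point_max hx hmax
    constructor
    · exact isWall_of_tight hij y hy1 hy2
        (Or.inl ⟨by simpa using sub_pos.mpr hmax.1.1.2, hmax.1.2⟩)
    · intro z hz
      exact (cell_closeP hmax.1 z hz).2

theorem floor_iff {x : Fin n → ℝ} (hx : x ∈ shiComplementA n) {i j : Fin n} (hij : i < j) :
    IsFloorH (fun z => z i - z j) (cell x) ↔ MinFar x (i, j) := by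
  have hd : Dis x := comp_dis hx
  constructor
  · rintro ⟨⟨p, hpH, U, hU, hsub⟩, hside⟩
    have hpH' : p i - p j = 1 := hpH
    have hxmem : x ∈ cell x := mem_cell_self hx
    have hgapx : 1 < x i - x j := hside x hxmem
    have hfp : FarP x (i, j) := ⟨⟨hij, by linarith⟩, hgapx⟩
    refine ⟨hfp, ?_⟩
    intro q hq hn
    by_contra hqne
    have key : ∀ w : Fin n → ℝ, w i - w j = 1 → w ∈ U → w q.1 = w i ∧ w q.2 = w j := by
      intro w hwH hwU
      have hwcl : w ∈ closure (cell x) := hsub ⟨hwH, hwU⟩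
      have c1 : 1 ≤ w q.1 - w q.2 :=
        closure_cell_gap_ge 1 (fun y hy => le_of_lt (cell_far hq y hy)) w hwcl
      have c2 : w q.1 ≤ w i := closure_cell_le
        (fun y hy => cell_le hd hn.1 y hy) w hwcl
      have c3 : w j ≤ w q.2 := closure_cell_le
        (fun y hy => cell_le hd hn.2 y hy) w hwcl
      constructor <;> linarith
    by_cases hq1 : q.1 = i
    · have hq2 : q.2 ≠ j := by
        intro hq2
        exact hqne (Prod.ext_iff.mpr ⟨hq1, hq2⟩)
      have hq2i : q.2 ≠ i := by
        intro h
        have := hq.1.1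
        rw [hq1, h] at this
        exact lt_irrefl _ this
      exact perturb_eq_contra hU hpH' hq2i hq2 (by
          intro h
          have := hq.1.1; rw [h] at this; omega)
        (fun w hw hwU => (key w hw hwU).2)
    · have hq1j : q.1 ≠ j := by
        intro h
        -- q.1 = j, q is far, and x j ≤ x q.2 : contradiction
        have h1 : x j ≤ x q.2 := hn.2
        have h2 := hq.2
        rw [h] at h2
        linarith
      exact perturb_eq_contra hU hpH' hq1 hq1j hq1
        (fun w hw hwU => (key w hw hwU).1)
  · intro hmin
    obtain ⟨y, hy1, hy2⟩ := tight_point_min hx hmin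
    constructor
    · exact isWall_of_tight hij y hy1 hy2 (Or.inr hmin.1.2)
    · intro z hz
      exact cell_far hmin.1 z hz

/-! ### narrEq basics -/

lemma narrEq_refl (x : Fin n → ℝ) (p : Fin n × Fin n) : narrEq x p p := ⟨le_rfl, le_rfl⟩

lemma narrEq_trans {x : Fin n → ℝ} {p q r : Fin n × Fin n}
    (h1 : narrEq x p q) (h2 : narrEq x q r) : narrEq x p r :=
  ⟨h1.1.trans h2.1, h2.2.trans h1.2⟩

lemma narrEq_antisymm {x : Fin n → ℝ} (hd : Dis x) {p q : Fin n × Fin n}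
    (h1 : narrEq x p q) (h2 : narrEq x q p) : p = q := by
  have e1 : p.1 = q.1 := by
    by_contra hne
    exact hd p.1 q.1 hne (le_antisymm h1.1 h2.1)
  have e2 : p.2 = q.2 := by
    by_contra hne
    exact hd p.2 q.2 hne (le_antisymm h2.2 h1.2)
  exact Prod.ext_iff.mpr ⟨e1, e2⟩

lemma exists_minFar {x : Fin n → ℝ} (hd : Dis x) :
    ∀ p, FarP x p → ∃ q, MinFar x q ∧ narrEq x q p := by
  suffices h : ∀ N : ℕ, ∀ p, FarP x p →
      (univ.filter (fun r => FarP x r ∧ narrEq x r p)).card ≤ N →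
      ∃ q, MinFar x q ∧ narrEq x q p by
    intro p hp
    exact h _ p hp le_rfl
  intro N
  induction N with
  | zero =>
    intro p hp hc
    exfalso
    have : p ∈ univ.filter (fun r => FarP x r ∧ narrEq x r p) := by
      simp only [mem_filter, mem_univ, true_and]
      exact ⟨hp, narrEq_refl x p⟩
    have := card_pos.mpr ⟨p, this⟩
    omega
  | succ N IH =>
    intro p hp hc
    by_cases hmin : ∀ r, FarP x r → narrEq x r p → r = p
    · exact ⟨p, ⟨hp, hmin⟩, narrEq_refl x p⟩
    · push_neg at hmin
      obtain ⟨r, hr, hrp, hne⟩ := hmin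
      have hsub : univ.filter (fun s => FarP x s ∧ narrEq x s r)
          ⊆ univ.filter (fun s => FarP x s ∧ narrEq x s p) := by
        intro s hs
        simp only [mem_filter, mem_univ, true_and] at hs ⊢
        exact ⟨hs.1, narrEq_trans hs.2 hrp⟩
      have hpmem : p ∈ univ.filter (fun s => FarP x s ∧ narrEq x s p) := by
        simp only [mem_filter, mem_univ, true_and]
        exact ⟨hp, narrEq_refl x p⟩
      have hpnot : p ∉ univ.filter (fun s => FarP x s ∧ narrEq x s r) := by
        simp only [mem_filter, mem_univ, true_and]
        rintro ⟨-, hpr⟩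
        exact hne (narrEq_antisymm hd hrp hpr)
      have hlt : (univ.filter (fun s => FarP x s ∧ narrEq x s r)).card
          < (univ.filter (fun s => FarP x s ∧ narrEq x s p)).card := by
        apply card_lt_card
        exact ⟨hsub, fun hss => hpnot (hss hpmem)⟩
      obtain ⟨q, hq, hqr⟩ := IH r hr (by omega)
      exact ⟨q, hq, narrEq_trans hqr hrp⟩

lemma exists_maxClose {x : Fin n → ℝ} (hd : Dis x) :
    ∀ p, CloseP x p → ∃ q, MaxClose x q ∧ narrEq x p q := by
  suffices h : ∀ N : ℕ, ∀ p, CloseP x p →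
      (univ.filter (fun r => CloseP x r ∧ narrEq x p r)).card ≤ N →
      ∃ q, MaxClose x q ∧ narrEq x p q by
    intro p hp
    exact h _ p hp le_rfl
  intro N
  induction N with
  | zero =>
    intro p hp hc
    exfalso
    have : p ∈ univ.filter (fun r => CloseP x r ∧ narrEq x p r) := by
      simp only [mem_filter, mem_univ, true_and]
      exact ⟨hp, narrEq_refl x p⟩
    have := card_pos.mpr ⟨p, this⟩
    omega
  | succ N IH =>
    intro p hp hc
    by_cases hmax : ∀ r, CloseP x r → narrEq x p r → r = p
    · exact ⟨p, ⟨hp, hmax⟩, narrEq_refl x p⟩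
    · push_neg at hmax
      obtain ⟨r, hr, hrp, hne⟩ := hmax
      have hsub : univ.filter (fun s => CloseP x s ∧ narrEq x r s)
          ⊆ univ.filter (fun s => CloseP x s ∧ narrEq x p s) := by
        intro s hs
        simp only [mem_filter, mem_univ, true_and] at hs ⊢
        exact ⟨hs.1, narrEq_trans hrp hs.2⟩
      have hpmem : p ∈ univ.filter (fun s => CloseP x s ∧ narrEq x p s) := by
        simp only [mem_filter, mem_univ, true_and]
        exact ⟨hp, narrEq_refl x p⟩
      have hpnot : p ∉ univ.filter (fun s => CloseP x s ∧ narrEq x r s) := by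
        simp only [mem_filter, mem_univ, true_and]
        rintro ⟨-, hpr⟩
        exact hne (narrEq_antisymm hd hpr hrp)
      have hlt : (univ.filter (fun s => CloseP x s ∧ narrEq x r s)).card
          < (univ.filter (fun s => CloseP x s ∧ narrEq x p s)).card := by
        apply card_lt_card
        exact ⟨hsub, fun hss => hpnot (hss hpmem)⟩
      obtain ⟨q, hq, hqr⟩ := IH r hr (by omega)
      exact ⟨q, hq, narrEq_trans hrp hqr⟩

/-! ### Data transfer in a common cell -/

def DataEq (x y : Fin n → ℝ) : Prop :=
  ∀ l m : Fin n, l < m → SameSide (x l - x m) (y l - y m)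

lemma mem_cell_iff_dataEq {x y : Fin n → ℝ} : y ∈ cell x ↔ DataEq x y := Iff.rfl

lemma DataEq.lt_iff {x y : Fin n → ℝ} (h : DataEq x y) {l m : Fin n} :
    x l < x m ↔ y l < y m := by
  rcases lt_trichotomy l m with hlm | hlm | hlm
  · have hs := h l m hlm
    rcases hs with hs | hs | hs
    · constructor <;> intro <;> linarith [hs.1, hs.2]
    · constructor <;> intro hh <;> linarith [hs.1, hs.2.1, hs.2.2.1, hs.2.2.2]
    · constructor <;> intro hh <;> linarith [hs.1, hs.2]
  · rw [hlm]; simp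
  · have hs := h m l hlm
    rcases hs with hs | hs | hs
    · constructor <;> intro <;> linarith [hs.1, hs.2]
    · constructor <;> intro hh <;> linarith [hs.1, hs.2.1, hs.2.2.1, hs.2.2.2]
    · constructor <;> intro hh <;> linarith [hs.1, hs.2]

lemma DataEq.le_iff {x y : Fin n → ℝ} (h : DataEq x y) {l m : Fin n} :
    x l ≤ x m ↔ y l ≤ y m := by
  rw [← not_lt, ← not_lt]
  exact not_congr h.lt_iff

lemma DataEq.ppair_iff {x y : Fin n → ℝ} (h : DataEq x y) {p : Fin n × Fin n} :
    Ppair x p ↔ Ppair y p := by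
  unfold Ppair
  rw [h.lt_iff]

lemma DataEq.farP_iff {x y : Fin n → ℝ} (h : DataEq x y) {p : Fin n × Fin n} :
    FarP x p ↔ FarP y p := by
  constructor
  · rintro ⟨hp, hf⟩
    refine ⟨h.ppair_iff.mp hp, ?_⟩
    have hs := h p.1 p.2 hp.1
    rcases hs with hs | hs | hs
    · exfalso; linarith [hs.1]
    · exfalso; linarith [hs.2.1]
    · exact hs.2
  · rintro ⟨hp, hf⟩
    refine ⟨h.ppair_iff.mpr hp, ?_⟩
    have hs := h p.1 p.2 (h.ppair_iff.mpr hp).1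
    rcases hs with hs | hs | hs
    · exfalso; linarith [hs.2]
    · exfalso; linarith [hs.2.2.2]
    · exact hs.1

lemma DataEq.narrEq_iff {x y : Fin n → ℝ} (h : DataEq x y) {p q : Fin n × Fin n} :
    narrEq x p q ↔ narrEq y p q := by
  unfold narrEq
  rw [h.le_iff, h.le_iff]

lemma DataEq.closeP_iff {x y : Fin n → ℝ} (h : DataEq x y) {p : Fin n × Fin n} :
    CloseP x p ↔ CloseP y p := by
  constructor
  · rintro ⟨hp, hf⟩
    refine ⟨h.ppair_iff.mp hp, ?_⟩
    have hs := h p.1 p.2 hp.1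
    rcases hs with hs | hs | hs
    · exfalso; linarith [hs.1, sub_pos.mpr hp.2]
    · exact hs.2.2.2
    · exfalso; linarith [hs.1]
  · rintro ⟨hp, hf⟩
    refine ⟨h.ppair_iff.mpr hp, ?_⟩
    have hs := h p.1 p.2 (h.ppair_iff.mpr hp).1
    rcases hs with hs | hs | hs
    · exfalso; linarith [hs.2, sub_pos.mpr hp.2]
    · exact hs.2.1
    · exfalso; linarith [hs.2]

lemma DataEq.minFar_iff {x y : Fin n → ℝ} (h : DataEq x y) {p : Fin n × Fin n} :
    MinFar x p ↔ MinFar y p := by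
  unfold MinFar
  rw [h.farP_iff]
  constructor
  · rintro ⟨hp, hm⟩
    exact ⟨hp, fun q hq hn => hm q (h.farP_iff.mpr hq) (h.narrEq_iff.mpr hn)⟩
  · rintro ⟨hp, hm⟩
    exact ⟨hp, fun q hq hn => hm q (h.farP_iff.mp hq) (h.narrEq_iff.mp hn)⟩

lemma DataEq.maxClose_iff {x y : Fin n → ℝ} (h : DataEq x y) {p : Fin n × Fin n} :
    MaxClose x p ↔ MaxClose y p := by
  unfold MaxClose
  rw [h.closeP_iff]
  constructor
  · rintro ⟨hp, hm⟩
    exact ⟨hp, fun q hq hn => hm q (h.closeP_iff.mpr hq) (h.narrEq_iff.mpr hn)⟩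
  · rintro ⟨hp, hm⟩
    exact ⟨hp, fun q hq hn => hm q (h.closeP_iff.mp hq) (h.narrEq_iff.mp hn)⟩

/-! ### The region maps -/

def FarPsi (x : Fin n → ℝ) (p : Fin n × Fin n) : Prop :=
  Ppair x p ∧ ∀ q, MinFar x q → ¬ narrEq x p q

def phiPt (x : Fin n → ℝ) : Fin n → ℝ := rpt x (MaxClose x) (fun _ => false)

def psiPt (x : Fin n → ℝ) : Fin n → ℝ := rpt x (FarPsi x) (fun _ => false)

lemma phiPt_def (x : Fin n → ℝ) : phiPt x = rpt x (MaxClose x) (fun _ => false) := rfl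

lemma psiPt_def (x : Fin n → ℝ) : psiPt x = rpt x (FarPsi x) (fun _ => false) := rfl

lemma le_iff_of_lt_iff {x y : Fin n → ℝ} (h : ∀ l m, x l < x m ↔ y l < y m) :
    ∀ l m, x l ≤ x m ↔ y l ≤ y m := by
  intro l m
  rw [← not_lt, ← not_lt]
  exact not_congr (h m l)

lemma narrEq_iff_of_lt_iff {x y : Fin n → ℝ} (h : ∀ l m, x l < x m ↔ y l < y m)
    {p q : Fin n × Fin n} : narrEq x p q ↔ narrEq y p q := by
  unfold narrEq
  rw [le_iff_of_lt_iff h, le_iff_of_lt_iff h]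

lemma ppair_iff_of_lt_iff {x y : Fin n → ℝ} (h : ∀ l m, x l < x m ↔ y l < y m)
    {p : Fin n × Fin n} : Ppair x p ↔ Ppair y p := by
  unfold Ppair
  rw [h]

lemma rpt_comp {x : Fin n → ℝ} (hx : x ∈ shiComplementA n) (S : Fin n × Fin n → Prop) :
    rpt x S (fun _ => false) ∈ shiComplementA n := by
  have hd := comp_dis hx
  obtain ⟨ho, hfar, hcl⟩ := rpt_strict hd S
  set y := rpt x S (fun _ => false) with hy
  intro i j hij
  rcases lt_trichotomy (x i) (x j) with hv | hv | hv
  · have := (ho i j).mp hv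
    constructor <;> intro hc <;> linarith
  · exact absurd hv (hd i j (Fin.ne_of_lt hij))
  · have hP : Ppair x (i, j) := ⟨hij, hv⟩
    by_cases hex : ∃ q, S q ∧ narrEq x q (i, j)
    · have := (hfar (i, j) hP).mpr hex
      constructor <;> intro hc <;> simp only [hy] at hc <;> linarith
    · have := hcl (i, j) hP hex
      constructor <;> intro hc <;> simp only [hy] at hc <;> linarith

lemma rpt_order {x : Fin n → ℝ} (hd : Dis x) (S : Fin n × Fin n → Prop) :
    ∀ l m, x l < x m ↔ rpt x S (fun _ => false) l < rpt x S (fun _ => false) m :=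
  (rpt_strict hd S).1

lemma rpt_far_iff {x : Fin n → ℝ} (hx : x ∈ shiComplementA n) {S : Fin n × Fin n → Prop}
    (hS : ∀ q, S q → Ppair x q) :
    ∀ p, FarP (rpt x S (fun _ => false)) p ↔ (p.1 < p.2 ∧ ∃ q, S q ∧ narrEq x q p) := by
  have hd := comp_dis hx
  obtain ⟨ho, hfar, hcl⟩ := rpt_strict hd S
  intro p
  constructor
  · rintro ⟨hp, hf⟩
    have hPx : Ppair x p := (ppair_iff_of_lt_iff ho).mpr hp
    exact ⟨hp.1, (hfar p hPx).mp hf⟩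
  · rintro ⟨h12, q, hq, hn⟩
    have hq' := hS q hq
    have hPx : Ppair x p := by
      refine ⟨h12, ?_⟩
      have := hq'.2
      linarith [hn.1, hn.2]
    exact ⟨(ppair_iff_of_lt_iff ho).mp hPx, (hfar p hPx).mpr ⟨q, hq, hn⟩⟩

lemma maxClose_ppair {x : Fin n → ℝ} {p : Fin n × Fin n} (h : MaxClose x p) : Ppair x p :=
  h.1.1

lemma minFar_ppair {x : Fin n → ℝ} {p : Fin n × Fin n} (h : MinFar x p) : Ppair x p :=
  h.1.1

lemma comp_phi {x : Fin n → ℝ} (hx : x ∈ shiComplementA n) :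
    phiPt x ∈ shiComplementA n := rpt_comp hx _

lemma comp_psi {x : Fin n → ℝ} (hx : x ∈ shiComplementA n) :
    psiPt x ∈ shiComplementA n := rpt_comp hx _

lemma phi_far {x : Fin n → ℝ} (hx : x ∈ shiComplementA n) :
    ∀ p, FarP (phiPt x) p ↔ (p.1 < p.2 ∧ ∃ q, MaxClose x q ∧ narrEq x q p) :=
  rpt_far_iff hx (fun _ h => maxClose_ppair h)

lemma psi_far {x : Fin n → ℝ} (hx : x ∈ shiComplementA n) :
    ∀ p, FarP (psiPt x) p ↔ FarPsi x p := by
  have hiff := rpt_far_iff hx (S := FarPsi x) (fun _ h => h.1)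
  intro p
  unfold psiPt
  rw [hiff p]
  constructor
  · rintro ⟨h12, q, hq, hn⟩
    refine ⟨?_, ?_⟩
    · refine ⟨h12, ?_⟩
      have := hq.1.2
      linarith [hn.1, hn.2]
    · intro b hb hnb
      exact hq.2 b hb (narrEq_trans hn hnb)
  · intro hp
    exact ⟨hp.1.1, p, hp, narrEq_refl x p⟩

/-- floors of the `phi` image are the ceilings of the original. -/
lemma minFar_phi {x : Fin n → ℝ} (hx : x ∈ shiComplementA n) :
    ∀ p, MinFar (phiPt x) p ↔ MaxClose x p := by
  have hd := comp_dis hx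
  have ho := rpt_order hd (MaxClose x)
  have hfar := phi_far hx
  intro p
  unfold MinFar
  constructor
  · rintro ⟨hp, hmin⟩
    obtain ⟨h12, a, ha, hna⟩ := (hfar p).mp hp
    have haF : FarP (phiPt x) a := by
      rw [hfar a]
      exact ⟨ha.1.1.1, a, ha, narrEq_refl x a⟩
    have : a = p := hmin a haF ((narrEq_iff_of_lt_iff ho).mp hna)
    rw [← this]
    exact ha
  · intro hmax
    constructor
    · rw [hfar p]
      exact ⟨hmax.1.1.1, p, hmax, narrEq_refl x p⟩
    · intro q hq hn
      obtain ⟨h12, a, ha, hna⟩ := (hfar q).mp hq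
      have hnx : narrEq x q p := (narrEq_iff_of_lt_iff ho).mpr hn
      have hap : narrEq x a p := narrEq_trans hna hnx
      have hpa : p = a := ha.2 p hmax.1 hap
      have hqa : q = a := narrEq_antisymm hd (hpa ▸ hnx) hna
      rw [hqa, ← hpa]
  
lemma closeP_iff_not_far {z : Fin n → ℝ} (hz : z ∈ shiComplementA n) {r : Fin n × Fin n} :
    CloseP z r ↔ Ppair z r ∧ ¬ FarP z r := by
  constructor
  · rintro ⟨hp, hgap⟩
    exact ⟨hp, fun hf => by linarith [hf.2]⟩
  · rintro ⟨hp, hnf⟩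
    refine ⟨hp, ?_⟩
    have h1 : ¬ (1 < z r.1 - z r.2) := fun h => hnf ⟨hp, h⟩
    push_neg at h1
    rcases eq_or_lt_of_le h1 with h | h
    · exact absurd h ((hz r.1 r.2 hp.1).2)
    · exact h

lemma maxClose_psi {x : Fin n → ℝ} (hx : x ∈ shiComplementA n) :
    ∀ p, MaxClose (psiPt x) p ↔ MinFar x p := by
  have hd := comp_dis hx
  have ho := rpt_order hd (FarPsi x)
  have hz : psiPt x ∈ shiComplementA n := comp_psi hx
  have hclose : ∀ r, CloseP (psiPt x) r ↔
      Ppair x r ∧ ∃ b, MinFar x b ∧ narrEq x r b := by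
    intro r
    rw [closeP_iff_not_far hz, psi_far hx r, psiPt_def x, ← ppair_iff_of_lt_iff ho]
    constructor
    · rintro ⟨hp, hnf⟩
      refine ⟨hp, ?_⟩
      by_contra hc
      push_neg at hc
      exact hnf ⟨hp, fun b hb hnb => hc b hb hnb⟩
    · rintro ⟨hp, b, hb, hnb⟩
      exact ⟨hp, fun hf => hf.2 b hb hnb⟩
  intro p
  constructor
  · rintro ⟨hc, hmaxz⟩
    obtain ⟨hPp, b, hb, hpb⟩ := (hclose p).mp hc
    have hbz : CloseP (psiPt x) b := by
      rw [hclose b]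
      exact ⟨minFar_ppair hb, b, hb, narrEq_refl x b⟩
    have hbp : b = p := hmaxz b hbz ((narrEq_iff_of_lt_iff ho).mp hpb)
    rw [← hbp]
    exact hb
  · intro hminf
    constructor
    · rw [hclose p]
      exact ⟨minFar_ppair hminf, p, hminf, narrEq_refl x p⟩
    · intro q hqc hn
      obtain ⟨hPq, b, hb, hqb⟩ := (hclose q).mp hqc
      have hnx : narrEq x p q := (narrEq_iff_of_lt_iff ho).mpr hn
      have hpb : narrEq x p b := narrEq_trans hnx hqb
      have hpb' : p = b := hb.2 p hminf.1 hpb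
      exact narrEq_antisymm hd (hpb' ▸ hqb) hnx

lemma noMaxAbove_far {x : Fin n → ℝ} (hx : x ∈ shiComplementA n) :
    ∀ r, (Ppair x r ∧ ∀ b, MaxClose x b → ¬ narrEq x r b) ↔ FarP x r := by
  have hd := comp_dis hx
  intro r
  constructor
  · rintro ⟨hp, hnb⟩
    refine ⟨hp, ?_⟩
    by_contra hc
    push_neg at hc
    have hcl : CloseP x r := by
      rcases eq_or_lt_of_le hc with h | h
      · exact absurd h ((hx r.1 r.2 hp.1).2)
      · exact ⟨hp, h⟩
    obtain ⟨b, hb, hrb⟩ := exists_maxClose hd r hcl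
    exact hnb b hb hrb
  · rintro ⟨hp, hfar⟩
    refine ⟨hp, ?_⟩
    intro b hb hrb
    have : x r.1 - x r.2 ≤ x b.1 - x b.2 := by linarith [hrb.1, hrb.2]
    linarith [hb.1.2]

lemma upMin_far {x : Fin n → ℝ} (hx : x ∈ shiComplementA n) :
    ∀ r, (r.1 < r.2 ∧ ∃ a, MinFar x a ∧ narrEq x a r) ↔ FarP x r := by
  have hd := comp_dis hx
  intro r
  constructor
  · rintro ⟨h12, a, ha, hna⟩
    have : x a.1 - x a.2 ≤ x r.1 - x r.2 := by linarith [hna.1, hna.2]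
    refine ⟨⟨h12, ?_⟩, by linarith [ha.1.2]⟩
    have := ha.1.1.2
    linarith [hna.1, hna.2]
  · intro hf
    obtain ⟨a, ha, hna⟩ := exists_minFar hd r hf
    exact ⟨hf.1.1, a, ha, hna⟩

lemma psi_phi_far {x : Fin n → ℝ} (hx : x ∈ shiComplementA n) :
    ∀ r, FarPsi (phiPt x) r ↔ FarP x r := by
  have hd := comp_dis hx
  have ho := rpt_order hd (MaxClose x)
  intro r
  unfold FarPsi
  rw [phiPt_def x, ← ppair_iff_of_lt_iff ho]
  rw [← noMaxAbove_far hx r]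
  constructor
  · rintro ⟨hp, hb⟩
    refine ⟨hp, ?_⟩
    intro b hbmax hnb
    exact hb b ((minFar_phi hx b).mpr hbmax) ((narrEq_iff_of_lt_iff ho).mp hnb)
  · rintro ⟨hp, hb⟩
    refine ⟨hp, ?_⟩
    intro b hbmin hnb
    exact hb b ((minFar_phi hx b).mp hbmin) ((narrEq_iff_of_lt_iff ho).mpr hnb)

lemma DataEq.farPsi_iff {x y : Fin n → ℝ} (h : DataEq x y) {p : Fin n × Fin n} :
    FarPsi x p ↔ FarPsi y p := by
  unfold FarPsi
  rw [h.ppair_iff]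
  constructor
  · rintro ⟨hp, hb⟩
    exact ⟨hp, fun q hq hn => hb q (h.minFar_iff.mpr hq) (h.narrEq_iff.mpr hn)⟩
  · rintro ⟨hp, hb⟩
    exact ⟨hp, fun q hq hn => hb q (h.minFar_iff.mp hq) (h.narrEq_iff.mp hn)⟩

lemma cell_eq_of_data {x z : Fin n → ℝ} (hx : x ∈ shiComplementA n)
    (hz : z ∈ shiComplementA n) (ho : ∀ l m, x l < x m ↔ z l < z m)
    (hf : ∀ p, FarP x p ↔ FarP z p) : cell z = cell x := by
  apply cell_eq_of_mem
  intro i j hij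
  rcases lt_trichotomy (x i) (x j) with hv | hv | hv
  · exact Or.inl ⟨by linarith, by linarith [(ho i j).mp hv]⟩
  · exact absurd hv (comp_dis hx i j (Fin.ne_of_lt hij))
  · have hP : Ppair x (i, j) := ⟨hij, hv⟩
    by_cases hfar : FarP x (i, j)
    · exact Or.inr (Or.inr ⟨hfar.2, ((hf (i, j)).mp hfar).2⟩)
    · have hcx : CloseP x (i, j) := (closeP_iff_not_far hx).mpr ⟨hP, hfar⟩
      have hcz : CloseP z (i, j) := by
        rw [closeP_iff_not_far hz]
        refine ⟨(ppair_iff_of_lt_iff ho).mp hP, fun hfz => hfar ((hf (i, j)).mpr hfz)⟩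
      exact Or.inr (Or.inl ⟨sub_pos.mpr hv, hcx.2, sub_pos.mpr hcz.1.2, hcz.2⟩)

/-! ### Counting -/

lemma numCeilings_cell {x : Fin n → ℝ} (hx : x ∈ shiComplementA n) :
    numCeilingsA n (cell x) = Nat.card {p : Fin n × Fin n // MaxClose x p} := by
  unfold numCeilingsA
  apply Nat.card_congr
  apply Equiv.subtypeEquivRight
  intro p
  constructor
  · rintro ⟨h12, hceil⟩
    exact (ceiling_iff hx h12).mp hceil
  · intro hmax
    exact ⟨hmax.1.1.1, (ceiling_iff hx hmax.1.1.1).mpr hmax⟩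

lemma numFloors_cell {x : Fin n → ℝ} (hx : x ∈ shiComplementA n) :
    numFloorsA n (cell x) = Nat.card {p : Fin n × Fin n // MinFar x p} := by
  unfold numFloorsA
  apply Nat.card_congr
  apply Equiv.subtypeEquivRight
  intro p
  constructor
  · rintro ⟨h12, hfl⟩
    exact (floor_iff hx h12).mp hfl
  · intro hmin
    exact ⟨hmin.1.1.1, (floor_iff hx hmin.1.1.1).mpr hmin⟩

lemma cell_mem_regions {y : Fin n → ℝ} (hy : y ∈ shiComplementA n) :
    cell y ∈ regionsA n := ⟨y, hy, (component_eq_cell hy).symm⟩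

/-! ### Assembly -/

def pickPt {R : Set (Fin n → ℝ)} (h : R ∈ regionsA n) : Fin n → ℝ := h.choose

lemma pickPt_comp {R : Set (Fin n → ℝ)} (h : R ∈ regionsA n) :
    pickPt h ∈ shiComplementA n := h.choose_spec.1

lemma pickPt_cell {R : Set (Fin n → ℝ)} (h : R ∈ regionsA n) :
    R = cell (pickPt h) := by
  exact h.choose_spec.2.trans (component_eq_cell (pickPt_comp h))

def PhiMap (m : ℕ) (R : {R : Set (Fin n → ℝ) // R ∈ regionsA n ∧ numCeilingsA n R = m}) :
    {R : Set (Fin n → ℝ) // R ∈ regionsA n ∧ numFloorsA n R = m} := by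
  refine ⟨cell (phiPt (pickPt R.2.1)), cell_mem_regions (comp_phi (pickPt_comp R.2.1)), ?_⟩
  set x := pickPt R.2.1 with hxdef
  have hx : x ∈ shiComplementA n := pickPt_comp R.2.1
  rw [numFloors_cell (comp_phi hx)]
  have h1 : Nat.card {p : Fin n × Fin n // MinFar (phiPt x) p}
      = Nat.card {p : Fin n × Fin n // MaxClose x p} :=
    Nat.card_congr (Equiv.subtypeEquivRight (fun p => minFar_phi hx p))
  rw [h1, ← numCeilings_cell hx, ← pickPt_cell R.2.1]
  exact R.2.2

def PsiMap (m : ℕ) (R : {R : Set (Fin n → ℝ) // R ∈ regionsA n ∧ numFloorsA n R = m}) :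
    {R : Set (Fin n → ℝ) // R ∈ regionsA n ∧ numCeilingsA n R = m} := by
  refine ⟨cell (psiPt (pickPt R.2.1)), cell_mem_regions (comp_psi (pickPt_comp R.2.1)), ?_⟩
  set x := pickPt R.2.1 with hxdef
  have hx : x ∈ shiComplementA n := pickPt_comp R.2.1
  rw [numCeilings_cell (comp_psi hx)]
  have h1 : Nat.card {p : Fin n × Fin n // MaxClose (psiPt x) p}
      = Nat.card {p : Fin n × Fin n // MinFar x p} :=
    Nat.card_congr (Equiv.subtypeEquivRight (fun p => maxClose_psi hx p))
  rw [h1, ← numFloors_cell hx, ← pickPt_cell R.2.1]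
  exact R.2.2

lemma Psi_Phi (m : ℕ) (R : {R : Set (Fin n → ℝ) // R ∈ regionsA n ∧ numCeilingsA n R = m}) :
    PsiMap m (PhiMap m R) = R := by
  apply Subtype.ext
  show cell (psiPt (pickPt (PhiMap m R).2.1)) = R.1
  set x := pickPt R.2.1 with hxdef
  have hx : x ∈ shiComplementA n := pickPt_comp R.2.1
  set x' := pickPt (PhiMap m R).2.1 with hx'def
  have hx' : x' ∈ shiComplementA n := pickPt_comp (PhiMap m R).2.1
  have hcc : cell (phiPt x) = cell x' := by
    have := pickPt_cell (PhiMap m R).2.1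
    exact this
  have hDE : DataEq (phiPt x) x' := by
    rw [← mem_cell_iff_dataEq, hcc]
    exact mem_cell_self hx'
  have horder1 := rpt_order (comp_dis hx') (FarPsi x')
  have horder2 := rpt_order (comp_dis hx) (MaxClose x)
  have hordery : ∀ l m, x l < x m ↔ psiPt x' l < psiPt x' m := fun l m =>
    (horder2 l m).trans (hDE.lt_iff.trans (horder1 l m))
  have hfary : ∀ p, FarP x p ↔ FarP (psiPt x') p := fun p =>
    ((psi_phi_far hx p).symm.trans hDE.farPsi_iff).trans (psi_far hx' p).symm
  rw [pickPt_cell R.2.1, ← hxdef]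
  exact cell_eq_of_data hx (comp_psi hx') hordery hfary

lemma Phi_Psi (m : ℕ) (R : {R : Set (Fin n → ℝ) // R ∈ regionsA n ∧ numFloorsA n R = m}) :
    PhiMap m (PsiMap m R) = R := by
  apply Subtype.ext
  show cell (phiPt (pickPt (PsiMap m R).2.1)) = R.1
  set x := pickPt R.2.1 with hxdef
  have hx : x ∈ shiComplementA n := pickPt_comp R.2.1
  set x' := pickPt (PsiMap m R).2.1 with hx'def
  have hx' : x' ∈ shiComplementA n := pickPt_comp (PsiMap m R).2.1
  have hcc : cell (psiPt x) = cell x' := pickPt_cell (PsiMap m R).2.1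
  have hDE : DataEq (psiPt x) x' := by
    rw [← mem_cell_iff_dataEq, hcc]
    exact mem_cell_self hx'
  have horder1 := rpt_order (comp_dis hx') (MaxClose x')
  have horder2 := rpt_order (comp_dis hx) (FarPsi x)
  have hordery : ∀ l m, x l < x m ↔ phiPt x' l < phiPt x' m := fun l m =>
    (horder2 l m).trans (hDE.lt_iff.trans (horder1 l m))
  have hfary : ∀ p, FarP x p ↔ FarP (phiPt x') p := by
    intro p
    rw [phi_far hx' p]
    rw [← upMin_far hx p]
    have hmc : ∀ a, MaxClose x' a ↔ MinFar x a := fun a =>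
      (hDE.maxClose_iff.symm).trans (maxClose_psi hx a)
    have hne : ∀ a, narrEq x' a p ↔ narrEq x a p := fun a =>
      (hDE.narrEq_iff.symm).trans (narrEq_iff_of_lt_iff horder2).symm
    constructor
    · rintro ⟨h12, a, ha, hna⟩
      exact ⟨h12, a, (hmc a).mpr ha, (hne a).mpr hna⟩
    · rintro ⟨h12, a, ha, hna⟩
      exact ⟨h12, a, (hmc a).mp ha, (hne a).mp hna⟩
  rw [pickPt_cell R.2.1, ← hxdef]
  exact cell_eq_of_data hx (comp_phi hx') hordery hfary

theorem main_count (m : ℕ) :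
    Nat.card {R : Set (Fin n → ℝ) // R ∈ regionsA n ∧ numCeilingsA n R = m} =
      Nat.card {R : Set (Fin n → ℝ) // R ∈ regionsA n ∧ numFloorsA n R = m} :=
  Nat.card_eq_of_bijective (PhiMap m)
    (Function.bijective_iff_has_inverse.mpr ⟨PsiMap m, Psi_Phi m, Phi_Psi m⟩)

end ShiProof


/-- The number of regions of the type `A_{n-1}` Shi arrangement with exactly `m`
ceilings equals the number of regions with exactly `m` floors. -/
theorem card_regions_ceilings_eq_card_regions_floors (n : ℕ) (hn : 1 ≤ n) (m : ℕ) :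
    Nat.card {R : Set (Fin n → ℝ) // R ∈ regionsA n ∧ numCeilingsA n R = m} =
      Nat.card {R : Set (Fin n → ℝ) // R ∈ regionsA n ∧ numFloorsA n R = m} := by
  exact ShiProof.main_count m
end
end
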